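/- Let G be a P_{10}-free graph with minimum degree at least 3 that contains neither C_4 nor C_8, and let C be a good hole of G. Then ℓ(C) ≠ 6; combined with the bound ℓ(C) ≤ 6, every good hole of such a graph has length exactly 5. -/

import Mathlib

open SimpleGraph

def HasCycleLength {V : Type*} (G : SimpleGraph V) (n : ℕ) : Prop :=
  ∃ (v : V) (c : G.Walk v v), c.IsCycle ∧ c.length = n

def IsHole {V : Type*} (G : SimpleGraph V) {v : V} (c : G.Walk v v) : Prop :=
  c.IsCycle ∧ ∀ a b : V, a ∈ c.support → b ∈ c.support → G.Adj a b → s(a, b) ∈ c.edges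

def IsCircInduced {V : Type*} (G : SimpleGraph V) (m : ℕ) (x : ZMod m → V) : Prop :=
  Function.Injective x ∧ ∀ i j : ZMod m, G.Adj (x i) (x j) ↔ (j = i + 1 ∨ i = j + 1)

def ICset {V : Type*} (G : SimpleGraph V) (m : ℕ) (x : ZMod m → V) : Set (ZMod m) :=
  {i | ∃ y, y ∉ Set.range x ∧ G.Adj (x i) y ∧ G.Adj (x (i + 1)) y}

def IsGoodHole {V : Type*} (G : SimpleGraph V) (m : ℕ) (x : ZMod m → V) : Prop :=
  5 ≤ m ∧ IsCircInduced G m x ∧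
  (¬ ∃ (w : V) (d : G.Walk w w), IsHole G d ∧ 5 ≤ d.length ∧ d.length < m) ∧
  (∀ y : ZMod m → V, IsCircInduced G m y → (ICset G m y).ncard ≤ (ICset G m x).ncard)

def P10Free {V : Type*} (G : SimpleGraph V) : Prop :=
  ¬ ∃ p : Fin 10 → V, Function.Injective p ∧
    ∀ a b : Fin 10, G.Adj (p a) (p b) ↔ (a.val + 1 = b.val ∨ b.val + 1 = a.val)

namespace EG

variable {V : Type*} {G : SimpleGraph V}

lemma c4E (a b c d : V)
    (hab : G.Adj a b) (hbc : G.Adj b c) (hcd : G.Adj c d) (hda : G.Adj d a)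
    (nac : a ≠ c) (nbd : b ≠ d) : HasCycleLength G 4 := by
  have h1 := hab.ne; have h2 := hbc.ne; have h3 := hcd.ne; have h4 := hda.ne
  refine ⟨a, .cons hab (.cons hbc (.cons hcd (.cons hda .nil))), ?_, by simp⟩
  rw [Walk.isCycle_def]
  refine ⟨?_, by simp, ?_⟩
  · rw [Walk.isTrail_def]
    simp only [Walk.edges_cons, Walk.edges_nil, List.nodup_cons, List.mem_cons,
      List.mem_singleton, List.not_mem_nil, or_false, Sym2.eq, Sym2.rel_iff',
      Prod.mk.injEq, Prod.swap_prod_mk, List.nodup_nil, and_true, not_or]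
    tauto
  · simp only [Walk.support_cons, Walk.support_nil, List.tail_cons, List.nodup_cons,
      List.mem_cons, List.not_mem_nil, or_false, List.mem_singleton, List.nodup_nil, and_true,
      not_or]
    tauto

set_option maxHeartbeats 1000000 in
lemma c8E (a b c d e f g h : V)
    (e1 : G.Adj a b) (e2 : G.Adj b c) (e3 : G.Adj c d) (e4 : G.Adj d e)
    (e5 : G.Adj e f) (e6 : G.Adj f g) (e7 : G.Adj g h) (e8 : G.Adj h a)
    (n13 : a ≠ c) (n14 : a ≠ d) (n15 : a ≠ e) (n16 : a ≠ f) (n17 : a ≠ g)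
    (n24 : b ≠ d) (n25 : b ≠ e) (n26 : b ≠ f) (n27 : b ≠ g) (n28 : b ≠ h)
    (n35 : c ≠ e) (n36 : c ≠ f) (n37 : c ≠ g) (n38 : c ≠ h)
    (n46 : d ≠ f) (n47 : d ≠ g) (n48 : d ≠ h)
    (n57 : e ≠ g) (n58 : e ≠ h) (n68 : f ≠ h) : HasCycleLength G 8 := by
  have m1 := e1.ne; have m2 := e2.ne; have m3 := e3.ne; have m4 := e4.ne
  have m5 := e5.ne; have m6 := e6.ne; have m7 := e7.ne; have m8 := e8.ne
  refine ⟨a, .cons e1 (.cons e2 (.cons e3 (.cons e4 (.cons e5 (.cons e6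
    (.cons e7 (.cons e8 .nil))))))), ?_, by simp⟩
  rw [Walk.isCycle_def]
  refine ⟨?_, by simp, ?_⟩
  · rw [Walk.isTrail_def]
    simp only [Walk.edges_cons, Walk.edges_nil, List.nodup_cons, List.mem_cons,
      List.mem_singleton, List.not_mem_nil, or_false, Sym2.eq, Sym2.rel_iff',
      Prod.mk.injEq, Prod.swap_prod_mk, List.nodup_nil, and_true, not_or]
    tauto
  · simp only [Walk.support_cons, Walk.support_nil, List.tail_cons, List.nodup_cons,
      List.mem_cons, List.not_mem_nil, or_false, List.mem_singleton, List.nodup_nil, and_true,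
      not_or]
    tauto

set_option maxHeartbeats 1000000 in
lemma hole5E (a b c d e : V)
    (e1 : G.Adj a b) (e2 : G.Adj b c) (e3 : G.Adj c d) (e4 : G.Adj d e) (e5 : G.Adj e a)
    (a13 : ¬ G.Adj a c) (a14 : ¬ G.Adj a d) (a24 : ¬ G.Adj b d) (a25 : ¬ G.Adj b e)
    (a35 : ¬ G.Adj c e)
    (n13 : a ≠ c) (n14 : a ≠ d) (n24 : b ≠ d) (n25 : b ≠ e) (n35 : c ≠ e) :
    ∃ (w : V) (p : G.Walk w w), IsHole G p ∧ p.length = 5 := by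
  have m1 := e1.ne; have m2 := e2.ne; have m3 := e3.ne; have m4 := e4.ne; have m5 := e5.ne
  have a31 : ¬ G.Adj c a := fun h => a13 h.symm
  have a41 : ¬ G.Adj d a := fun h => a14 h.symm
  have a42 : ¬ G.Adj d b := fun h => a24 h.symm
  have a52 : ¬ G.Adj e b := fun h => a25 h.symm
  have a53 : ¬ G.Adj e c := fun h => a35 h.symm
  refine ⟨a, .cons e1 (.cons e2 (.cons e3 (.cons e4 (.cons e5 .nil)))), ⟨?_, ?_⟩, by simp⟩
  · rw [Walk.isCycle_def]
    refine ⟨?_, by simp, ?_⟩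
    · rw [Walk.isTrail_def]
      simp only [Walk.edges_cons, Walk.edges_nil, List.nodup_cons, List.mem_cons,
        List.mem_singleton, List.not_mem_nil, or_false, Sym2.eq, Sym2.rel_iff',
        Prod.mk.injEq, Prod.swap_prod_mk, List.nodup_nil, and_true, not_or]
      tauto
    · simp only [Walk.support_cons, Walk.support_nil, List.tail_cons, List.nodup_cons,
        List.mem_cons, List.not_mem_nil, or_false, List.mem_singleton, List.nodup_nil,
        and_true, not_or]
      tauto
  · intro p q hp hq hadj
    simp only [Walk.support_cons, Walk.support_nil, List.mem_cons,
      List.not_mem_nil, or_false] at hp hq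
    simp only [Walk.edges_cons, Walk.edges_nil, List.mem_cons, List.not_mem_nil, or_false]
    obtain rfl|rfl|rfl|rfl|rfl|rfl := hp <;> obtain rfl|rfl|rfl|rfl|rfl|rfl := hq <;>
      first
        | exact absurd hadj G.irrefl
        | exact absurd hadj a13 | exact absurd hadj a14 | exact absurd hadj a24
        | exact absurd hadj a25 | exact absurd hadj a35 | exact absurd hadj a31
        | exact absurd hadj a41 | exact absurd hadj a42 | exact absurd hadj a52
        | exact absurd hadj a53
        | simp [Sym2.eq_swap]

set_option maxHeartbeats 4000000 in
lemma p10E (hP10 : P10Free G) (v0 : V) (v1 : V) (v2 : V) (v3 : V) (v4 : V) (v5 : V) (v6 : V) (v7 : V) (v8 : V) (v9 : V)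
    (e01 : G.Adj v0 v1)
    (e12 : G.Adj v1 v2)
    (e23 : G.Adj v2 v3)
    (e34 : G.Adj v3 v4)
    (e45 : G.Adj v4 v5)
    (e56 : G.Adj v5 v6)
    (e67 : G.Adj v6 v7)
    (e78 : G.Adj v7 v8)
    (e89 : G.Adj v8 v9)
    (a02 : ¬ G.Adj v0 v2)
    (a03 : ¬ G.Adj v0 v3)
    (a04 : ¬ G.Adj v0 v4)
    (a05 : ¬ G.Adj v0 v5)
    (a06 : ¬ G.Adj v0 v6)
    (a07 : ¬ G.Adj v0 v7)
    (a08 : ¬ G.Adj v0 v8)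
    (a09 : ¬ G.Adj v0 v9)
    (a13 : ¬ G.Adj v1 v3)
    (a14 : ¬ G.Adj v1 v4)
    (a15 : ¬ G.Adj v1 v5)
    (a16 : ¬ G.Adj v1 v6)
    (a17 : ¬ G.Adj v1 v7)
    (a18 : ¬ G.Adj v1 v8)
    (a19 : ¬ G.Adj v1 v9)
    (a24 : ¬ G.Adj v2 v4)
    (a25 : ¬ G.Adj v2 v5)
    (a26 : ¬ G.Adj v2 v6)
    (a27 : ¬ G.Adj v2 v7)
    (a28 : ¬ G.Adj v2 v8)
    (a29 : ¬ G.Adj v2 v9)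
    (a35 : ¬ G.Adj v3 v5)
    (a36 : ¬ G.Adj v3 v6)
    (a37 : ¬ G.Adj v3 v7)
    (a38 : ¬ G.Adj v3 v8)
    (a39 : ¬ G.Adj v3 v9)
    (a46 : ¬ G.Adj v4 v6)
    (a47 : ¬ G.Adj v4 v7)
    (a48 : ¬ G.Adj v4 v8)
    (a49 : ¬ G.Adj v4 v9)
    (a57 : ¬ G.Adj v5 v7)
    (a58 : ¬ G.Adj v5 v8)
    (a59 : ¬ G.Adj v5 v9)
    (a68 : ¬ G.Adj v6 v8)
    (a69 : ¬ G.Adj v6 v9)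
    (a79 : ¬ G.Adj v7 v9)
    (n02 : v0 ≠ v2)
    (n03 : v0 ≠ v3)
    (n04 : v0 ≠ v4)
    (n05 : v0 ≠ v5)
    (n06 : v0 ≠ v6)
    (n07 : v0 ≠ v7)
    (n08 : v0 ≠ v8)
    (n09 : v0 ≠ v9)
    (n13 : v1 ≠ v3)
    (n14 : v1 ≠ v4)
    (n15 : v1 ≠ v5)
    (n16 : v1 ≠ v6)
    (n17 : v1 ≠ v7)
    (n18 : v1 ≠ v8)
    (n19 : v1 ≠ v9)
    (n24 : v2 ≠ v4)
    (n25 : v2 ≠ v5)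
    (n26 : v2 ≠ v6)
    (n27 : v2 ≠ v7)
    (n28 : v2 ≠ v8)
    (n29 : v2 ≠ v9)
    (n35 : v3 ≠ v5)
    (n36 : v3 ≠ v6)
    (n37 : v3 ≠ v7)
    (n38 : v3 ≠ v8)
    (n39 : v3 ≠ v9)
    (n46 : v4 ≠ v6)
    (n47 : v4 ≠ v7)
    (n48 : v4 ≠ v8)
    (n49 : v4 ≠ v9)
    (n57 : v5 ≠ v7)
    (n58 : v5 ≠ v8)
    (n59 : v5 ≠ v9)
    (n68 : v6 ≠ v8)
    (n69 : v6 ≠ v9)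
    (n79 : v7 ≠ v9)
    : False := by
  have e01' := e01.symm
  have e12' := e12.symm
  have e23' := e23.symm
  have e34' := e34.symm
  have e45' := e45.symm
  have e56' := e56.symm
  have e67' := e67.symm
  have e78' := e78.symm
  have e89' := e89.symm
  have a02' : ¬ G.Adj v2 v0 := fun h => a02 h.symm
  have a03' : ¬ G.Adj v3 v0 := fun h => a03 h.symm
  have a04' : ¬ G.Adj v4 v0 := fun h => a04 h.symm
  have a05' : ¬ G.Adj v5 v0 := fun h => a05 h.symm
  have a06' : ¬ G.Adj v6 v0 := fun h => a06 h.symm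
  have a07' : ¬ G.Adj v7 v0 := fun h => a07 h.symm
  have a08' : ¬ G.Adj v8 v0 := fun h => a08 h.symm
  have a09' : ¬ G.Adj v9 v0 := fun h => a09 h.symm
  have a13' : ¬ G.Adj v3 v1 := fun h => a13 h.symm
  have a14' : ¬ G.Adj v4 v1 := fun h => a14 h.symm
  have a15' : ¬ G.Adj v5 v1 := fun h => a15 h.symm
  have a16' : ¬ G.Adj v6 v1 := fun h => a16 h.symm
  have a17' : ¬ G.Adj v7 v1 := fun h => a17 h.symm
  have a18' : ¬ G.Adj v8 v1 := fun h => a18 h.symm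
  have a19' : ¬ G.Adj v9 v1 := fun h => a19 h.symm
  have a24' : ¬ G.Adj v4 v2 := fun h => a24 h.symm
  have a25' : ¬ G.Adj v5 v2 := fun h => a25 h.symm
  have a26' : ¬ G.Adj v6 v2 := fun h => a26 h.symm
  have a27' : ¬ G.Adj v7 v2 := fun h => a27 h.symm
  have a28' : ¬ G.Adj v8 v2 := fun h => a28 h.symm
  have a29' : ¬ G.Adj v9 v2 := fun h => a29 h.symm
  have a35' : ¬ G.Adj v5 v3 := fun h => a35 h.symm
  have a36' : ¬ G.Adj v6 v3 := fun h => a36 h.symm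
  have a37' : ¬ G.Adj v7 v3 := fun h => a37 h.symm
  have a38' : ¬ G.Adj v8 v3 := fun h => a38 h.symm
  have a39' : ¬ G.Adj v9 v3 := fun h => a39 h.symm
  have a46' : ¬ G.Adj v6 v4 := fun h => a46 h.symm
  have a47' : ¬ G.Adj v7 v4 := fun h => a47 h.symm
  have a48' : ¬ G.Adj v8 v4 := fun h => a48 h.symm
  have a49' : ¬ G.Adj v9 v4 := fun h => a49 h.symm
  have a57' : ¬ G.Adj v7 v5 := fun h => a57 h.symm
  have a58' : ¬ G.Adj v8 v5 := fun h => a58 h.symm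
  have a59' : ¬ G.Adj v9 v5 := fun h => a59 h.symm
  have a68' : ¬ G.Adj v8 v6 := fun h => a68 h.symm
  have a69' : ¬ G.Adj v9 v6 := fun h => a69 h.symm
  have a79' : ¬ G.Adj v9 v7 := fun h => a79 h.symm
  have n01 := e01.ne
  have n12 := e12.ne
  have n23 := e23.ne
  have n34 := e34.ne
  have n45 := e45.ne
  have n56 := e56.ne
  have n67 := e67.ne
  have n78 := e78.ne
  have n89 := e89.ne
  apply hP10
  refine ⟨([v0,v1,v2,v3,v4,v5,v6,v7,v8,v9] : List V).get, ?_, ?_⟩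
  · refine List.nodup_iff_injective_get.mp ?_
    simp only [List.nodup_cons, List.mem_cons, List.mem_singleton,
      List.not_mem_nil, or_false, List.nodup_nil, and_true, not_or]
    tauto
  · intro a b
    fin_cases a <;> fin_cases b <;>
      simp only [List.get] <;>
      first
        | (apply iff_of_false G.irrefl; decide)
        | (apply iff_of_true ?_ (by decide); assumption)
        | (apply iff_of_false ?_ (by decide); assumption)

section DegLemmas
variable [Fintype V] [DecidableRel G.Adj]

lemma exThird (hdeg : ∀ v : V, 3 ≤ G.degree v) (v a b : V) (hab : a ≠ b)
    (ha : G.Adj v a) (hb : G.Adj v b) : ∃ w, G.Adj v w ∧ w ≠ a ∧ w ≠ b := by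
  classical
  by_contra h
  push_neg at h
  have hsub : G.neighborFinset v ⊆ {a, b} := by
    intro w hw
    rw [SimpleGraph.mem_neighborFinset] at hw
    rcases eq_or_ne w a with rfl | h1
    · simp
    · simp [h w hw h1]
  have hc := Finset.card_le_card hsub
  have h2 : ({a, b} : Finset V).card ≤ 2 := Finset.card_insert_le _ _ |>.trans (by simp)
  have h3 := hdeg v
  rw [← SimpleGraph.card_neighborFinset_eq_degree] at h3
  omega

lemma exTwo (hdeg : ∀ v : V, 3 ≤ G.degree v) (v a : V) (ha : G.Adj v a) :
    ∃ w1 w2, w1 ≠ w2 ∧ w1 ≠ a ∧ w2 ≠ a ∧ G.Adj v w1 ∧ G.Adj v w2 := by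
  classical
  have h3 := hdeg v
  rw [← SimpleGraph.card_neighborFinset_eq_degree] at h3
  have hmem : a ∈ G.neighborFinset v := (SimpleGraph.mem_neighborFinset G v a).mpr ha
  have hcard : 2 ≤ ((G.neighborFinset v).erase a).card := by
    have h4 := Finset.card_erase_of_mem hmem
    omega
  obtain ⟨w1, hw1, w2, hw2, hne⟩ := Finset.one_lt_card.mp hcard
  exact ⟨w1, w2, hne, Finset.ne_of_mem_erase hw1, Finset.ne_of_mem_erase hw2,
    (SimpleGraph.mem_neighborFinset G v w1).mp (Finset.mem_of_mem_erase hw1),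
    (SimpleGraph.mem_neighborFinset G v w2).mp (Finset.mem_of_mem_erase hw2)⟩

end DegLemmas

structure Ctx (G : SimpleGraph V) : Prop where
  c4 : ∀ a b c d : V, G.Adj a b → G.Adj b c → G.Adj c d → G.Adj d a → a ≠ c → b ≠ d → False
  c8 : ∀ v0 v1 v2 v3 v4 v5 v6 v7 : V, G.Adj v0 v1 → G.Adj v1 v2 → G.Adj v2 v3 → G.Adj v3 v4 → G.Adj v4 v5 → G.Adj v5 v6 → G.Adj v6 v7 → G.Adj v7 v0 → v0 ≠ v2 → v0 ≠ v3 → v0 ≠ v4 → v0 ≠ v5 → v0 ≠ v6 → v1 ≠ v3 → v1 ≠ v4 → v1 ≠ v5 → v1 ≠ v6 → v1 ≠ v7 → v2 ≠ v4 → v2 ≠ v5 → v2 ≠ v6 → v2 ≠ v7 → v3 ≠ v5 → v3 ≠ v6 → v3 ≠ v7 → v4 ≠ v6 → v4 ≠ v7 → v5 ≠ v7 → False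
  h5 : ∀ a b c d e : V, G.Adj a b → G.Adj b c → G.Adj c d → G.Adj d e → G.Adj e a → ¬ G.Adj a c → ¬ G.Adj a d → ¬ G.Adj b d → ¬ G.Adj b e → ¬ G.Adj c e → a ≠ c → a ≠ d → b ≠ d → b ≠ e → c ≠ e → False
  p10 : ∀ v0 v1 v2 v3 v4 v5 v6 v7 v8 v9 : V, G.Adj v0 v1 → G.Adj v1 v2 → G.Adj v2 v3 → G.Adj v3 v4 → G.Adj v4 v5 → G.Adj v5 v6 → G.Adj v6 v7 → G.Adj v7 v8 → G.Adj v8 v9 → ¬ G.Adj v0 v2 → ¬ G.Adj v0 v3 → ¬ G.Adj v0 v4 → ¬ G.Adj v0 v5 → ¬ G.Adj v0 v6 → ¬ G.Adj v0 v7 → ¬ G.Adj v0 v8 → ¬ G.Adj v0 v9 → ¬ G.Adj v1 v3 → ¬ G.Adj v1 v4 → ¬ G.Adj v1 v5 → ¬ G.Adj v1 v6 → ¬ G.Adj v1 v7 → ¬ G.Adj v1 v8 → ¬ G.Adj v1 v9 → ¬ G.Adj v2 v4 → ¬ G.Adj v2 v5 → ¬ G.Adj v2 v6 → ¬ G.Adj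 v2 v7 → ¬ G.Adj v2 v8 → ¬ G.Adj v2 v9 → ¬ G.Adj v3 v5 → ¬ G.Adj v3 v6 → ¬ G.Adj v3 v7 → ¬ G.Adj v3 v8 → ¬ G.Adj v3 v9 → ¬ G.Adj v4 v6 → ¬ G.Adj v4 v7 → ¬ G.Adj v4 v8 → ¬ G.Adj v4 v9 → ¬ G.Adj v5 v7 → ¬ G.Adj v5 v8 → ¬ G.Adj v5 v9 → ¬ G.Adj v6 v8 → ¬ G.Adj v6 v9 → ¬ G.Adj v7 v9 → v0 ≠ v2 → v0 ≠ v3 → v0 ≠ v4 → v0 ≠ v5 → v0 ≠ v6 → v0 ≠ v7 → v0 ≠ v8 → v0 ≠ v9 → v1 ≠ v3 → v1 ≠ v4 → v1 ≠ v5 → v1 ≠ v6 → v1 ≠ v7 → v1 ≠ v8 → v1 ≠ v9 → v2 ≠ v4 → v2 ≠ v5 → v2 ≠ v6 → v2 ≠ v7 → v2 ≠ v8 → v2 ≠ v9 → v3 ≠ v5 → v3 ≠ v6 → v3 ≠ v7 → v3 ≠ v8 → v3 ≠ v9 → v4 ≠ v6 → v4 ≠ v7 → v4 ≠ v8 → v4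 ≠ v9 → v5 ≠ v7 → v5 ≠ v8 → v5 ≠ v9 → v6 ≠ v8 → v6 ≠ v9 → v7 ≠ v9 → False
  third : ∀ v a b : V, a ≠ b → G.Adj v a → G.Adj v b → ∃ w, G.Adj v w ∧ w ≠ a ∧ w ≠ b
  two : ∀ v a : V, G.Adj v a → ∃ w1 w2, w1 ≠ w2 ∧ w1 ≠ a ∧ w2 ≠ a ∧ G.Adj v w1 ∧ G.Adj v w2

structure Hex (G : SimpleGraph V) (h0 h1 h2 h3 h4 h5 : V) : Prop where
  a01 : G.Adj h0 h1
  a12 : G.Adj h1 h2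
  a23 : G.Adj h2 h3
  a34 : G.Adj h3 h4
  a45 : G.Adj h4 h5
  a50 : G.Adj h5 h0
  n02 : ¬ G.Adj h0 h2
  n03 : ¬ G.Adj h0 h3
  n04 : ¬ G.Adj h0 h4
  n13 : ¬ G.Adj h1 h3
  n14 : ¬ G.Adj h1 h4
  n15 : ¬ G.Adj h1 h5
  n24 : ¬ G.Adj h2 h4
  n25 : ¬ G.Adj h2 h5
  n35 : ¬ G.Adj h3 h5
  d02 : h0 ≠ h2
  d03 : h0 ≠ h3
  d04 : h0 ≠ h4
  d13 : h1 ≠ h3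
  d14 : h1 ≠ h4
  d15 : h1 ≠ h5
  d24 : h2 ≠ h4
  d25 : h2 ≠ h5
  d35 : h3 ≠ h5

lemma L3d1 (K : Ctx G) {h0 h1 h2 h3 h4 h5 : V} (hx : Hex G h0 h1 h2 h3 h4 h5)
    (w z : V) (hw0 : G.Adj w h0) (hw1 : G.Adj w h1)
    (hz1 : G.Adj z h1) (hz2 : G.Adj z h2) : False := by
  have nn_1 : ¬ G.Adj z h0 := fun hp => K.c4 z h0 h1 h2 hp hx.a01 hx.a12 hz2.symm hz1.ne hx.d02
  have nn_2 : ¬ G.Adj w z := fun hp => K.c4 w z h2 h1 hp hz2 hx.a12.symm hw1.symm (fun hq => (fun hs => hx.n02 hs.symm) (hq ▸ hw0)) hz1.ne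
  exact K.c8 w h0 h5 h4 h3 h2 z h1 hw0 hx.a50.symm hx.a45.symm hx.a34.symm hx.a23.symm hz2.symm hz1 hw1.symm (fun hq => (fun hs => hx.n15 hs.symm) (hq ▸ hw1)) (fun hq => (fun hs => hx.n04 hs.symm) (hq ▸ hw0)) (fun hq => (fun hs => hx.n03 hs.symm) (hq ▸ hw0)) (fun hq => (fun hs => hx.n02 hs.symm) (hq ▸ hw0)) (fun hq => nn_1 (hq ▸ hw0)) hx.d04 hx.d03 hx.d02 (Ne.symm (fun hq => hx.n02 (hq ▸ hz2))) hx.a01.ne (Ne.symm hx.d35) (Ne.symm hx.d25) (fun hq => nn_1 (hq ▸ hx.a50)) (Ne.symm hx.d15) (Ne.symm hx.d24) (Ne.symm (fun hq => (fun hs => hx.n14 hs.symm) (hq ▸ hz1))) (Ne.symm hx.d14) (Ne.symm (fun hq => (fun hs => hx.n13 hs.symm) (hq ▸ hz1))) (Ne.symm hx.d13) hx.a12.ne'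

lemma L3d2 (K : Ctx G) {h0 h1 h2 h3 h4 h5 : V} (hx : Hex G h0 h1 h2 h3 h4 h5)
    (w z : V) (hw0 : G.Adj w h0) (hw1 : G.Adj w h1)
    (hz2 : G.Adj z h2) (hz3 : G.Adj z h3) : False := by
  have nn_1 : ¬ G.Adj z h1 := fun hp => K.c4 z h1 h2 h3 hp hx.a12 hx.a23 hz3.symm hz2.ne hx.d13
  have nn_2 : ¬ G.Adj w z := fun hp => K.c4 w h1 h2 z hw1 hx.a12 hz2.symm hp.symm (fun hq => (fun hs => hx.n02 hs.symm) (hq ▸ hw0)) (Ne.symm (fun hq => hx.n13 (hq ▸ hz3)))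
  exact K.c8 w h1 h2 z h3 h4 h5 h0 hw1 hx.a12 hz2.symm hz3 hx.a34 hx.a45 hx.a50 hw0.symm (fun hq => (fun hs => hx.n02 hs.symm) (hq ▸ hw0)) (fun hq => nn_1 (hq ▸ hw1)) (fun hq => (fun hs => hx.n03 hs.symm) (hq ▸ hw0)) (fun hq => (fun hs => hx.n04 hs.symm) (hq ▸ hw0)) (fun hq => (fun hs => hx.n15 hs.symm) (hq ▸ hw1)) (Ne.symm (fun hq => hx.n13 (hq ▸ hz3))) hx.d13 hx.d14 hx.d15 hx.a01.ne' hx.a23.ne hx.d24 hx.d25 (Ne.symm hx.d02) (fun hq => (fun hs => hx.n24 hs.symm) (hq ▸ hz2)) (fun hq => (fun hs => hx.n25 hs.symm) (hq ▸ hz2)) (Ne.symm (fun hq => nn_1 (hq ▸ hx.a01))) hx.d35 (Ne.symm hx.d03) (Ne.symm hx.d04)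

lemma L3d3 (K : Ctx G) {h0 h1 h2 h3 h4 h5 : V} (hx : Hex G h0 h1 h2 h3 h4 h5)
    (w z : V) (hw0 : G.Adj w h0) (hw1 : G.Adj w h1)
    (hz3 : G.Adj z h3) (hz4 : G.Adj z h4) : False := by
  have nn_1 : ¬ G.Adj z h1 := fun hp => K.c4 z h1 h2 h3 hp hx.a12 hx.a23 hz3.symm (fun hq => hx.n24 (hq ▸ hz4)) hx.d13
  have nn_2 : ¬ G.Adj z h2 := fun hp => K.c4 z h2 h3 h4 hp hx.a23 hx.a34 hz4.symm hz3.ne hx.d24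
  have nn_3 : ¬ G.Adj z h5 := fun hp => K.c4 z h5 h4 h3 hp hx.a45.symm hx.a34.symm hz3.symm hz4.ne (Ne.symm hx.d35)
  have nn_4 : ¬ G.Adj z h0 := fun hp => K.h5 z h0 h1 h2 h3 hp hx.a01 hx.a12 hx.a23 hz3.symm nn_1 nn_2 hx.n02 hx.n03 hx.n13 (Ne.symm (fun hq => nn_2 (hq ▸ hx.a12))) (fun hq => (fun hs => hx.n02 hs.symm) (hq ▸ hp)) hx.d02 hx.d03 hx.d13
  have nn_5 : ¬ G.Adj w h2 := fun hp => K.c4 w h2 h1 h0 hp hx.a12.symm hx.a01.symm hw0.symm hw1.ne (Ne.symm hx.d02)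
  have nn_6 : ¬ G.Adj w h3 := fun hp => K.c4 w h3 h2 h1 hp hx.a23.symm hx.a12.symm hw1.symm (fun hq => (fun hs => hx.n02 hs.symm) (hq ▸ hw0)) (Ne.symm hx.d13)
  have nn_7 : ¬ G.Adj w h5 := fun hp => K.c4 w h5 h0 h1 hp hx.a50 hx.a01 hw1.symm hw0.ne (Ne.symm hx.d15)
  have nn_8 : ¬ G.Adj w h4 := fun hp => K.h5 w h1 h2 h3 h4 hw1 hx.a12 hx.a23 hx.a34 hp.symm nn_5 nn_6 hx.n13 hx.n14 hx.n24 (fun hq => (fun hs => hx.n02 hs.symm) (hq ▸ hw0)) (fun hq => (fun hs => hx.n03 hs.symm) (hq ▸ hw0)) hx.d13 hx.d14 hx.d24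
  have nn_9 : ¬ G.Adj w z := fun hp => K.h5 w z h4 h5 h0 hp hz4 hx.a45 hx.a50 hw0.symm nn_8 nn_7 nn_3 nn_4 (fun hs => hx.n04 hs.symm) (fun hq => (fun hs => hx.n04 hs.symm) (hq ▸ hw0)) (fun hq => (fun hs => hx.n15 hs.symm) (hq ▸ hw1)) (Ne.symm (fun hq => nn_4 (hq ▸ hx.a50))) (Ne.symm (fun hq => nn_1 (hq ▸ hx.a01))) (Ne.symm hx.d04)
  exact K.c8 w h0 h5 h4 z h3 h2 h1 hw0 hx.a50.symm hx.a45.symm hz4.symm hz3 hx.a23.symm hx.a12.symm hw1.symm (fun hq => (fun hs => hx.n15 hs.symm) (hq ▸ hw1)) (fun hq => (fun hs => hx.n04 hs.symm) (hq ▸ hw0)) (fun hq => nn_4 (hq ▸ hw0)) (fun hq => (fun hs => hx.n03 hs.symm) (hq ▸ hw0)) (fun hq => (fun hs => hx.n02 hs.symm) (hq ▸ hw0)) hx.d04 (fun hq => nn_1 (hq ▸ hx.a01)) hx.d03 hx.d02 hx.a01.ne (fun hq => nn_4 (hq ▸ hx.a50)) (Ne.symm hx.d35) (Ne.symm hx.d25)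 (Ne.symm hx.d15) hx.a34.ne' (Ne.symm hx.d24) (Ne.symm hx.d14) (Ne.symm (fun hq => nn_1 (hq ▸ hx.a12.symm))) (Ne.symm (fun hq => nn_4 (hq ▸ hx.a01.symm))) (Ne.symm hx.d13)


set_option maxHeartbeats 4000000 in
lemma lemM (K : Ctx G) {h0 h1 h2 h3 h4 h5 : V} (hx : Hex G h0 h1 h2 h3 h4 h5)
    (t : V) (ht5 : G.Adj t h5) (ht0 : G.Adj t h0)
    (f01 : ∀ z, G.Adj z h0 → G.Adj z h1 → False)
    (f12 : ∀ z, G.Adj z h1 → G.Adj z h2 → False)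
    (f23 : ∀ z, G.Adj z h2 → G.Adj z h3 → False)
    (f34 : ∀ z, G.Adj z h3 → G.Adj z h4 → False)
    (f45 : ∀ z, G.Adj z h4 → G.Adj z h5 → False) : False := by
  have nt1 : ¬ G.Adj t h1 := fun hp_1 => f01 t ht0 hp_1
  have nt4 : ¬ G.Adj t h4 := fun hp_2 => f45 t hp_2 ht5
  have nt2 : ¬ G.Adj t h2 := fun hp_3 => K.c4 t h2 h1 h0 hp_3 hx.a12.symm hx.a01.symm ht0.symm (fun hq => hx.n15 (hq ▸ ht5)) (Ne.symm hx.d02)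
  have nt3 : ¬ G.Adj t h3 := fun hp_4 => K.c4 t h3 h4 h5 hp_4 hx.a34 hx.a45 ht5.symm (fun hq => (fun hs => hx.n04 hs.symm) (hq ▸ ht0)) hx.d35
  obtain ⟨y1, hy1, hy1a, hy1b⟩ := K.third h1 h0 h2 hx.d02 hx.a01.symm hx.a12
  have ny1x0 : ¬ G.Adj y1 h0 := fun hp_5 => f01 y1 hp_5 hy1.symm
  have ny1x2 : ¬ G.Adj y1 h2 := fun hp_6 => f12 y1 hy1.symm hp_6
  have ny1x5 : ¬ G.Adj y1 h5 := fun hp_7 => K.c4 y1 h5 h0 h1 hp_7 hx.a50 hx.a01 hy1 hy1a (Ne.symm hx.d15)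
  have ny1x3 : ¬ G.Adj y1 h3 := fun hp_8 => K.c4 y1 h3 h2 h1 hp_8 hx.a23.symm hx.a12.symm hy1 hy1b (Ne.symm hx.d13)
  have ny1x4 : ¬ G.Adj y1 h4 := fun hp_9 => K.h5 y1 h4 h3 h2 h1 hp_9 hx.a34.symm hx.a23.symm hx.a12.symm hy1 ny1x3 ny1x2 (fun hs => hx.n24 hs.symm) (fun hs => hx.n14 hs.symm) (fun hs => hx.n13 hs.symm) (fun hq => (fun hs => hx.n13 hs.symm) (hq ▸ hy1.symm)) hy1b (Ne.symm hx.d24) (Ne.symm hx.d14) (Ne.symm hx.d13)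
  obtain ⟨y2, hy2, hy2a, hy2b⟩ := K.third h2 h1 h3 hx.d13 hx.a12.symm hx.a23
  have ny2x1 : ¬ G.Adj y2 h1 := fun hp_10 => f12 y2 hp_10 hy2.symm
  have ny2x3 : ¬ G.Adj y2 h3 := fun hp_11 => f23 y2 hy2.symm hp_11
  have ny2x0 : ¬ G.Adj y2 h0 := fun hp_12 => K.c4 y2 h0 h1 h2 hp_12 hx.a01 hx.a12 hy2 hy2a hx.d02
  have ny2x4 : ¬ G.Adj y2 h4 := fun hp_13 => K.c4 y2 h4 h3 h2 hp_13 hx.a34.symm hx.a23.symm hy2 hy2b (Ne.symm hx.d24)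
  have ny2x5 : ¬ G.Adj y2 h5 := fun hp_14 => K.h5 y2 h5 h4 h3 h2 hp_14 hx.a45.symm hx.a34.symm hx.a23.symm hy2 ny2x4 ny2x3 (fun hs => hx.n35 hs.symm) (fun hs => hx.n25 hs.symm) (fun hs => hx.n24 hs.symm) (fun hq => (fun hs => hx.n24 hs.symm) (hq ▸ hy2.symm)) hy2b (Ne.symm hx.d35) (Ne.symm hx.d25) (Ne.symm hx.d24)
  obtain ⟨y3, hy3, hy3a, hy3b⟩ := K.third h3 h2 h4 hx.d24 hx.a23.symm hx.a34
  have ny3x2 : ¬ G.Adj y3 h2 := fun hp_15 => f23 y3 hp_15 hy3.symm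
  have ny3x4 : ¬ G.Adj y3 h4 := fun hp_16 => f34 y3 hy3.symm hp_16
  have ny3x1 : ¬ G.Adj y3 h1 := fun hp_17 => K.c4 y3 h1 h2 h3 hp_17 hx.a12 hx.a23 hy3 hy3a hx.d13
  have ny3x5 : ¬ G.Adj y3 h5 := fun hp_18 => K.c4 y3 h5 h4 h3 hp_18 hx.a45.symm hx.a34.symm hy3 hy3b (Ne.symm hx.d35)
  have ny3x0 : ¬ G.Adj y3 h0 := fun hp_19 => K.h5 y3 h0 h5 h4 h3 hp_19 hx.a50.symm hx.a45.symm hx.a34.symm hy3 ny3x5 ny3x4 hx.n04 hx.n03 (fun hs => hx.n35 hs.symm) (fun hq => (fun hs => hx.n35 hs.symm) (hq ▸ hy3.symm)) hy3b hx.d04 hx.d03 (Ne.symm hx.d35)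
  obtain ⟨y4, hy4, hy4a, hy4b⟩ := K.third h4 h3 h5 hx.d35 hx.a34.symm hx.a45
  have ny4x3 : ¬ G.Adj y4 h3 := fun hp_20 => f34 y4 hp_20 hy4.symm
  have ny4x5 : ¬ G.Adj y4 h5 := fun hp_21 => f45 y4 hy4.symm hp_21
  have ny4x2 : ¬ G.Adj y4 h2 := fun hp_22 => K.c4 y4 h2 h3 h4 hp_22 hx.a23 hx.a34 hy4 hy4a hx.d24
  have ny4x0 : ¬ G.Adj y4 h0 := fun hp_23 => K.c4 y4 h0 h5 h4 hp_23 hx.a50.symm hx.a45.symm hy4 hy4b hx.d04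
  have ny4x1 : ¬ G.Adj y4 h1 := fun hp_24 => K.h5 y4 h1 h0 h5 h4 hp_24 hx.a01.symm hx.a50.symm hx.a45.symm hy4 ny4x0 ny4x5 hx.n15 hx.n14 hx.n04 (fun hq => hx.n04 (hq ▸ hy4.symm)) hy4b hx.d15 hx.d14 hx.d04
  have nY12 : ¬ G.Adj y1 y2 := fun hp_25 => K.c4 y1 y2 h2 h1 hp_25 hy2.symm hx.a12.symm hy1 hy1b hy2a
  have nY23 : ¬ G.Adj y2 y3 := fun hp_26 => K.c4 y2 y3 h3 h2 hp_26 hy3.symm hx.a23.symm hy2 hy2b hy3a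
  have nY34 : ¬ G.Adj y3 y4 := fun hp_27 => K.c4 y3 y4 h4 h3 hp_27 hy4.symm hx.a34.symm hy3 hy3b hy4a
  have nY13 : ¬ G.Adj y1 y3 := fun hp_28 => K.h5 y1 y3 h3 h2 h1 hp_28 hy3.symm hx.a23.symm hx.a12.symm hy1 ny1x3 ny1x2 ny3x2 ny3x1 (fun hs => hx.n13 hs.symm) (fun hq => (fun hs => hx.n13 hs.symm) (hq ▸ hy1.symm)) hy1b hy3a (Ne.symm (fun hq => ny3x0 (hq ▸ hx.a01.symm))) (Ne.symm hx.d13)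
  have nY24 : ¬ G.Adj y2 y4 := fun hp_29 => K.h5 y2 y4 h4 h3 h2 hp_29 hy4.symm hx.a34.symm hx.a23.symm hy2 ny2x4 ny2x3 ny4x3 ny4x2 (fun hs => hx.n24 hs.symm) (fun hq => (fun hs => hx.n24 hs.symm) (hq ▸ hy2.symm)) hy2b hy4a (Ne.symm (fun hq => ny4x1 (hq ▸ hx.a12.symm))) (Ne.symm hx.d24)
  have nTY1 : ¬ G.Adj t y1 := fun hp_30 => K.c4 t y1 h1 h0 hp_30 hy1.symm hx.a01.symm ht0.symm (Ne.symm (fun hq => nt2 (hq ▸ hx.a12))) hy1a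
  have nTY4 : ¬ G.Adj t y4 := fun hp_31 => K.c4 t y4 h4 h5 hp_31 hy4.symm hx.a45 ht5.symm (fun hq => (fun hs => hx.n04 hs.symm) (hq ▸ ht0)) hy4b
  have nTY2 : ¬ G.Adj t y2 := fun hp_32 => K.h5 t y2 h2 h1 h0 hp_32 hy2.symm hx.a12.symm hx.a01.symm ht0.symm nt2 nt1 ny2x1 ny2x0 (fun hs => hx.n02 hs.symm) (fun hq => (fun hs => hx.n02 hs.symm) (hq ▸ ht0)) (Ne.symm (fun hq => nt2 (hq ▸ hx.a12))) hy2a (Ne.symm (fun hq => ny2x1 (hq ▸ hx.a01))) (Ne.symm hx.d02)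
  have nTY3 : ¬ G.Adj t y3 := fun hp_33 => K.h5 t y3 h3 h4 h5 hp_33 hy3.symm hx.a34 hx.a45 ht5.symm nt3 nt4 ny3x4 ny3x5 hx.n35 (fun hq => (fun hs => hx.n03 hs.symm) (hq ▸ ht0)) (fun hq => (fun hs => hx.n04 hs.symm) (hq ▸ ht0)) hy3b (Ne.symm (fun hq => ny3x0 (hq ▸ hx.a50))) hx.d35
  have ey2 : ∀ w, G.Adj y2 w → w ≠ h2 → ¬G.Adj w h1 ∧ ¬G.Adj w h3 ∧ ¬G.Adj w h0 ∧ ¬G.Adj w h4 := by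
    intro w hw hwne
    have nn_34 : ¬ G.Adj w h1 := fun hp_35 => K.c4 w h1 h2 y2 hp_35 hx.a12 hy2 hw hwne (Ne.symm hy2a)
    have nn_36 : ¬ G.Adj w h3 := fun hp_37 => K.c4 w h3 h2 y2 hp_37 hx.a23.symm hy2 hw hwne (Ne.symm hy2b)
    have nn_38 : ¬ G.Adj w h0 := by
      intro hp_39
      have ii : ¬ G.Adj w h2 := fun hp_40 => K.c4 w h2 h1 h0 hp_40 hx.a12.symm hx.a01.symm hp_39.symm (fun hq => (fun hs => ny2x1 hs.symm) (hq ▸ hw.symm)) (Ne.symm hx.d02)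
      exact K.h5 w h0 h1 h2 y2 hp_39 hx.a01 hx.a12 hy2 hw nn_34 ii hx.n02 (fun hs => ny2x0 hs.symm) (fun hs => ny2x1 hs.symm) (Ne.symm (fun hq => ii (hq ▸ hx.a12))) hwne hx.d02 (fun hq => ny2x1 (hq ▸ hx.a01)) (Ne.symm hy2a)
    have nn_41 : ¬ G.Adj w h4 := by
      intro hp_42
      have ii : ¬ G.Adj w h2 := fun hp_43 => K.c4 w h2 h3 h4 hp_43 hx.a23 hx.a34 hp_42.symm (fun hq => (fun hs => ny2x3 hs.symm) (hq ▸ hw.symm)) hx.d24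
      exact K.h5 w h4 h3 h2 y2 hp_42 hx.a34.symm hx.a23.symm hy2 hw nn_36 ii (fun hs => hx.n24 hs.symm) (fun hs => ny2x4 hs.symm) (fun hs => ny2x3 hs.symm) (Ne.symm (fun hq => ii (hq ▸ hx.a23.symm))) hwne (Ne.symm hx.d24) (Ne.symm (fun hq => (fun hs => hx.n24 hs.symm) (hq ▸ hy2.symm))) (Ne.symm hy2b)
    exact ⟨nn_34, nn_36, nn_38, nn_41⟩
  have ey3 : ∀ w, G.Adj y3 w → w ≠ h3 → ¬G.Adj w h2 ∧ ¬G.Adj w h4 ∧ ¬G.Adj w h1 ∧ ¬G.Adj w h5 := by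
    intro w hw hwne
    have nn_44 : ¬ G.Adj w h2 := fun hp_45 => K.c4 w h2 h3 y3 hp_45 hx.a23 hy3 hw hwne (Ne.symm hy3a)
    have nn_46 : ¬ G.Adj w h4 := fun hp_47 => K.c4 w h4 h3 y3 hp_47 hx.a34.symm hy3 hw hwne (Ne.symm hy3b)
    have nn_48 : ¬ G.Adj w h1 := by
      intro hp_49
      have ii : ¬ G.Adj w h3 := fun hp_50 => K.c4 w h3 h2 h1 hp_50 hx.a23.symm hx.a12.symm hp_49.symm (fun hq => (fun hs => ny3x2 hs.symm) (hq ▸ hw.symm)) (Ne.symm hx.d13)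
      exact K.h5 w h1 h2 h3 y3 hp_49 hx.a12 hx.a23 hy3 hw nn_44 ii hx.n13 (fun hs => ny3x1 hs.symm) (fun hs => ny3x2 hs.symm) (Ne.symm (fun hq => ii (hq ▸ hx.a23))) hwne hx.d13 (fun hq => ny3x0 (hq ▸ hx.a01.symm)) (Ne.symm hy3a)
    have nn_51 : ¬ G.Adj w h5 := by
      intro hp_52
      have ii : ¬ G.Adj w h3 := fun hp_53 => K.c4 w h3 h4 h5 hp_53 hx.a34 hx.a45 hp_52.symm (fun hq => (fun hs => ny3x4 hs.symm) (hq ▸ hw.symm)) hx.d35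
      exact K.h5 w h5 h4 h3 y3 hp_52 hx.a45.symm hx.a34.symm hy3 hw nn_46 ii (fun hs => hx.n35 hs.symm) (fun hs => ny3x5 hs.symm) (fun hs => ny3x4 hs.symm) (Ne.symm (fun hq => ii (hq ▸ hx.a34.symm))) hwne (Ne.symm hx.d35) (fun hq => ny3x0 (hq ▸ hx.a50)) (Ne.symm hy3b)
    exact ⟨nn_44, nn_46, nn_48, nn_51⟩
  have ey4 : ∀ w, G.Adj y4 w → w ≠ h4 → ¬G.Adj w h3 ∧ ¬G.Adj w h5 ∧ ¬G.Adj w h2 ∧ ¬G.Adj w h0 := by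
    intro w hw hwne
    have nn_54 : ¬ G.Adj w h3 := fun hp_55 => K.c4 w h3 h4 y4 hp_55 hx.a34 hy4 hw hwne (Ne.symm hy4a)
    have nn_56 : ¬ G.Adj w h5 := fun hp_57 => K.c4 w h5 h4 y4 hp_57 hx.a45.symm hy4 hw hwne (Ne.symm hy4b)
    have nn_58 : ¬ G.Adj w h2 := by
      intro hp_59
      have ii : ¬ G.Adj w h4 := fun hp_60 => K.c4 w h4 h3 h2 hp_60 hx.a34.symm hx.a23.symm hp_59.symm (fun hq => (fun hs => ny4x3 hs.symm) (hq ▸ hw.symm)) (Ne.symm hx.d24)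
      exact K.h5 w h2 h3 h4 y4 hp_59 hx.a23 hx.a34 hy4 hw nn_54 ii hx.n24 (fun hs => ny4x2 hs.symm) (fun hs => ny4x3 hs.symm) (Ne.symm (fun hq => ii (hq ▸ hx.a34))) hwne hx.d24 (fun hq => ny4x1 (hq ▸ hx.a12.symm)) (Ne.symm hy4a)
    have nn_61 : ¬ G.Adj w h0 := by
      intro hp_62
      have ii : ¬ G.Adj w h4 := fun hp_63 => K.c4 w h4 h5 h0 hp_63 hx.a45 hx.a50 hp_62.symm (fun hq => (fun hs => ny4x5 hs.symm) (hq ▸ hw.symm)) (Ne.symm hx.d04)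
      exact K.h5 w h0 h5 h4 y4 hp_62 hx.a50.symm hx.a45.symm hy4 hw nn_56 ii hx.n04 (fun hs => ny4x0 hs.symm) (fun hs => ny4x5 hs.symm) (Ne.symm (fun hq => ii (hq ▸ hx.a45.symm))) hwne hx.d04 (fun hq => ny4x1 (hq ▸ hx.a01)) (Ne.symm hy4b)
    exact ⟨nn_54, nn_56, nn_58, nn_61⟩
  have selB : ∃ b, G.Adj y2 b ∧ b ≠ h2 ∧ ¬G.Adj b h2 ∧ ¬G.Adj b h5 := by
    obtain ⟨w1, w2, tw_64ww, tw_641n, tw_642n, tw_641, tw_642⟩ := K.two y2 h2 hy2.symm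
    obtain ⟨ex_65, ex_66, ex_67, ex_68⟩ := ey2 w1 tw_641 tw_641n
    obtain ⟨ex_69, ex_70, ex_71, ex_72⟩ := ey2 w2 tw_642 tw_642n
    by_cases hc_73 : G.Adj w1 h2
    case pos =>
      by_cases hc_74 : G.Adj w2 h2
      case pos =>
        exact (K.c4 w1 y2 w2 h2 tw_641.symm tw_642 hc_74 hc_73.symm tw_64ww hy2.ne').elim
      case neg =>
        by_cases hc_75 : G.Adj w2 h5
        case pos =>
          exact (L3d3 K ⟨hy2.symm, hx.a12.symm, hx.a01.symm, hx.a50.symm, hc_75.symm, tw_642.symm, ny2x1, ny2x0, ny2x5, (fun hs => hx.n02 hs.symm), hx.n25, (fun hs => hc_74 hs.symm), hx.n15, (fun hs => ex_69 hs.symm), (fun hs => ex_71 hs.symm), hy2a, (Ne.symm (fun hq => ny2x1 (hq ▸ hx.a01))), (Ne.symm (fun hq => ny2x0 (hq ▸ hx.a50))), (Ne.symm hx.d02), hx.d25, (Ne.symm tw_642n), hx.d15, (fun hq => ex_71 (hq ▸ hx.a01.symm)), (fun hq => ex_69 (hq ▸ hx.a01))⟩ w1 t tw_641.symm hc_73 ht0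 ht5).elim
        case neg =>
          exact ⟨w2, tw_642, tw_642n, hc_74, hc_75⟩
    case neg =>
      by_cases hc_76 : G.Adj w1 h5
      case pos =>
        by_cases hc_77 : G.Adj w2 h2
        case pos =>
          exact (L3d3 K ⟨hy2.symm, hx.a12.symm, hx.a01.symm, hx.a50.symm, hc_76.symm, tw_641.symm, ny2x1, ny2x0, ny2x5, (fun hs => hx.n02 hs.symm), hx.n25, (fun hs => hc_73 hs.symm), hx.n15, (fun hs => ex_65 hs.symm), (fun hs => ex_67 hs.symm), hy2a, (Ne.symm (fun hq => ny2x1 (hq ▸ hx.a01))), (Ne.symm (fun hq => ny2x0 (hq ▸ hx.a50))), (Ne.symm hx.d02), hx.d25, (Ne.symm tw_641n), hx.d15, (fun hq => ex_67 (hq ▸ hx.a01.symm)), (fun hq => ex_65 (hq ▸ hx.a01))⟩ w2 t tw_642.symm hc_77 ht0 ht5).elim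
        case neg =>
          by_cases hc_78 : G.Adj w2 h5
          case pos =>
            exact (K.c4 w1 h5 w2 y2 hc_76 hc_78.symm tw_642.symm tw_641 tw_64ww (fun hq => ny2x0 (hq ▸ hx.a50))).elim
          case neg =>
            exact ⟨w2, tw_642, tw_642n, hc_77, hc_78⟩
      case neg =>
        exact ⟨w1, tw_641, tw_641n, hc_73, hc_76⟩
  have selC : ∃ b, G.Adj y4 b ∧ b ≠ h4 ∧ ¬G.Adj b h4 ∧ ¬G.Adj b h1 := by
    obtain ⟨w1, w2, tw_79ww, tw_791n, tw_792n, tw_791, tw_792⟩ := K.two y4 h4 hy4.symm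
    obtain ⟨ex_80, ex_81, ex_82, ex_83⟩ := ey4 w1 tw_791 tw_791n
    obtain ⟨ex_84, ex_85, ex_86, ex_87⟩ := ey4 w2 tw_792 tw_792n
    by_cases hc_88 : G.Adj w1 h4
    case pos =>
      by_cases hc_89 : G.Adj w2 h4
      case pos =>
        exact (K.c4 w1 y4 w2 h4 tw_791.symm tw_792 hc_89 hc_88.symm tw_79ww hy4.ne').elim
      case neg =>
        by_cases hc_90 : G.Adj w2 h1
        case pos =>
          exact (L3d2 K ⟨hy4.symm, hx.a45, hx.a50, hx.a01, hc_90.symm, tw_792.symm, ny4x5, ny4x0, ny4x1, (fun hs => hx.n04 hs.symm), (fun hs => hx.n14 hs.symm), (fun hs => hc_89 hs.symm), (fun hs => hx.n15 hs.symm), (fun hs => ex_85 hs.symm), (fun hs => ex_87 hs.symm), hy4b, (Ne.symm (fun hq => ny4x1 (hq ▸ hx.a01))), (Ne.symm (fun hq => ny4x0 (hq ▸ hx.a01.symm))), (Ne.symm hx.d04), (Ne.symm hx.d14), (Ne.symm tw_792n), (Ne.symm hx.d15), (fun hq => ex_87 (hq ▸ hx.a50)), (fun hq => ex_85 (hq ▸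 hx.a50.symm))⟩ w1 t tw_791.symm hc_88 ht5 ht0).elim
        case neg =>
          exact ⟨w2, tw_792, tw_792n, hc_89, hc_90⟩
    case neg =>
      by_cases hc_91 : G.Adj w1 h1
      case pos =>
        by_cases hc_92 : G.Adj w2 h4
        case pos =>
          exact (L3d2 K ⟨hy4.symm, hx.a45, hx.a50, hx.a01, hc_91.symm, tw_791.symm, ny4x5, ny4x0, ny4x1, (fun hs => hx.n04 hs.symm), (fun hs => hx.n14 hs.symm), (fun hs => hc_88 hs.symm), (fun hs => hx.n15 hs.symm), (fun hs => ex_81 hs.symm), (fun hs => ex_83 hs.symm), hy4b, (Ne.symm (fun hq => ny4x1 (hq ▸ hx.a01))), (Ne.symm (fun hq => ny4x0 (hq ▸ hx.a01.symm))), (Ne.symm hx.d04), (Ne.symm hx.d14), (Ne.symm tw_791n), (Ne.symm hx.d15), (fun hq => ex_83 (hq ▸ hx.a50)), (fun hq => ex_81 (hq ▸ hx.a50.symm))⟩ w2 t tw_792.symm hc_92 ht5 ht0).elim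
        case neg =>
          by_cases hc_93 : G.Adj w2 h1
          case pos =>
            exact (K.c4 w1 h1 w2 y4 hc_91 hc_93.symm tw_792.symm tw_791 tw_79ww (fun hq => ny4x0 (hq ▸ hx.a01.symm))).elim
          case neg =>
            exact ⟨w2, tw_792, tw_792n, hc_92, hc_93⟩
      case neg =>
        exact ⟨w1, tw_791, tw_791n, hc_88, hc_91⟩
  obtain ⟨b, hb, hbne, nb2, nb5⟩ := selB
  obtain ⟨ex_94, ex_95, ex_96, ex_97⟩ := ey2 b hb hbne
  have nBY4 : ¬ G.Adj b y4 := fun hp_98 => K.c8 b y4 h4 h5 h0 h1 h2 y2 hp_98 hy4.symm hx.a45 hx.a50 hx.a01 hx.a12 hy2 hb (Ne.symm (fun hq => ex_95 (hq ▸ hx.a34.symm))) (Ne.symm (fun hq => ex_96 (hq ▸ hx.a50))) (Ne.symm (fun hq => ex_94 (hq ▸ hx.a01))) (Ne.symm (fun hq => ex_96 (hq ▸ hx.a01.symm))) hbne hy4b (Ne.symm (fun hq => ny4x1 (hq ▸ hx.a01))) (Ne.symm (fun hq => ny4x0 (hq ▸ hx.a01.symm))) (Ne.symm (fun hq => ny4x1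 (hq ▸ hx.a12.symm))) (Ne.symm (fun hq => ny4x2 (hq ▸ hy2.symm))) (Ne.symm hx.d04) (Ne.symm hx.d14) (Ne.symm hx.d24) (Ne.symm (fun hq => (fun hs => hx.n24 hs.symm) (hq ▸ hy2.symm))) (Ne.symm hx.d15) (Ne.symm hx.d25) (fun hq => ny2x0 (hq ▸ hx.a50)) hx.d02 (fun hq => ny2x1 (hq ▸ hx.a01)) (Ne.symm hy2a)
  have nBT : ¬ G.Adj b t := fun hp_99 => K.c8 t b y2 h2 h3 h4 h5 h0 hp_99.symm hb.symm hy2.symm hx.a23 hx.a34 hx.a45 hx.a50 ht0.symm (fun hq => ny2x0 (hq ▸ ht0)) (fun hq => (fun hs => hx.n02 hs.symm) (hq ▸ ht0)) (fun hq => (fun hs => hx.n03 hs.symm) (hq ▸ ht0)) (fun hq => (fun hs => hx.n04 hs.symm) (hq ▸ ht0)) ht5.ne hbne (Ne.symm (fun hq => nb2 (hq ▸ hx.a23.symm))) (Ne.symm (fun hq => ex_95 (hq ▸ hx.a34.symm))) (Ne.symm (fun hq => ex_96 (hq ▸ hx.a50))) (Ne.symm (fun hq => ex_94 (hq ▸ hx.a01)))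 hy2b (fun hq => (fun hs => hx.n24 hs.symm) (hq ▸ hy2.symm)) (Ne.symm (fun hq => ny2x0 (hq ▸ hx.a50))) (Ne.symm (fun hq => ny2x1 (hq ▸ hx.a01))) hx.d24 hx.d25 (Ne.symm hx.d02) hx.d35 (Ne.symm hx.d03) (Ne.symm hx.d04)
  have nBY1 : ¬ G.Adj b y1 := fun hp_100 => K.h5 b y1 h1 h2 y2 hp_100 hy1.symm hx.a12 hy2 hb ex_94 nb2 ny1x2 nY12 (fun hs => ny2x1 hs.symm) (Ne.symm (fun hq => ex_96 (hq ▸ hx.a01.symm))) hbne hy1b (fun hq => ny2x1 (hq ▸ hy1.symm)) (Ne.symm hy2a)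
  have nBY3 : ¬ G.Adj b y3 := fun hp_101 => K.h5 b y3 h3 h2 y2 hp_101 hy3.symm hx.a23.symm hy2 hb ex_95 nb2 ny3x2 (fun hs => nY23 hs.symm) (fun hs => ny2x3 hs.symm) (Ne.symm (fun hq => nb2 (hq ▸ hx.a23.symm))) hbne hy3a (Ne.symm (fun hq => ny3x2 (hq ▸ hy2.symm))) (Ne.symm hy2b)
  obtain ⟨c, hc, hcne, nc4, nc1⟩ := selC
  obtain ⟨ex_102, ex_103, ex_104, ex_105⟩ := ey4 c hc hcne
  have nCY2 : ¬ G.Adj c y2 := fun hp_106 => K.c8 c y2 h2 h1 h0 h5 h4 y4 hp_106 hy2.symm hx.a12.symm hx.a01.symm hx.a50.symm hx.a45.symm hy4 hc (Ne.symm (fun hq => nc1 (hq ▸ hx.a12.symm))) (Ne.symm (fun hq => ex_105 (hq ▸ hx.a01.symm))) (Ne.symm (fun hq => nc1 (hq ▸ hx.a01))) (Ne.symm (fun hq => ex_105 (hq ▸ hx.a50))) hcne hy2a (Ne.symm (fun hq => ny2x1 (hq ▸ hx.a01))) (Ne.symm (fun hq => ny2x0 (hq ▸ hx.a50))) (fun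 hq => (fun hs => hx.n24 hs.symm) (hq ▸ hy2.symm)) (fun hq => ny4x2 (hq ▸ hy2.symm)) (Ne.symm hx.d02) hx.d25 hx.d24 (fun hq => ny4x1 (hq ▸ hx.a12.symm)) hx.d15 hx.d14 (fun hq => ny4x0 (hq ▸ hx.a01.symm)) hx.d04 (fun hq => ny4x1 (hq ▸ hx.a01)) (Ne.symm hy4b)
  have oneB : ∀ cp, G.Adj y4 cp → cp ≠ h4 → ¬G.Adj cp h4 → ¬G.Adj cp h1 → G.Adj b cp → False := by
    intro cp hcp hcpne ncp4 ncp1 hbcp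
    obtain ⟨ex_107, ex_108, ex_109, ex_110⟩ := ey4 cp hcp hcpne
    have nCPY2_111 : ¬ G.Adj cp y2 := fun hp_112 => K.c8 cp y2 h2 h1 h0 h5 h4 y4 hp_112 hy2.symm hx.a12.symm hx.a01.symm hx.a50.symm hx.a45.symm hy4 hcp (Ne.symm (fun hq => ncp1 (hq ▸ hx.a12.symm))) (Ne.symm (fun hq => ex_110 (hq ▸ hx.a01.symm))) (Ne.symm (fun hq => ncp1 (hq ▸ hx.a01))) (Ne.symm (fun hq => ex_110 (hq ▸ hx.a50))) hcpne hy2a (Ne.symm (fun hq => ny2x1 (hq ▸ hx.a01))) (Ne.symm (fun hq => ny2x0 (hq ▸ hx.a50))) (fun hq => (fun hs => hx.n24 hs.symm) (hq ▸ hy2.symm)) (fun hq => ny4x2 (hq ▸ hy2.symm)) (Ne.symm hx.d02) hx.d25 hx.d24 (fun hq => ny4x1 (hq ▸ hx.a12.symm)) hx.d15 hx.d14 (fun hq => ny4x0 (hq ▸ hx.a01.symm)) hx.d04 (fun hq => ny4x1 (hq ▸ hx.a01)) (Ne.symm hy4b)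
    have nCPT_113 : ¬ G.Adj cp t := fun hp_114 => K.c8 t cp y4 h4 h3 h2 h1 h0 hp_114.symm hcp.symm hy4.symm hx.a34.symm hx.a23.symm hx.a12.symm hx.a01.symm ht0.symm (fun hq => ny4x0 (hq ▸ ht0)) (fun hq => (fun hs => hx.n04 hs.symm) (hq ▸ ht0)) (fun hq => (fun hs => hx.n03 hs.symm) (hq ▸ ht0)) (fun hq => (fun hs => hx.n02 hs.symm) (hq ▸ ht0)) (Ne.symm (fun hq => nt2 (hq ▸ hx.a12))) hcpne (Ne.symm (fun hq => ex_109 (hq ▸ hx.a23.symm))) (Ne.symm (fun hq => ncp1 (hq ▸ hx.a12.symm))) (Ne.symm (fun hq => ex_110 (hq ▸ hx.a01.symm))) (Ne.symm (fun hq => ncp1 (hq ▸ hx.a01))) hy4a (Ne.symm (fun hq => ny4x1 (hq ▸ hx.a12.symm))) (Ne.symm (fun hq => ny4x0 (hq ▸ hx.a01.symm))) (Ne.symm (fun hq => ny4x1 (hq ▸ hx.a01))) (Ne.symm hx.d24) (Ne.symm hx.d14) (Ne.symm hx.d04) (Ne.symm hx.d13) (Ne.symm hx.d03) (Ne.symm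 hx.d02)
    have nCPY1_115 : ¬ G.Adj cp y1 := fun hp_116 => K.c8 y1 cp y4 h4 h5 t h0 h1 hp_116.symm hcp.symm hy4.symm hx.a45 ht5.symm ht0 hx.a01 hy1 (fun hq => ny4x1 (hq ▸ hy1.symm)) (fun hq => (fun hs => hx.n14 hs.symm) (hq ▸ hy1.symm)) (Ne.symm (fun hq => ny1x0 (hq ▸ hx.a50))) (Ne.symm (fun hq => ny1x0 (hq ▸ ht0))) hy1a hcpne (Ne.symm (fun hq => ex_110 (hq ▸ hx.a50))) (Ne.symm (fun hq => ex_110 (hq ▸ ht0))) (Ne.symm (fun hq => ncp1 (hq ▸ hx.a01))) (Ne.symm (fun hq => ex_110 (hq ▸ hx.a01.symm))) hy4b (Ne.symm (fun hq => ny4x0 (hq ▸ ht0))) (Ne.symm (fun hq => ny4x1 (hq ▸ hx.a01))) (Ne.symm (fun hq => ny4x0 (hq ▸ hx.a01.symm))) (Ne.symm (fun hq => (fun hs => hx.n04 hs.symm) (hq ▸ ht0))) (Ne.symm hx.d04) (Ne.symm hx.d14) hx.a50.ne (Ne.symm hx.d15) (Ne.symm (fun hq => nt2 (hq ▸ hx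.a12)))
    by_cases hyy : G.Adj y1 y4
    case pos =>
      obtain ⟨r, hr, hra, hrb⟩ := K.third t h5 h0 hx.a50.ne ht5 ht0
      have nr1 : ¬ G.Adj r h1 := fun hp_117 => K.c4 r h1 h0 t hp_117 hx.a01.symm ht0.symm hr hrb (fun hq => nt2 (hq ▸ hx.a12))
      have nr4 : ¬ G.Adj r h4 := fun hp_118 => K.c4 r h4 h5 t hp_118 hx.a45 ht5.symm hr hra (Ne.symm (fun hq => (fun hs => hx.n04 hs.symm) (hq ▸ ht0)))
      have nr0 : ¬ G.Adj r h0 := fun hp_119 => K.c4 r h0 h5 t hp_119 hx.a50.symm ht5.symm hr hra ht0.ne'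
      have nr5 : ¬ G.Adj r h5 := fun hp_120 => K.c4 r h5 h0 t hp_120 hx.a50 ht0.symm hr hrb ht5.ne'
      have nr2 : ¬ G.Adj r h2 := fun hp_121 => K.h5 r h2 h1 h0 t hp_121 hx.a12.symm hx.a01.symm ht0.symm hr nr1 nr0 (fun hs => hx.n02 hs.symm) (fun hs => nt2 hs.symm) (fun hs => nt1 hs.symm) (Ne.symm (fun hq => nr0 (hq ▸ hx.a01.symm))) hrb (Ne.symm hx.d02) (Ne.symm (fun hq => (fun hs => hx.n02 hs.symm) (hq ▸ ht0))) (fun hq => nt2 (hq ▸ hx.a12))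
      have nr3 : ¬ G.Adj r h3 := fun hp_122 => K.h5 r h3 h4 h5 t hp_122 hx.a34 hx.a45 ht5.symm hr nr4 nr5 hx.n35 (fun hs => nt3 hs.symm) (fun hs => nt4 hs.symm) (Ne.symm (fun hq => nr5 (hq ▸ hx.a45))) hra hx.d35 (Ne.symm (fun hq => (fun hs => hx.n03 hs.symm) (hq ▸ ht0))) (Ne.symm (fun hq => (fun hs => hx.n04 hs.symm) (hq ▸ ht0)))
      have nry1 : ¬ G.Adj r y1 := fun hp_123 => K.h5 r y1 h1 h0 t hp_123 hy1.symm hx.a01.symm ht0.symm hr nr1 nr0 ny1x0 (fun hs => nTY1 hs.symm) (fun hs => nt1 hs.symm) (Ne.symm (fun hq => nr0 (hq ▸ hx.a01.symm))) hrb hy1a (Ne.symm (fun hq => ny1x0 (hq ▸ ht0))) (fun hq => nt2 (hq ▸ hx.a12))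
      have nry4 : ¬ G.Adj r y4 := fun hp_124 => K.h5 r y4 h4 h5 t hp_124 hy4.symm hx.a45 ht5.symm hr nr4 nr5 ny4x5 (fun hs => nTY4 hs.symm) (fun hs => nt4 hs.symm) (Ne.symm (fun hq => nr3 (hq ▸ hx.a34.symm))) hra hy4b (Ne.symm (fun hq => ny4x0 (hq ▸ ht0))) (Ne.symm (fun hq => (fun hs => hx.n04 hs.symm) (hq ▸ ht0)))
      have nrb : ¬ G.Adj r b := fun hp_125 => K.c8 r b y2 h2 h3 h4 h5 t hp_125 hb.symm hy2.symm hx.a23 hx.a34 hx.a45 ht5.symm hr (Ne.symm (fun hq => nr2 (hq ▸ hy2.symm))) (Ne.symm (fun hq => nr1 (hq ▸ hx.a12.symm))) (Ne.symm (fun hq => nr2 (hq ▸ hx.a23.symm))) (Ne.symm (fun hq => nr3 (hq ▸ hx.a34.symm))) hra hbne (Ne.symm (fun hq => nb2 (hq ▸ hx.a23.symm))) (Ne.symm (fun hq => ex_95 (hq ▸ hx.a34.symm))) (Ne.symm (fun hq => ex_96 (hq ▸ hx.a50))) (Ne.symm (fun hq => ex_96 (hq ▸ ht0))) hy2b (fun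 hq => (fun hs => hx.n24 hs.symm) (hq ▸ hy2.symm)) (Ne.symm (fun hq => ny2x0 (hq ▸ hx.a50))) (Ne.symm (fun hq => ny2x0 (hq ▸ ht0))) hx.d24 hx.d25 (Ne.symm (fun hq => (fun hs => hx.n02 hs.symm) (hq ▸ ht0))) hx.d35 (Ne.symm (fun hq => (fun hs => hx.n03 hs.symm) (hq ▸ ht0))) (Ne.symm (fun hq => (fun hs => hx.n04 hs.symm) (hq ▸ ht0)))
      by_cases hry2 : G.Adj r y2
      case pos =>
        have nry3 : ¬ G.Adj r y3 := fun hp_126 => K.h5 r y2 h2 h3 y3 hry2 hy2.symm hx.a23 hy3 hp_126.symm nr2 nr3 ny2x3 nY23 (fun hs => ny3x2 hs.symm) (Ne.symm (fun hq => nr1 (hq ▸ hx.a12.symm))) (Ne.symm (fun hq => nr2 (hq ▸ hx.a23.symm))) hy2b (fun hq => ny3x2 (hq ▸ hy2.symm)) (Ne.symm hy3a)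
        have selB3 : ∃ b, G.Adj y3 b ∧ b ≠ h3 ∧ ¬G.Adj b h3 ∧ ¬G.Adj b h0 := by
          obtain ⟨w1, w2, tw_127ww, tw_1271n, tw_1272n, tw_1271, tw_1272⟩ := K.two y3 h3 hy3.symm
          obtain ⟨ex_128, ex_129, ex_130, ex_131⟩ := ey3 w1 tw_1271 tw_1271n
          obtain ⟨ex_132, ex_133, ex_134, ex_135⟩ := ey3 w2 tw_1272 tw_1272n
          by_cases hc_136 : G.Adj w1 h3
          case pos =>
            by_cases hc_137 : G.Adj w2 h3
            case pos =>
              exact (K.c4 w1 y3 w2 h3 tw_1271.symm tw_1272 hc_137 hc_136.symm tw_127ww hy3.ne').elim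
            case neg =>
              by_cases hc_138 : G.Adj w2 h0
              case pos =>
                exact (L3d3 K ⟨hy3.symm, hx.a34, hx.a45, hx.a50, hc_138.symm, tw_1272.symm, ny3x4, ny3x5, ny3x0, hx.n35, (fun hs => hx.n03 hs.symm), (fun hs => hc_137 hs.symm), (fun hs => hx.n04 hs.symm), (fun hs => ex_133 hs.symm), (fun hs => ex_135 hs.symm), hy3b, (Ne.symm (fun hq => ny3x0 (hq ▸ hx.a50))), (Ne.symm (fun hq => ny3x1 (hq ▸ hx.a01))), hx.d35, (Ne.symm hx.d03), (Ne.symm tw_1272n), (Ne.symm hx.d04), (Ne.symm (fun hq => (fun hs => hx.n04 hs.symm) (hq ▸ hc_138))), (fun hq => ex_133 (hq ▸ hx.a45.symm))⟩ w1 t tw_1271.symm hc_136 ht5 ht0).elim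
              case neg =>
                exact ⟨w2, tw_1272, tw_1272n, hc_137, hc_138⟩
          case neg =>
            by_cases hc_139 : G.Adj w1 h0
            case pos =>
              by_cases hc_140 : G.Adj w2 h3
              case pos =>
                exact (L3d3 K ⟨hy3.symm, hx.a34, hx.a45, hx.a50, hc_139.symm, tw_1271.symm, ny3x4, ny3x5, ny3x0, hx.n35, (fun hs => hx.n03 hs.symm), (fun hs => hc_136 hs.symm), (fun hs => hx.n04 hs.symm), (fun hs => ex_129 hs.symm), (fun hs => ex_131 hs.symm), hy3b, (Ne.symm (fun hq => ny3x0 (hq ▸ hx.a50))), (Ne.symm (fun hq => ny3x1 (hq ▸ hx.a01))), hx.d35, (Ne.symm hx.d03), (Ne.symm tw_1271n), (Ne.symm hx.d04), (Ne.symm (fun hq => (fun hs => hx.n04 hs.symm) (hq ▸ hc_139))), (fun hq => ex_129 (hq ▸ hx.a45.symm))⟩ w2 t tw_1272.symm hc_140 ht5 ht0).elim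
              case neg =>
                by_cases hc_141 : G.Adj w2 h0
                case pos =>
                  exact (K.c4 w1 h0 w2 y3 hc_139 hc_141.symm tw_1272.symm tw_1271 tw_127ww (fun hq => ny3x1 (hq ▸ hx.a01))).elim
                case neg =>
                  exact ⟨w2, tw_1272, tw_1272n, hc_140, hc_141⟩
            case neg =>
              exact ⟨w1, tw_1271, tw_1271n, hc_136, hc_139⟩
        obtain ⟨b2, hb2, hb2ne, nb23, nb20⟩ := selB3
        obtain ⟨ex_142, ex_143, ex_144, ex_145⟩ := ey3 b2 hb2 hb2ne
        have nB2Y4 : ¬ G.Adj b2 y4 := fun hp_146 => K.h5 b2 y4 h4 h3 y3 hp_146 hy4.symm hx.a34.symm hy3 hb2 ex_143 nb23 ny4x3 (fun hs => nY34 hs.symm) (fun hs => ny3x4 hs.symm) (Ne.symm (fun hq => nb23 (hq ▸ hx.a34.symm))) hb2ne hy4a (Ne.symm (fun hq => ny4x3 (hq ▸ hy3.symm))) (Ne.symm hy3b)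
        have nB2Y1 : ¬ G.Adj b2 y1 := fun hp_147 => K.c8 b2 y1 h1 h0 h5 h4 h3 y3 hp_147 hy1.symm hx.a01.symm hx.a50.symm hx.a45.symm hx.a34.symm hy3 hb2 (Ne.symm (fun hq => nb20 (hq ▸ hx.a01.symm))) (Ne.symm (fun hq => ex_144 (hq ▸ hx.a01))) (Ne.symm (fun hq => nb20 (hq ▸ hx.a50))) (Ne.symm (fun hq => nb23 (hq ▸ hx.a34.symm))) hb2ne hy1a (Ne.symm (fun hq => ny1x0 (hq ▸ hx.a50))) (fun hq => (fun hs => hx.n14 hs.symm) (hq ▸ hy1.symm)) (fun hq => (fun hs => hx.n13 hs.symm) (hq ▸ hy1.symm)) (fun hq => ny3x1 (hq ▸ hy1.symm)) hx.d15 hx.d14 hx.d13 (fun hq => ny3x0 (hq ▸ hx.a01.symm)) hx.d04 hx.d03 (fun hq => ny3x1 (hq ▸ hx.a01)) (Ne.symm hx.d35) (fun hq => ny3x0 (hq ▸ hx.a50)) (Ne.symm hy3b)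
        have nB2T : ¬ G.Adj b2 t := fun hp_148 => K.c8 t b2 y3 h3 h2 h1 h0 h5 hp_148.symm hb2.symm hy3.symm hx.a23.symm hx.a12.symm hx.a01.symm hx.a50.symm ht5.symm (fun hq => ny3x0 (hq ▸ ht0)) (fun hq => (fun hs => hx.n03 hs.symm) (hq ▸ ht0)) (fun hq => (fun hs => hx.n02 hs.symm) (hq ▸ ht0)) (Ne.symm (fun hq => nt2 (hq ▸ hx.a12))) ht0.ne hb2ne (Ne.symm (fun hq => ex_144 (hq ▸ hx.a12.symm))) (Ne.symm (fun hq => nb20 (hq ▸ hx.a01.symm))) (Ne.symm (fun hq => ex_144 (hq ▸ hx.a01))) (Ne.symm (fun hq => nb20 (hq ▸ hx.a50))) hy3a (Ne.symm (fun hq => ny3x0 (hq ▸ hx.a01.symm))) (Ne.symm (fun hq => ny3x1 (hq ▸ hx.a01))) (Ne.symm (fun hq => ny3x0 (hq ▸ hx.a50))) (Ne.symm hx.d13) (Ne.symm hx.d03) hx.d35 (Ne.symm hx.d02) hx.d25 hx.d15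
        have nB2R : ¬ G.Adj b2 r := fun hp_149 => K.c8 r b2 y3 h3 h2 h1 h0 t hp_149.symm hb2.symm hy3.symm hx.a23.symm hx.a12.symm hx.a01.symm ht0.symm hr (Ne.symm (fun hq => nr3 (hq ▸ hy3.symm))) (Ne.symm (fun hq => nr2 (hq ▸ hx.a23.symm))) (Ne.symm (fun hq => nr1 (hq ▸ hx.a12.symm))) (Ne.symm (fun hq => nr0 (hq ▸ hx.a01.symm))) hrb hb2ne (Ne.symm (fun hq => ex_144 (hq ▸ hx.a12.symm))) (Ne.symm (fun hq => nb20 (hq ▸ hx.a01.symm))) (Ne.symm (fun hq => ex_144 (hq ▸ hx.a01))) (Ne.symm (fun hq => nb20 (hq ▸ ht0))) hy3a (Ne.symm (fun hq => ny3x0 (hq ▸ hx.a01.symm))) (Ne.symm (fun hq => ny3x1 (hq ▸ hx.a01))) (Ne.symm (fun hq => ny3x0 (hq ▸ ht0))) (Ne.symm hx.d13) (Ne.symm hx.d03) (Ne.symm (fun hq => (fun hs => hx.n03 hs.symm) (hq ▸ ht0))) (Ne.symm hx.d02) (Ne.symm (fun hq => (fun hs => hx.n02 hs.symm) (hq ▸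 ht0))) (fun hq => nt2 (hq ▸ hx.a12))
        exact K.p10 b2 y3 h3 h4 y4 y1 h1 h0 t r hb2.symm hy3.symm hx.a34 hy4 hyy.symm hy1.symm hx.a01.symm ht0.symm hr nb23 ex_143 nB2Y4 nB2Y1 ex_144 nb20 nB2T nB2R ny3x4 nY34 (fun hs => nY13 hs.symm) ny3x1 ny3x0 (fun hs => nTY3 hs.symm) (fun hs => nry3 hs.symm) (fun hs => ny4x3 hs.symm) (fun hs => ny1x3 hs.symm) (fun hs => hx.n13 hs.symm) (fun hs => hx.n03 hs.symm) (fun hs => nt3 hs.symm) (fun hs => nr3 hs.symm) (fun hs => ny1x4 hs.symm) (fun hs => hx.n14 hs.symm) (fun hs => hx.n04 hs.symm) (fun hs => nt4 hs.symm) (fun hs => nr4 hs.symm) ny4x1 ny4x0 (fun hs => nTY4 hs.symm) (fun hs => nry4 hs.symm) ny1x0 (fun hs => nTY1 hs.symm) (fun hs => nry1 hs.symm) (fun hs => nt1 hs.symm) (fun hs => nr1 hs.symm) (fun hs => nr0 hs.symm) hb2ne (Ne.symm (fun hq => nb23 (hq ▸ hx.a34.symm))) (Ne.symm (fun hq =>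 ex_143 (hq ▸ hy4.symm))) (Ne.symm (fun hq => ex_144 (hq ▸ hy1.symm))) (Ne.symm (fun hq => nb20 (hq ▸ hx.a01.symm))) (Ne.symm (fun hq => ex_144 (hq ▸ hx.a01))) (Ne.symm (fun hq => nb20 (hq ▸ ht0))) (Ne.symm (fun hq => nB2T (hq ▸ hr.symm))) hy3b (fun hq => ny4x3 (hq ▸ hy3.symm)) (Ne.symm (fun hq => ny3x1 (hq ▸ hy1.symm))) (Ne.symm (fun hq => ny3x0 (hq ▸ hx.a01.symm))) (Ne.symm (fun hq => ny3x1 (hq ▸ hx.a01))) (Ne.symm (fun hq => ny3x0 (hq ▸ ht0))) (fun hq => nr3 (hq ▸ hy3.symm)) (Ne.symm hy4a) (Ne.symm (fun hq => (fun hs => hx.n13 hs.symm) (hq ▸ hy1.symm))) (Ne.symm hx.d13) (Ne.symm hx.d03) (Ne.symm (fun hq => (fun hs => hx.n03 hs.symm) (hq ▸ ht0))) (fun hq => nr2 (hq ▸ hx.a23.symm)) (Ne.symm (fun hq => (fun hs => hx.n14 hs.symm) (hq ▸ hy1.symm))) (Ne.symm hx.d14) (Ne.symm hx.d04) (Ne.symm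 (fun hq => (fun hs => hx.n04 hs.symm) (hq ▸ ht0))) (fun hq => nr3 (hq ▸ hx.a34.symm)) (Ne.symm (fun hq => ny4x0 (hq ▸ hx.a01.symm))) (Ne.symm (fun hq => ny4x1 (hq ▸ hx.a01))) (Ne.symm (fun hq => ny4x0 (hq ▸ ht0))) (fun hq => nr4 (hq ▸ hy4.symm)) hy1a (Ne.symm (fun hq => ny1x0 (hq ▸ ht0))) (fun hq => nr1 (hq ▸ hy1.symm)) (fun hq => nt2 (hq ▸ hx.a12)) (fun hq => nr0 (hq ▸ hx.a01.symm)) (Ne.symm hrb)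
      case neg =>
        exact K.p10 b y2 h2 h1 y1 y4 h4 h5 t r hb.symm hy2.symm hx.a12.symm hy1 hyy hy4.symm hx.a45 ht5.symm hr nb2 ex_94 nBY1 nBY4 ex_97 nb5 nBT (fun hs => nrb hs.symm) ny2x1 (fun hs => nY12 hs.symm) nY24 ny2x4 ny2x5 (fun hs => nTY2 hs.symm) (fun hs => hry2 hs.symm) (fun hs => ny1x2 hs.symm) (fun hs => ny4x2 hs.symm) hx.n24 hx.n25 (fun hs => nt2 hs.symm) (fun hs => nr2 hs.symm) (fun hs => ny4x1 hs.symm) hx.n14 hx.n15 (fun hs => nt1 hs.symm) (fun hs => nr1 hs.symm) ny1x4 ny1x5 (fun hs => nTY1 hs.symm) (fun hs => nry1 hs.symm) ny4x5 (fun hs => nTY4 hs.symm) (fun hs => nry4 hs.symm) (fun hs => nt4 hs.symm) (fun hs => nr4 hs.symm) (fun hs => nr5 hs.symm) hbne (Ne.symm (fun hq => ex_96 (hq ▸ hx.a01.symm))) (Ne.symm (fun hq => ex_94 (hq ▸ hy1.symm))) (Ne.symm (fun hq => ex_97 (hq ▸ hy4.symm))) (Ne.symm (fun hq => ex_95 (hq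 ▸ hx.a34.symm))) (Ne.symm (fun hq => ex_96 (hq ▸ hx.a50))) (Ne.symm (fun hq => ex_96 (hq ▸ ht0))) (Ne.symm (fun hq => nBT (hq ▸ hr.symm))) hy2a (Ne.symm (fun hq => ny2x1 (hq ▸ hy1.symm))) (fun hq => ny4x2 (hq ▸ hy2.symm)) (fun hq => (fun hs => hx.n24 hs.symm) (hq ▸ hy2.symm)) (Ne.symm (fun hq => ny2x0 (hq ▸ hx.a50))) (Ne.symm (fun hq => ny2x0 (hq ▸ ht0))) (fun hq => nr2 (hq ▸ hy2.symm)) (Ne.symm hy1b) (fun hq => ny4x1 (hq ▸ hx.a12.symm)) hx.d24 hx.d25 (Ne.symm (fun hq => (fun hs => hx.n02 hs.symm) (hq ▸ ht0))) (fun hq => nr1 (hq ▸ hx.a12.symm)) (fun hq => ny4x0 (hq ▸ hx.a01.symm)) hx.d14 hx.d15 (fun hq => nt2 (hq ▸ hx.a12)) (fun hq => nr0 (hq ▸ hx.a01.symm)) (fun hq => (fun hs => hx.n14 hs.symm) (hq ▸ hy1.symm)) (Ne.symm (fun hq => ny1x0 (hq ▸ hx.a50))) (Ne.symm (fun hq =>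 ny1x0 (hq ▸ ht0))) (fun hq => nr1 (hq ▸ hy1.symm)) hy4b (Ne.symm (fun hq => ny4x0 (hq ▸ ht0))) (fun hq => nr4 (hq ▸ hy4.symm)) (Ne.symm (fun hq => (fun hs => hx.n04 hs.symm) (hq ▸ ht0))) (fun hq => nr3 (hq ▸ hx.a34.symm)) (Ne.symm hra)
    case neg =>
      exact K.p10 y1 h1 h2 y2 b cp y4 h4 h5 t hy1.symm hx.a12 hy2 hb hbcp hcp.symm hy4.symm hx.a45 ht5.symm ny1x2 nY12 (fun hs => nBY1 hs.symm) (fun hs => nCPY1_115 hs.symm) hyy ny1x4 ny1x5 (fun hs => nTY1 hs.symm) (fun hs => ny2x1 hs.symm) (fun hs => ex_94 hs.symm) (fun hs => ncp1 hs.symm) (fun hs => ny4x1 hs.symm) hx.n14 hx.n15 (fun hs => nt1 hs.symm) (fun hs => nb2 hs.symm) (fun hs => ex_109 hs.symm) (fun hs => ny4x2 hs.symm) hx.n24 hx.n25 (fun hs => nt2 hs.symm) (fun hs => nCPY2_111 hs.symm) nY24 ny2x4 ny2x5 (fun hs => nTY2 hs.symm) nBY4 ex_97 nb5 nBT ncp4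 ex_108 nCPT_113 ny4x5 (fun hs => nTY4 hs.symm) (fun hs => nt4 hs.symm) hy1b (fun hq => ny2x1 (hq ▸ hy1.symm)) (fun hq => ex_94 (hq ▸ hy1.symm)) (fun hq => ncp1 (hq ▸ hy1.symm)) (fun hq => ny4x1 (hq ▸ hy1.symm)) (fun hq => (fun hs => hx.n14 hs.symm) (hq ▸ hy1.symm)) (Ne.symm (fun hq => ny1x0 (hq ▸ hx.a50))) (Ne.symm (fun hq => ny1x0 (hq ▸ ht0))) (Ne.symm hy2a) (fun hq => ex_96 (hq ▸ hx.a01.symm)) (fun hq => ex_110 (hq ▸ hx.a01.symm)) (fun hq => ny4x0 (hq ▸ hx.a01.symm)) hx.d14 hx.d15 (fun hq => nt2 (hq ▸ hx.a12)) (Ne.symm hbne) (fun hq => ncp1 (hq ▸ hx.a12.symm)) (fun hq => ny4x1 (hq ▸ hx.a12.symm)) hx.d24 hx.d25 (Ne.symm (fun hq => (fun hs => hx.n02 hs.symm) (hq ▸ ht0))) (fun hq => ex_109 (hq ▸ hy2.symm)) (fun hq => ny4x2 (hq ▸ hy2.symm)) (fun hq => (fun hs => hx.n24 hs.symm) (hq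 ▸ hy2.symm)) (Ne.symm (fun hq => ny2x0 (hq ▸ hx.a50))) (Ne.symm (fun hq => ny2x0 (hq ▸ ht0))) (Ne.symm (fun hq => ex_97 (hq ▸ hy4.symm))) (Ne.symm (fun hq => ex_95 (hq ▸ hx.a34.symm))) (Ne.symm (fun hq => ex_96 (hq ▸ hx.a50))) (Ne.symm (fun hq => ex_96 (hq ▸ ht0))) hcpne (Ne.symm (fun hq => ex_110 (hq ▸ hx.a50))) (Ne.symm (fun hq => ex_110 (hq ▸ ht0))) hy4b (Ne.symm (fun hq => ny4x0 (hq ▸ ht0))) (Ne.symm (fun hq => (fun hs => hx.n04 hs.symm) (hq ▸ ht0)))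
  -- main case split
  by_cases hc_bc : G.Adj b c
  case pos =>
    exact oneB c hc hcne nc4 nc1 hc_bc
  case neg =>
    have ca : ∀ a, G.Adj b a → a ≠ y2 → ¬G.Adj a h2 ∧ ¬G.Adj a h1 ∧ ¬G.Adj a h3 ∧ ¬G.Adj a h0 ∧ ¬G.Adj a h4 ∧ ¬G.Adj a h5 ∧ ¬G.Adj a c ∧ ¬G.Adj a y4 := by
      intro a ha hane
      have nn_150 : ¬ G.Adj a h2 := fun hp_151 => K.c4 a h2 y2 b hp_151 hy2 hb ha hane (Ne.symm hbne)
      have nn_152 : ¬ G.Adj a h1 := by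
        intro hp_153
        by_cases hc_154 : G.Adj a y2
        case pos =>
          exact K.c4 a h1 h2 y2 hp_153 hx.a12 hy2 hc_154.symm (fun hq => (fun hs => nb2 hs.symm) (hq ▸ ha.symm)) (Ne.symm hy2a)
        case neg =>
          exact K.h5 a h1 h2 y2 b hp_153 hx.a12 hy2 hb ha nn_150 hc_154 (fun hs => ny2x1 hs.symm) (fun hs => ex_94 hs.symm) (fun hs => nb2 hs.symm) (Ne.symm (fun hq => hc_154 (hq ▸ hy2))) hane (Ne.symm hy2a) (fun hq => ex_96 (hq ▸ hx.a01.symm)) (Ne.symm hbne)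
      have nn_155 : ¬ G.Adj a h3 := by
        intro hp_156
        by_cases hc_157 : G.Adj a y2
        case pos =>
          exact K.c4 a h3 h2 y2 hp_156 hx.a23.symm hy2 hc_157.symm (Ne.symm (fun hq => nn_152 (hq ▸ hx.a12.symm))) (Ne.symm hy2b)
        case neg =>
          exact K.h5 a h3 h2 y2 b hp_156 hx.a23.symm hy2 hb ha nn_150 hc_157 (fun hs => ny2x3 hs.symm) (fun hs => ex_95 hs.symm) (fun hs => nb2 hs.symm) (Ne.symm (fun hq => nn_152 (hq ▸ hx.a12.symm))) hane (Ne.symm hy2b) (fun hq => nb2 (hq ▸ hx.a23.symm)) (Ne.symm hbne)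
      have nn_158 : ¬ G.Adj a h0 := fun hp_159 => K.c8 a h0 h5 h4 h3 h2 y2 b hp_159 hx.a50.symm hx.a45.symm hx.a34.symm hx.a23.symm hy2 hb ha (fun hq => (fun hs => nb5 hs.symm) (hq ▸ ha.symm)) (fun hq => (fun hs => hx.n04 hs.symm) (hq ▸ hp_159)) (fun hq => (fun hs => hx.n03 hs.symm) (hq ▸ hp_159)) (fun hq => (fun hs => hx.n02 hs.symm) (hq ▸ hp_159)) hane hx.d04 hx.d03 hx.d02 (fun hq => ny2x1 (hq ▸ hx.a01)) (fun hq => ex_94 (hq ▸ hx.a01)) (Ne.symm hx.d35) (Ne.symm hx.d25) (fun hq => ny2x0 (hq ▸ hx.a50)) (fun hq => ex_96 (hq ▸ hx.a50)) (Ne.symm hx.d24) (Ne.symm (fun hq => (fun hs => hx.n24 hs.symm) (hq ▸ hy2.symm))) (fun hq => ex_95 (hq ▸ hx.a34.symm)) (Ne.symm hy2b) (fun hq => nb2 (hq ▸ hx.a23.symm)) (Ne.symm hbne)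
      have nn_160 : ¬ G.Adj a h4 := fun hp_161 => K.c8 a h4 h5 h0 h1 h2 y2 b hp_161 hx.a45 hx.a50 hx.a01 hx.a12 hy2 hb ha (Ne.symm (fun hq => nn_158 (hq ▸ hx.a50))) (Ne.symm (fun hq => nn_152 (hq ▸ hx.a01))) (Ne.symm (fun hq => nn_158 (hq ▸ hx.a01.symm))) (Ne.symm (fun hq => nn_152 (hq ▸ hx.a12.symm))) hane (Ne.symm hx.d04) (Ne.symm hx.d14) (Ne.symm hx.d24) (Ne.symm (fun hq => (fun hs => hx.n24 hs.symm) (hq ▸ hy2.symm))) (fun hq => ex_95 (hq ▸ hx.a34.symm)) (Ne.symm hx.d15) (Ne.symm hx.d25) (fun hq => ny2x0 (hq ▸ hx.a50)) (fun hq => ex_96 (hq ▸ hx.a50)) hx.d02 (fun hq => ny2x1 (hq ▸ hx.a01)) (fun hq => ex_94 (hq ▸ hx.a01)) (Ne.symm hy2a) (fun hq => ex_96 (hq ▸ hx.a01.symm)) (Ne.symm hbne)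
      have nn_162 : ¬ G.Adj a h5 := fun hp_163 => K.c8 b y2 h2 h1 h0 t h5 a hb.symm hy2.symm hx.a12.symm hx.a01.symm ht0.symm ht5 hp_163.symm ha.symm hbne (Ne.symm (fun hq => ex_96 (hq ▸ hx.a01.symm))) (Ne.symm (fun hq => ex_94 (hq ▸ hx.a01))) (Ne.symm (fun hq => ex_96 (hq ▸ ht0))) (Ne.symm (fun hq => ex_96 (hq ▸ hx.a50))) hy2a (Ne.symm (fun hq => ny2x1 (hq ▸ hx.a01))) (Ne.symm (fun hq => ny2x0 (hq ▸ ht0))) (Ne.symm (fun hq => ny2x0 (hq ▸ hx.a50))) (Ne.symm hane) (Ne.symm hx.d02) (Ne.symm (fun hq => (fun hs => hx.n02 hs.symm) (hq ▸ ht0))) hx.d25 (fun hq => nn_152 (hq ▸ hx.a12.symm)) (fun hq => nt2 (hq ▸ hx.a12)) hx.d15 (fun hq => nn_158 (hq ▸ hx.a01.symm)) hx.a50.ne' (fun hq => nn_152 (hq ▸ hx.a01)) (fun hq => nn_158 (hq ▸ ht0))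
      have nn_164 : ¬ G.Adj a c := fun hp_165 => K.c8 a c y4 h4 h3 h2 y2 b hp_165 hc.symm hy4.symm hx.a34.symm hx.a23.symm hy2 hb ha (Ne.symm (fun hq => nn_160 (hq ▸ hy4.symm))) (Ne.symm (fun hq => nn_155 (hq ▸ hx.a34.symm))) (Ne.symm (fun hq => nn_150 (hq ▸ hx.a23.symm))) (Ne.symm (fun hq => nn_152 (hq ▸ hx.a12.symm))) hane hcne (Ne.symm (fun hq => ex_104 (hq ▸ hx.a23.symm))) (Ne.symm (fun hq => nc1 (hq ▸ hx.a12.symm))) (Ne.symm (fun hq => ex_104 (hq ▸ hy2.symm))) (Ne.symm (fun hq => nCY2 (hq ▸ hb.symm))) hy4a (Ne.symm (fun hq => ny4x1 (hq ▸ hx.a12.symm))) (Ne.symm (fun hq => ny4x2 (hq ▸ hy2.symm))) (fun hq => ex_97 (hq ▸ hy4.symm)) (Ne.symm hx.d24) (Ne.symm (fun hq => (fun hs => hx.n24 hs.symm) (hq ▸ hy2.symm))) (fun hq => ex_95 (hq ▸ hx.a34.symm)) (Ne.symm hy2b) (fun hq => nb2 (hq ▸ hx.a23.symm)) (Ne.symm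 hbne)
      have nn_166 : ¬ G.Adj a y4 := fun hp_167 => oneB a hp_167.symm (Ne.symm (fun hq => nn_155 (hq ▸ hx.a34.symm))) nn_160 nn_152 ha
      exact ⟨nn_150, nn_152, nn_155, nn_158, nn_160, nn_162, nn_164, nn_166⟩
    obtain ⟨u1, u2, tw_168ww, tw_1681n, tw_1682n, tw_1681, tw_1682⟩ := K.two b y2 hb.symm
    obtain ⟨ca_169, ca_170, ca_171, ca_172, ca_173, ca_174, ca_175, ca_176⟩ := ca u1 tw_1681 tw_1681n
    obtain ⟨ca_177, ca_178, ca_179, ca_180, ca_181, ca_182, ca_183, ca_184⟩ := ca u2 tw_1682 tw_1682n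
    by_cases hc_185 : G.Adj u1 y2
    case pos =>
      by_cases hc_186 : G.Adj u2 y2
      case pos =>
        exact K.c4 u1 y2 u2 b hc_185 hc_186.symm tw_1682.symm tw_1681 tw_168ww hb.ne
      case neg =>
        exact K.p10 u2 b y2 h2 h1 h0 h5 h4 y4 c tw_1682.symm hb.symm hy2.symm hx.a12.symm hx.a01.symm hx.a50.symm hx.a45.symm hy4 hc hc_186 ca_177 ca_178 ca_180 ca_182 ca_181 ca_184 ca_183 nb2 ex_94 ex_96 nb5 ex_97 nBY4 hc_bc ny2x1 ny2x0 ny2x5 ny2x4 nY24 (fun hs => nCY2 hs.symm) (fun hs => hx.n02 hs.symm) hx.n25 hx.n24 (fun hs => ny4x2 hs.symm) (fun hs => ex_104 hs.symm) hx.n15 hx.n14 (fun hs => ny4x1 hs.symm) (fun hs => nc1 hs.symm) hx.n04 (fun hs => ny4x0 hs.symm) (fun hs => ex_105 hs.symm) (fun hs => ny4x5 hs.symm) (fun hs => ex_103 hs.symm) (fun hs => nc4 hs.symm) tw_1682n (Ne.symm (fun hq => ca_178 (hq ▸ hx.a12.symm))) (Ne.symm (fun hq => ca_180 (hq ▸ hx.a01.symm)))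 (Ne.symm (fun hq => ca_178 (hq ▸ hx.a01))) (Ne.symm (fun hq => ca_180 (hq ▸ hx.a50))) (Ne.symm (fun hq => ca_179 (hq ▸ hx.a34.symm))) (Ne.symm (fun hq => ca_181 (hq ▸ hy4.symm))) (Ne.symm (fun hq => ca_184 (hq ▸ hc.symm))) hbne (Ne.symm (fun hq => ex_96 (hq ▸ hx.a01.symm))) (Ne.symm (fun hq => ex_94 (hq ▸ hx.a01))) (Ne.symm (fun hq => ex_96 (hq ▸ hx.a50))) (Ne.symm (fun hq => ex_95 (hq ▸ hx.a34.symm))) (Ne.symm (fun hq => ex_97 (hq ▸ hy4.symm))) (fun hq => nCY2 (hq ▸ hb.symm)) hy2a (Ne.symm (fun hq => ny2x1 (hq ▸ hx.a01))) (Ne.symm (fun hq => ny2x0 (hq ▸ hx.a50))) (fun hq => (fun hs => hx.n24 hs.symm) (hq ▸ hy2.symm)) (fun hq => ny4x2 (hq ▸ hy2.symm)) (fun hq => ex_104 (hq ▸ hy2.symm)) (Ne.symm hx.d02) hx.d25 hx.d24 (fun hq => ny4x1 (hq ▸ hx.a12.symm)) (fun hq => nc1 (hq ▸ hx.a12.symm))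 hx.d15 hx.d14 (fun hq => ny4x0 (hq ▸ hx.a01.symm)) (fun hq => ex_105 (hq ▸ hx.a01.symm)) hx.d04 (fun hq => ny4x1 (hq ▸ hx.a01)) (fun hq => nc1 (hq ▸ hx.a01)) (Ne.symm hy4b) (fun hq => ex_105 (hq ▸ hx.a50)) (Ne.symm hcne)
    case neg =>
      exact K.p10 u1 b y2 h2 h1 h0 h5 h4 y4 c tw_1681.symm hb.symm hy2.symm hx.a12.symm hx.a01.symm hx.a50.symm hx.a45.symm hy4 hc hc_185 ca_169 ca_170 ca_172 ca_174 ca_173 ca_176 ca_175 nb2 ex_94 ex_96 nb5 ex_97 nBY4 hc_bc ny2x1 ny2x0 ny2x5 ny2x4 nY24 (fun hs => nCY2 hs.symm) (fun hs => hx.n02 hs.symm) hx.n25 hx.n24 (fun hs => ny4x2 hs.symm) (fun hs => ex_104 hs.symm) hx.n15 hx.n14 (fun hs => ny4x1 hs.symm) (fun hs => nc1 hs.symm) hx.n04 (fun hs => ny4x0 hs.symm) (fun hs => ex_105 hs.symm) (fun hs => ny4x5 hs.symm) (fun hs => ex_103 hs.symm) (fun hs => nc4 hs.symm) tw_1681n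 (Ne.symm (fun hq => ca_170 (hq ▸ hx.a12.symm))) (Ne.symm (fun hq => ca_172 (hq ▸ hx.a01.symm))) (Ne.symm (fun hq => ca_170 (hq ▸ hx.a01))) (Ne.symm (fun hq => ca_172 (hq ▸ hx.a50))) (Ne.symm (fun hq => ca_171 (hq ▸ hx.a34.symm))) (Ne.symm (fun hq => ca_173 (hq ▸ hy4.symm))) (Ne.symm (fun hq => ca_176 (hq ▸ hc.symm))) hbne (Ne.symm (fun hq => ex_96 (hq ▸ hx.a01.symm))) (Ne.symm (fun hq => ex_94 (hq ▸ hx.a01))) (Ne.symm (fun hq => ex_96 (hq ▸ hx.a50))) (Ne.symm (fun hq => ex_95 (hq ▸ hx.a34.symm))) (Ne.symm (fun hq => ex_97 (hq ▸ hy4.symm))) (fun hq => nCY2 (hq ▸ hb.symm)) hy2a (Ne.symm (fun hq => ny2x1 (hq ▸ hx.a01))) (Ne.symm (fun hq => ny2x0 (hq ▸ hx.a50))) (fun hq => (fun hs => hx.n24 hs.symm) (hq ▸ hy2.symm)) (fun hq => ny4x2 (hq ▸ hy2.symm)) (fun hq => ex_104 (hq ▸ hy2.symm)) (Ne.symm hx.d02)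 hx.d25 hx.d24 (fun hq => ny4x1 (hq ▸ hx.a12.symm)) (fun hq => nc1 (hq ▸ hx.a12.symm)) hx.d15 hx.d14 (fun hq => ny4x0 (hq ▸ hx.a01.symm)) (fun hq => ex_105 (hq ▸ hx.a01.symm)) hx.d04 (fun hq => ny4x1 (hq ▸ hx.a01)) (fun hq => nc1 (hq ▸ hx.a01)) (Ne.symm hy4b) (fun hq => ex_105 (hq ▸ hx.a50)) (Ne.symm hcne)


lemma Mp (K : Ctx G) {h0 h1 h2 h3 h4 h5 : V} (hx : Hex G h0 h1 h2 h3 h4 h5)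
    (w : V) (hw0 : G.Adj w h0) (hw1 : G.Adj w h1) : False := by
  refine lemM K ⟨hx.a12, hx.a23, hx.a34, hx.a45, hx.a50, hx.a01, hx.n13, hx.n14, hx.n15, hx.n24, hx.n25, (fun hs => hx.n02 hs.symm), hx.n35, (fun hs => hx.n03 hs.symm), (fun hs => hx.n04 hs.symm), hx.d13, hx.d14, hx.d15, hx.d24, hx.d25, (Ne.symm hx.d02), hx.d35, (Ne.symm hx.d03), (Ne.symm hx.d04)⟩ w hw0 hw1 ?_ ?_ ?_ ?_ ?_
  · exact fun z hz1 hz2 => L3d1 K hx w z hw0 hw1 hz1 hz2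
  · exact fun z hz2 hz3 => L3d2 K hx w z hw0 hw1 hz2 hz3
  · exact fun z hz3 hz4 => L3d3 K hx w z hw0 hw1 hz3 hz4
  · exact fun z hz4 hz5 => L3d2 K ⟨hx.a45, hx.a50, hx.a01, hx.a12, hx.a23, hx.a34, (fun hs => hx.n04 hs.symm), (fun hs => hx.n14 hs.symm), (fun hs => hx.n24 hs.symm), (fun hs => hx.n15 hs.symm), (fun hs => hx.n25 hs.symm), (fun hs => hx.n35 hs.symm), hx.n02, hx.n03, hx.n13, (Ne.symm hx.d04), (Ne.symm hx.d14), (Ne.symm hx.d24), (Ne.symm hx.d15), (Ne.symm hx.d25), (Ne.symm hx.d35), hx.d02, hx.d03, hx.d13⟩ z w hz4 hz5 hw0 hw1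
  · exact fun z hz5 hz0 => L3d1 K ⟨hx.a50, hx.a01, hx.a12, hx.a23, hx.a34, hx.a45, (fun hs => hx.n15 hs.symm), (fun hs => hx.n25 hs.symm), (fun hs => hx.n35 hs.symm), hx.n02, hx.n03, hx.n04, hx.n13, hx.n14, hx.n24, (Ne.symm hx.d15), (Ne.symm hx.d25), (Ne.symm hx.d35), hx.d02, hx.d03, hx.d04, hx.d13, hx.d14, hx.d24⟩ z w hz5 hz0 hw0 hw1


set_option maxHeartbeats 8000000 in
lemma W0 (K : Ctx G) {h0 h1 h2 h3 h4 h5 : V} (hx : Hex G h0 h1 h2 h3 h4 h5)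
    (mp : ∀ a0 a1 a2 a3 a4 a5 w : V, Hex G a0 a1 a2 a3 a4 a5 → G.Adj w a0 → G.Adj w a1 → False) :
    False := by
  obtain ⟨y2, hy2, hy2a, hy2b⟩ := K.third h2 h1 h3 hx.d13 hx.a12.symm hx.a23
  have ny2x1 : ¬ G.Adj y2 h1 := fun hp_1 => mp h1 h2 h3 h4 h5 h0 y2 ⟨hx.a12, hx.a23, hx.a34, hx.a45, hx.a50, hx.a01, hx.n13, hx.n14, hx.n15, hx.n24, hx.n25, (fun hs => hx.n02 hs.symm), hx.n35, (fun hs => hx.n03 hs.symm), (fun hs => hx.n04 hs.symm), hx.d13, hx.d14, hx.d15, hx.d24, hx.d25, (Ne.symm hx.d02), hx.d35, (Ne.symm hx.d03), (Ne.symm hx.d04)⟩ hp_1 hy2.symm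
  have ny2x3 : ¬ G.Adj y2 h3 := fun hp_2 => mp h2 h3 h4 h5 h0 h1 y2 ⟨hx.a23, hx.a34, hx.a45, hx.a50, hx.a01, hx.a12, hx.n24, hx.n25, (fun hs => hx.n02 hs.symm), hx.n35, (fun hs => hx.n03 hs.symm), (fun hs => hx.n13 hs.symm), (fun hs => hx.n04 hs.symm), (fun hs => hx.n14 hs.symm), (fun hs => hx.n15 hs.symm), hx.d24, hx.d25, (Ne.symm hx.d02), hx.d35, (Ne.symm hx.d03), (Ne.symm hx.d13), (Ne.symm hx.d04), (Ne.symm hx.d14), (Ne.symm hx.d15)⟩ hy2.symm hp_2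
  have ny2x0 : ¬ G.Adj y2 h0 := fun hp_3 => K.c4 y2 h0 h1 h2 hp_3 hx.a01 hx.a12 hy2 hy2a hx.d02
  have ny2x4 : ¬ G.Adj y2 h4 := fun hp_4 => K.c4 y2 h4 h3 h2 hp_4 hx.a34.symm hx.a23.symm hy2 hy2b (Ne.symm hx.d24)
  have ny2x5 : ¬ G.Adj y2 h5 := fun hp_5 => K.h5 y2 h5 h4 h3 h2 hp_5 hx.a45.symm hx.a34.symm hx.a23.symm hy2 ny2x4 ny2x3 (fun hs => hx.n35 hs.symm) (fun hs => hx.n25 hs.symm) (fun hs => hx.n24 hs.symm) (fun hq => (fun hs => hx.n24 hs.symm) (hq ▸ hy2.symm)) hy2b (Ne.symm hx.d35) (Ne.symm hx.d25) (Ne.symm hx.d24)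
  obtain ⟨y4, hy4, hy4a, hy4b⟩ := K.third h4 h3 h5 hx.d35 hx.a34.symm hx.a45
  have ny4x3 : ¬ G.Adj y4 h3 := fun hp_6 => mp h3 h4 h5 h0 h1 h2 y4 ⟨hx.a34, hx.a45, hx.a50, hx.a01, hx.a12, hx.a23, hx.n35, (fun hs => hx.n03 hs.symm), (fun hs => hx.n13 hs.symm), (fun hs => hx.n04 hs.symm), (fun hs => hx.n14 hs.symm), (fun hs => hx.n24 hs.symm), (fun hs => hx.n15 hs.symm), (fun hs => hx.n25 hs.symm), hx.n02, hx.d35, (Ne.symm hx.d03), (Ne.symm hx.d13), (Ne.symm hx.d04), (Ne.symm hx.d14), (Ne.symm hx.d24), (Ne.symm hx.d15), (Ne.symm hx.d25), hx.d02⟩ hp_6 hy4.symm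
  have ny4x5 : ¬ G.Adj y4 h5 := fun hp_7 => mp h4 h5 h0 h1 h2 h3 y4 ⟨hx.a45, hx.a50, hx.a01, hx.a12, hx.a23, hx.a34, (fun hs => hx.n04 hs.symm), (fun hs => hx.n14 hs.symm), (fun hs => hx.n24 hs.symm), (fun hs => hx.n15 hs.symm), (fun hs => hx.n25 hs.symm), (fun hs => hx.n35 hs.symm), hx.n02, hx.n03, hx.n13, (Ne.symm hx.d04), (Ne.symm hx.d14), (Ne.symm hx.d24), (Ne.symm hx.d15), (Ne.symm hx.d25), (Ne.symm hx.d35), hx.d02, hx.d03, hx.d13⟩ hy4.symm hp_7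
  have ny4x2 : ¬ G.Adj y4 h2 := fun hp_8 => K.c4 y4 h2 h3 h4 hp_8 hx.a23 hx.a34 hy4 hy4a hx.d24
  have ny4x0 : ¬ G.Adj y4 h0 := fun hp_9 => K.c4 y4 h0 h5 h4 hp_9 hx.a50.symm hx.a45.symm hy4 hy4b hx.d04
  have ny4x1 : ¬ G.Adj y4 h1 := fun hp_10 => K.h5 y4 h1 h0 h5 h4 hp_10 hx.a01.symm hx.a50.symm hx.a45.symm hy4 ny4x0 ny4x5 hx.n15 hx.n14 hx.n04 (fun hq => hx.n04 (hq ▸ hy4.symm)) hy4b hx.d15 hx.d14 hx.d04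
  have nY24 : ¬ G.Adj y2 y4 := fun hp_11 => K.h5 y2 y4 h4 h3 h2 hp_11 hy4.symm hx.a34.symm hx.a23.symm hy2 ny2x4 ny2x3 ny4x3 ny4x2 (fun hs => hx.n24 hs.symm) (fun hq => (fun hs => hx.n24 hs.symm) (hq ▸ hy2.symm)) hy2b hy4a (Ne.symm (fun hq => ny4x1 (hq ▸ hx.a12.symm))) (Ne.symm hx.d24)
  have ey2 : ∀ w, G.Adj y2 w → w ≠ h2 → ¬G.Adj w h1 ∧ ¬G.Adj w h3 ∧ ¬G.Adj w h0 ∧ ¬G.Adj w h4 := by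
    intro w hw hwne
    have nn_12 : ¬ G.Adj w h1 := fun hp_13 => K.c4 w h1 h2 y2 hp_13 hx.a12 hy2 hw hwne (Ne.symm hy2a)
    have nn_14 : ¬ G.Adj w h3 := fun hp_15 => K.c4 w h3 h2 y2 hp_15 hx.a23.symm hy2 hw hwne (Ne.symm hy2b)
    have nn_16 : ¬ G.Adj w h0 := by
      intro hp_17
      have ii : ¬ G.Adj w h2 := fun hp_18 => K.c4 w h2 h1 h0 hp_18 hx.a12.symm hx.a01.symm hp_17.symm (fun hq => (fun hs => ny2x1 hs.symm) (hq ▸ hw.symm)) (Ne.symm hx.d02)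
      exact K.h5 w h0 h1 h2 y2 hp_17 hx.a01 hx.a12 hy2 hw nn_12 ii hx.n02 (fun hs => ny2x0 hs.symm) (fun hs => ny2x1 hs.symm) (Ne.symm (fun hq => ii (hq ▸ hx.a12))) hwne hx.d02 (fun hq => ny2x1 (hq ▸ hx.a01)) (Ne.symm hy2a)
    have nn_19 : ¬ G.Adj w h4 := by
      intro hp_20
      have ii : ¬ G.Adj w h2 := fun hp_21 => K.c4 w h2 h3 h4 hp_21 hx.a23 hx.a34 hp_20.symm (fun hq => (fun hs => ny2x3 hs.symm) (hq ▸ hw.symm)) hx.d24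
      exact K.h5 w h4 h3 h2 y2 hp_20 hx.a34.symm hx.a23.symm hy2 hw nn_14 ii (fun hs => hx.n24 hs.symm) (fun hs => ny2x4 hs.symm) (fun hs => ny2x3 hs.symm) (Ne.symm (fun hq => ii (hq ▸ hx.a23.symm))) hwne (Ne.symm hx.d24) (Ne.symm (fun hq => (fun hs => hx.n24 hs.symm) (hq ▸ hy2.symm))) (Ne.symm hy2b)
    exact ⟨nn_12, nn_14, nn_16, nn_19⟩
  have ey4 : ∀ w, G.Adj y4 w → w ≠ h4 → ¬G.Adj w h3 ∧ ¬G.Adj w h5 ∧ ¬G.Adj w h2 ∧ ¬G.Adj w h0 := by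
    intro w hw hwne
    have nn_22 : ¬ G.Adj w h3 := fun hp_23 => K.c4 w h3 h4 y4 hp_23 hx.a34 hy4 hw hwne (Ne.symm hy4a)
    have nn_24 : ¬ G.Adj w h5 := fun hp_25 => K.c4 w h5 h4 y4 hp_25 hx.a45.symm hy4 hw hwne (Ne.symm hy4b)
    have nn_26 : ¬ G.Adj w h2 := by
      intro hp_27
      have ii : ¬ G.Adj w h4 := fun hp_28 => K.c4 w h4 h3 h2 hp_28 hx.a34.symm hx.a23.symm hp_27.symm (fun hq => (fun hs => ny4x3 hs.symm) (hq ▸ hw.symm)) (Ne.symm hx.d24)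
      exact K.h5 w h2 h3 h4 y4 hp_27 hx.a23 hx.a34 hy4 hw nn_22 ii hx.n24 (fun hs => ny4x2 hs.symm) (fun hs => ny4x3 hs.symm) (Ne.symm (fun hq => ii (hq ▸ hx.a34))) hwne hx.d24 (fun hq => ny4x1 (hq ▸ hx.a12.symm)) (Ne.symm hy4a)
    have nn_29 : ¬ G.Adj w h0 := by
      intro hp_30
      have ii : ¬ G.Adj w h4 := fun hp_31 => K.c4 w h4 h5 h0 hp_31 hx.a45 hx.a50 hp_30.symm (fun hq => (fun hs => ny4x5 hs.symm) (hq ▸ hw.symm)) (Ne.symm hx.d04)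
      exact K.h5 w h0 h5 h4 y4 hp_30 hx.a50.symm hx.a45.symm hy4 hw nn_24 ii hx.n04 (fun hs => ny4x0 hs.symm) (fun hs => ny4x5 hs.symm) (Ne.symm (fun hq => ii (hq ▸ hx.a45.symm))) hwne hx.d04 (fun hq => ny4x1 (hq ▸ hx.a01)) (Ne.symm hy4b)
    exact ⟨nn_22, nn_24, nn_26, nn_29⟩
  have selB : ∃ b, G.Adj y2 b ∧ b ≠ h2 ∧ ¬G.Adj b h2 ∧ ¬G.Adj b h5 := by
    obtain ⟨w1, w2, tw_32ww, tw_321n, tw_322n, tw_321, tw_322⟩ := K.two y2 h2 hy2.symm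
    obtain ⟨ex_33, ex_34, ex_35, ex_36⟩ := ey2 w1 tw_321 tw_321n
    obtain ⟨ex_37, ex_38, ex_39, ex_40⟩ := ey2 w2 tw_322 tw_322n
    by_cases hc_41 : G.Adj w1 h2
    case pos =>
      by_cases hc_42 : G.Adj w2 h2
      case pos =>
        exact (K.c4 w1 y2 w2 h2 tw_321.symm tw_322 hc_42 hc_41.symm tw_32ww hy2.ne').elim
      case neg =>
        by_cases hc_43 : G.Adj w2 h5
        case pos =>
          exact (mp y2 h2 h1 h0 h5 w2 w1 ⟨hy2.symm, hx.a12.symm, hx.a01.symm, hx.a50.symm, hc_43.symm, tw_322.symm, ny2x1, ny2x0, ny2x5, (fun hs => hx.n02 hs.symm), hx.n25, (fun hs => hc_42 hs.symm), hx.n15, (fun hs => ex_37 hs.symm), (fun hs => ex_39 hs.symm), hy2a, (Ne.symm (fun hq => ny2x1 (hq ▸ hx.a01))), (Ne.symm (fun hq => ny2x0 (hq ▸ hx.a50))), (Ne.symm hx.d02), hx.d25, (Ne.symm tw_322n), hx.d15, (fun hq => ex_39 (hq ▸ hx.a01.symm)), (fun hq => ex_37 (hq ▸ hx.a01))⟩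 tw_321.symm hc_41).elim
        case neg =>
          exact ⟨w2, tw_322, tw_322n, hc_42, hc_43⟩
    case neg =>
      by_cases hc_44 : G.Adj w1 h5
      case pos =>
        by_cases hc_45 : G.Adj w2 h2
        case pos =>
          exact (mp y2 h2 h1 h0 h5 w1 w2 ⟨hy2.symm, hx.a12.symm, hx.a01.symm, hx.a50.symm, hc_44.symm, tw_321.symm, ny2x1, ny2x0, ny2x5, (fun hs => hx.n02 hs.symm), hx.n25, (fun hs => hc_41 hs.symm), hx.n15, (fun hs => ex_33 hs.symm), (fun hs => ex_35 hs.symm), hy2a, (Ne.symm (fun hq => ny2x1 (hq ▸ hx.a01))), (Ne.symm (fun hq => ny2x0 (hq ▸ hx.a50))), (Ne.symm hx.d02), hx.d25, (Ne.symm tw_321n), hx.d15, (fun hq => ex_35 (hq ▸ hx.a01.symm)), (fun hq => ex_33 (hq ▸ hx.a01))⟩ tw_322.symm hc_45).elim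
        case neg =>
          by_cases hc_46 : G.Adj w2 h5
          case pos =>
            exact (K.c4 w1 h5 w2 y2 hc_44 hc_46.symm tw_322.symm tw_321 tw_32ww (fun hq => ny2x0 (hq ▸ hx.a50))).elim
          case neg =>
            exact ⟨w2, tw_322, tw_322n, hc_45, hc_46⟩
      case neg =>
        exact ⟨w1, tw_321, tw_321n, hc_41, hc_44⟩
  have selC : ∃ b, G.Adj y4 b ∧ b ≠ h4 ∧ ¬G.Adj b h4 ∧ ¬G.Adj b h1 := by
    obtain ⟨w1, w2, tw_47ww, tw_471n, tw_472n, tw_471, tw_472⟩ := K.two y4 h4 hy4.symm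
    obtain ⟨ex_48, ex_49, ex_50, ex_51⟩ := ey4 w1 tw_471 tw_471n
    obtain ⟨ex_52, ex_53, ex_54, ex_55⟩ := ey4 w2 tw_472 tw_472n
    by_cases hc_56 : G.Adj w1 h4
    case pos =>
      by_cases hc_57 : G.Adj w2 h4
      case pos =>
        exact (K.c4 w1 y4 w2 h4 tw_471.symm tw_472 hc_57 hc_56.symm tw_47ww hy4.ne').elim
      case neg =>
        by_cases hc_58 : G.Adj w2 h1
        case pos =>
          exact (mp y4 h4 h5 h0 h1 w2 w1 ⟨hy4.symm, hx.a45, hx.a50, hx.a01, hc_58.symm, tw_472.symm, ny4x5, ny4x0, ny4x1, (fun hs => hx.n04 hs.symm), (fun hs => hx.n14 hs.symm), (fun hs => hc_57 hs.symm), (fun hs => hx.n15 hs.symm), (fun hs => ex_53 hs.symm), (fun hs => ex_55 hs.symm), hy4b, (Ne.symm (fun hq => ny4x1 (hq ▸ hx.a01))), (Ne.symm (fun hq => ny4x0 (hq ▸ hx.a01.symm))), (Ne.symm hx.d04), (Ne.symm hx.d14), (Ne.symm tw_472n), (Ne.symm hx.d15), (fun hq => ex_55 (hq ▸ hx.a50)),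 (fun hq => ex_53 (hq ▸ hx.a50.symm))⟩ tw_471.symm hc_56).elim
        case neg =>
          exact ⟨w2, tw_472, tw_472n, hc_57, hc_58⟩
    case neg =>
      by_cases hc_59 : G.Adj w1 h1
      case pos =>
        by_cases hc_60 : G.Adj w2 h4
        case pos =>
          exact (mp y4 h4 h5 h0 h1 w1 w2 ⟨hy4.symm, hx.a45, hx.a50, hx.a01, hc_59.symm, tw_471.symm, ny4x5, ny4x0, ny4x1, (fun hs => hx.n04 hs.symm), (fun hs => hx.n14 hs.symm), (fun hs => hc_56 hs.symm), (fun hs => hx.n15 hs.symm), (fun hs => ex_49 hs.symm), (fun hs => ex_51 hs.symm), hy4b, (Ne.symm (fun hq => ny4x1 (hq ▸ hx.a01))), (Ne.symm (fun hq => ny4x0 (hq ▸ hx.a01.symm))), (Ne.symm hx.d04), (Ne.symm hx.d14), (Ne.symm tw_471n), (Ne.symm hx.d15), (fun hq => ex_51 (hq ▸ hx.a50)), (fun hq => ex_49 (hq ▸ hx.a50.symm))⟩ tw_472.symm hc_60).elim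
        case neg =>
          by_cases hc_61 : G.Adj w2 h1
          case pos =>
            exact (K.c4 w1 h1 w2 y4 hc_59 hc_61.symm tw_472.symm tw_471 tw_47ww (fun hq => ny4x0 (hq ▸ hx.a01.symm))).elim
          case neg =>
            exact ⟨w2, tw_472, tw_472n, hc_60, hc_61⟩
      case neg =>
        exact ⟨w1, tw_471, tw_471n, hc_56, hc_59⟩
  obtain ⟨b, hb, hbne, nb2, nb5⟩ := selB
  obtain ⟨ex_62, ex_63, ex_64, ex_65⟩ := ey2 b hb hbne
  obtain ⟨c, hc, hcne, nc4, nc1⟩ := selC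
  obtain ⟨ex_66, ex_67, ex_68, ex_69⟩ := ey4 c hc hcne
  have nBY4 : ¬ G.Adj b y4 := fun hp_70 => K.c8 b y4 h4 h5 h0 h1 h2 y2 hp_70 hy4.symm hx.a45 hx.a50 hx.a01 hx.a12 hy2 hb (Ne.symm (fun hq => ex_63 (hq ▸ hx.a34.symm))) (Ne.symm (fun hq => ex_64 (hq ▸ hx.a50))) (Ne.symm (fun hq => ex_62 (hq ▸ hx.a01))) (Ne.symm (fun hq => ex_64 (hq ▸ hx.a01.symm))) hbne hy4b (Ne.symm (fun hq => ny4x1 (hq ▸ hx.a01))) (Ne.symm (fun hq => ny4x0 (hq ▸ hx.a01.symm))) (Ne.symm (fun hq => ny4x1 (hq ▸ hx.a12.symm))) (Ne.symm (fun hq => ny4x2 (hq ▸ hy2.symm))) (Ne.symm hx.d04) (Ne.symm hx.d14) (Ne.symm hx.d24) (Ne.symm (fun hq => (fun hs => hx.n24 hs.symm) (hq ▸ hy2.symm))) (Ne.symm hx.d15) (Ne.symm hx.d25) (fun hq => ny2x0 (hq ▸ hx.a50)) hx.d02 (fun hq => ny2x1 (hq ▸ hx.a01)) (Ne.symm hy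2a)
  have nCY2 : ¬ G.Adj c y2 := fun hp_71 => K.c8 c y2 h2 h1 h0 h5 h4 y4 hp_71 hy2.symm hx.a12.symm hx.a01.symm hx.a50.symm hx.a45.symm hy4 hc (Ne.symm (fun hq => nc1 (hq ▸ hx.a12.symm))) (Ne.symm (fun hq => ex_69 (hq ▸ hx.a01.symm))) (Ne.symm (fun hq => nc1 (hq ▸ hx.a01))) (Ne.symm (fun hq => ex_69 (hq ▸ hx.a50))) hcne hy2a (Ne.symm (fun hq => ny2x1 (hq ▸ hx.a01))) (Ne.symm (fun hq => ny2x0 (hq ▸ hx.a50))) (fun hq => (fun hs => hx.n24 hs.symm) (hq ▸ hy2.symm)) (fun hq => ny4x2 (hq ▸ hy2.symm)) (Ne.symm hx.d02) hx.d25 hx.d24 (fun hq => ny4x1 (hq ▸ hx.a12.symm)) hx.d15 hx.d14 (fun hq => ny4x0 (hq ▸ hx.a01.symm)) hx.d04 (fun hq => ny4x1 (hq ▸ hx.a01)) (Ne.symm hy4b)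
  have caseI : ∀ bp cp, G.Adj y2 bp → bp ≠ h2 → ¬G.Adj bp h2 → ¬G.Adj bp h5 → G.Adj y4 cp → cp ≠ h4 → ¬G.Adj cp h4 → ¬G.Adj cp h1 → ¬G.Adj bp cp → False := by
    intro bp cp hbp hbpne nbp2 nbp5 hcp hcpne ncp4 ncp1 hnbc
    obtain ⟨ex_72, ex_73, ex_74, ex_75⟩ := ey2 bp hbp hbpne
    obtain ⟨ex_76, ex_77, ex_78, ex_79⟩ := ey4 cp hcp hcpne
    have nBPY4 : ¬ G.Adj bp y4 := fun hp_80 => K.c8 bp y4 h4 h5 h0 h1 h2 y2 hp_80 hy4.symm hx.a45 hx.a50 hx.a01 hx.a12 hy2 hbp (Ne.symm (fun hq => ex_73 (hq ▸ hx.a34.symm))) (Ne.symm (fun hq => ex_74 (hq ▸ hx.a50))) (Ne.symm (fun hq => ex_72 (hq ▸ hx.a01))) (Ne.symm (fun hq => ex_74 (hq ▸ hx.a01.symm))) hbpne hy4b (Ne.symm (fun hq => ny4x1 (hq ▸ hx.a01))) (Ne.symm (fun hq => ny4x0 (hq ▸ hx.a01.symm))) (Ne.symm (fun hq => ny4x1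 (hq ▸ hx.a12.symm))) (Ne.symm (fun hq => ny4x2 (hq ▸ hy2.symm))) (Ne.symm hx.d04) (Ne.symm hx.d14) (Ne.symm hx.d24) (Ne.symm (fun hq => (fun hs => hx.n24 hs.symm) (hq ▸ hy2.symm))) (Ne.symm hx.d15) (Ne.symm hx.d25) (fun hq => ny2x0 (hq ▸ hx.a50)) hx.d02 (fun hq => ny2x1 (hq ▸ hx.a01)) (Ne.symm hy2a)
    have nCPY2 : ¬ G.Adj cp y2 := fun hp_81 => K.c8 cp y2 h2 h1 h0 h5 h4 y4 hp_81 hy2.symm hx.a12.symm hx.a01.symm hx.a50.symm hx.a45.symm hy4 hcp (Ne.symm (fun hq => ncp1 (hq ▸ hx.a12.symm))) (Ne.symm (fun hq => ex_79 (hq ▸ hx.a01.symm))) (Ne.symm (fun hq => ncp1 (hq ▸ hx.a01))) (Ne.symm (fun hq => ex_79 (hq ▸ hx.a50))) hcpne hy2a (Ne.symm (fun hq => ny2x1 (hq ▸ hx.a01))) (Ne.symm (fun hq => ny2x0 (hq ▸ hx.a50))) (fun hq => (fun hs => hx.n24 hs.symm) (hq ▸ hy2.symm)) (fun hq => ny4x2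 (hq ▸ hy2.symm)) (Ne.symm hx.d02) hx.d25 hx.d24 (fun hq => ny4x1 (hq ▸ hx.a12.symm)) hx.d15 hx.d14 (fun hq => ny4x0 (hq ▸ hx.a01.symm)) hx.d04 (fun hq => ny4x1 (hq ▸ hx.a01)) (Ne.symm hy4b)
    have ca : ∀ a, G.Adj bp a → a ≠ y2 → ¬G.Adj a h2 ∧ ¬G.Adj a h1 ∧ ¬G.Adj a h3 ∧ ¬G.Adj a h0 ∧ ¬G.Adj a h4 ∧ ¬G.Adj a cp ∧ (G.Adj a y2 → G.Adj a h5 → False) ∧ (G.Adj a y2 → G.Adj a y4 → False) ∧ (G.Adj a h5 → G.Adj a y4 → False) := by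
      intro a ha hane
      have nn_82 : ¬ G.Adj a h2 := fun hp_83 => K.c4 a h2 y2 bp hp_83 hy2 hbp ha hane (Ne.symm hbpne)
      have nn_84 : ¬ G.Adj a h1 := by
        intro hp_85
        by_cases hc_86 : G.Adj a y2
        case pos =>
          exact K.c4 a h1 h2 y2 hp_85 hx.a12 hy2 hc_86.symm (fun hq => (fun hs => nbp2 hs.symm) (hq ▸ ha.symm)) (Ne.symm hy2a)
        case neg =>
          exact K.h5 a h1 h2 y2 bp hp_85 hx.a12 hy2 hbp ha nn_82 hc_86 (fun hs => ny2x1 hs.symm) (fun hs => ex_72 hs.symm) (fun hs => nbp2 hs.symm) (Ne.symm (fun hq => hc_86 (hq ▸ hy2))) hane (Ne.symm hy2a) (fun hq => ex_74 (hq ▸ hx.a01.symm)) (Ne.symm hbpne)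
      have nn_87 : ¬ G.Adj a h3 := by
        intro hp_88
        by_cases hc_89 : G.Adj a y2
        case pos =>
          exact K.c4 a h3 h2 y2 hp_88 hx.a23.symm hy2 hc_89.symm (Ne.symm (fun hq => nn_84 (hq ▸ hx.a12.symm))) (Ne.symm hy2b)
        case neg =>
          exact K.h5 a h3 h2 y2 bp hp_88 hx.a23.symm hy2 hbp ha nn_82 hc_89 (fun hs => ny2x3 hs.symm) (fun hs => ex_73 hs.symm) (fun hs => nbp2 hs.symm) (Ne.symm (fun hq => nn_84 (hq ▸ hx.a12.symm))) hane (Ne.symm hy2b) (fun hq => nbp2 (hq ▸ hx.a23.symm)) (Ne.symm hbpne)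
      have nn_90 : ¬ G.Adj a h0 := fun hp_91 => K.c8 a h0 h5 h4 h3 h2 y2 bp hp_91 hx.a50.symm hx.a45.symm hx.a34.symm hx.a23.symm hy2 hbp ha (fun hq => (fun hs => nbp5 hs.symm) (hq ▸ ha.symm)) (fun hq => (fun hs => hx.n04 hs.symm) (hq ▸ hp_91)) (fun hq => (fun hs => hx.n03 hs.symm) (hq ▸ hp_91)) (fun hq => (fun hs => hx.n02 hs.symm) (hq ▸ hp_91)) hane hx.d04 hx.d03 hx.d02 (fun hq => ny2x1 (hq ▸ hx.a01)) (fun hq => ex_72 (hq ▸ hx.a01)) (Ne.symm hx.d35) (Ne.symm hx.d25) (fun hq => ny2x0 (hq ▸ hx.a50)) (fun hq => ex_74 (hq ▸ hx.a50)) (Ne.symm hx.d24) (Ne.symm (fun hq => (fun hs => hx.n24 hs.symm) (hq ▸ hy2.symm))) (fun hq => ex_73 (hq ▸ hx.a34.symm)) (Ne.symm hy2b) (fun hq => nbp2 (hq ▸ hx.a23.symm)) (Ne.symm hbpne)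
      have nn_92 : ¬ G.Adj a h4 := fun hp_93 => K.c8 a h4 h5 h0 h1 h2 y2 bp hp_93 hx.a45 hx.a50 hx.a01 hx.a12 hy2 hbp ha (Ne.symm (fun hq => nn_90 (hq ▸ hx.a50))) (Ne.symm (fun hq => nn_84 (hq ▸ hx.a01))) (Ne.symm (fun hq => nn_90 (hq ▸ hx.a01.symm))) (Ne.symm (fun hq => nn_84 (hq ▸ hx.a12.symm))) hane (Ne.symm hx.d04) (Ne.symm hx.d14) (Ne.symm hx.d24) (Ne.symm (fun hq => (fun hs => hx.n24 hs.symm) (hq ▸ hy2.symm))) (fun hq => ex_73 (hq ▸ hx.a34.symm)) (Ne.symm hx.d15) (Ne.symm hx.d25) (fun hq => ny2x0 (hq ▸ hx.a50)) (fun hq => ex_74 (hq ▸ hx.a50)) hx.d02 (fun hq => ny2x1 (hq ▸ hx.a01)) (fun hq => ex_72 (hq ▸ hx.a01)) (Ne.symm hy2a) (fun hq => ex_74 (hq ▸ hx.a01.symm)) (Ne.symm hbpne)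
      have nn_94 : ¬ G.Adj a cp := fun hp_95 => K.c8 a cp y4 h4 h3 h2 y2 bp hp_95 hcp.symm hy4.symm hx.a34.symm hx.a23.symm hy2 hbp ha (Ne.symm (fun hq => nn_92 (hq ▸ hy4.symm))) (Ne.symm (fun hq => nn_87 (hq ▸ hx.a34.symm))) (Ne.symm (fun hq => nn_82 (hq ▸ hx.a23.symm))) (Ne.symm (fun hq => nn_84 (hq ▸ hx.a12.symm))) hane hcpne (Ne.symm (fun hq => ex_78 (hq ▸ hx.a23.symm))) (Ne.symm (fun hq => ncp1 (hq ▸ hx.a12.symm))) (Ne.symm (fun hq => ex_78 (hq ▸ hy2.symm))) (Ne.symm (fun hq => nCPY2 (hq ▸ hbp.symm))) hy4a (Ne.symm (fun hq => ny4x1 (hq ▸ hx.a12.symm))) (Ne.symm (fun hq => ny4x2 (hq ▸ hy2.symm))) (fun hq => ex_75 (hq ▸ hy4.symm)) (Ne.symm hx.d24) (Ne.symm (fun hq => (fun hs => hx.n24 hs.symm) (hq ▸ hy2.symm))) (fun hq => ex_73 (hq ▸ hx.a34.symm)) (Ne.symm hy2b) (fun hq => nbp2 (hq ▸ hx.a23.symm))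 (Ne.symm hbpne)
      have k_96 : G.Adj a y2 → G.Adj a h5 → False := by
        intro p1 p2
        exact mp a y2 h2 h1 h0 h5 bp ⟨p1, hy2.symm, hx.a12.symm, hx.a01.symm, hx.a50.symm, p2.symm, nn_82, nn_84, nn_90, ny2x1, ny2x0, ny2x5, (fun hs => hx.n02 hs.symm), hx.n25, hx.n15, (Ne.symm (fun hq => nn_84 (hq ▸ hx.a12.symm))), (Ne.symm (fun hq => nn_90 (hq ▸ hx.a01.symm))), (Ne.symm (fun hq => nn_84 (hq ▸ hx.a01))), hy2a, (Ne.symm (fun hq => ny2x1 (hq ▸ hx.a01))), (Ne.symm (fun hq => ny2x0 (hq ▸ hx.a50))), (Ne.symm hx.d02), hx.d25, hx.d15⟩ ha hbp.symm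
      have k_97 : G.Adj a y2 → G.Adj a y4 → False := by
        intro p1 p2
        exact mp a y2 h2 h3 h4 y4 bp ⟨p1, hy2.symm, hx.a23, hx.a34, hy4, p2.symm, nn_82, nn_87, nn_92, ny2x3, ny2x4, nY24, hx.n24, (fun hs => ny4x2 hs.symm), (fun hs => ny4x3 hs.symm), (Ne.symm (fun hq => nn_84 (hq ▸ hx.a12.symm))), (Ne.symm (fun hq => nn_82 (hq ▸ hx.a23.symm))), (Ne.symm (fun hq => nn_87 (hq ▸ hx.a34.symm))), hy2b, (fun hq => (fun hs => hx.n24 hs.symm) (hq ▸ hy2.symm)), (fun hq => ny4x2 (hq ▸ hy2.symm)), hx.d24, (fun hq => ny4x1 (hq ▸ hx.a12.symm)), (Ne.symm hy4a)⟩ ha hbp.symm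
      have k_98 : G.Adj a h5 → G.Adj a y4 → False := by
        intro p1 p2
        exact K.c4 a h5 h4 y4 p1 hx.a45.symm hy4 p2.symm (Ne.symm (fun hq => nn_87 (hq ▸ hx.a34.symm))) (Ne.symm hy4b)
      exact ⟨nn_82, nn_84, nn_87, nn_90, nn_92, nn_94, k_96, k_97, k_98⟩
    have cb : ∀ v, G.Adj cp v → v ≠ y4 → ¬G.Adj v h4 ∧ ¬G.Adj v h5 ∧ ¬G.Adj v h3 ∧ ¬G.Adj v h0 ∧ ¬G.Adj v h2 ∧ ¬G.Adj v bp ∧ (G.Adj v y4 → G.Adj v h1 → False) ∧ (G.Adj v y4 → G.Adj v y2 → False) ∧ (G.Adj v h1 → G.Adj v y2 → False) := by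
      intro v hv hvne
      have nn_99 : ¬ G.Adj v h4 := fun hp_100 => K.c4 v h4 y4 cp hp_100 hy4 hcp hv hvne (Ne.symm hcpne)
      have nn_101 : ¬ G.Adj v h5 := by
        intro hp_102
        by_cases hc_103 : G.Adj v y4
        case pos =>
          exact K.c4 v h5 h4 y4 hp_102 hx.a45.symm hy4 hc_103.symm (fun hq => (fun hs => ncp4 hs.symm) (hq ▸ hv.symm)) (Ne.symm hy4b)
        case neg =>
          exact K.h5 v h5 h4 y4 cp hp_102 hx.a45.symm hy4 hcp hv nn_99 hc_103 (fun hs => ny4x5 hs.symm) (fun hs => ex_77 hs.symm) (fun hs => ncp4 hs.symm) (Ne.symm (fun hq => hc_103 (hq ▸ hy4))) hvne (Ne.symm hy4b) (fun hq => ex_79 (hq ▸ hx.a50)) (Ne.symm hcpne)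
      have nn_104 : ¬ G.Adj v h3 := by
        intro hp_105
        by_cases hc_106 : G.Adj v y4
        case pos =>
          exact K.c4 v h3 h4 y4 hp_105 hx.a34 hy4 hc_106.symm (Ne.symm (fun hq => nn_101 (hq ▸ hx.a45))) (Ne.symm hy4a)
        case neg =>
          exact K.h5 v h3 h4 y4 cp hp_105 hx.a34 hy4 hcp hv nn_99 hc_106 (fun hs => ny4x3 hs.symm) (fun hs => ex_76 hs.symm) (fun hs => ncp4 hs.symm) (Ne.symm (fun hq => nn_101 (hq ▸ hx.a45))) hvne (Ne.symm hy4a) (fun hq => ex_78 (hq ▸ hx.a23.symm)) (Ne.symm hcpne)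
      have nn_107 : ¬ G.Adj v h0 := fun hp_108 => K.c8 v h0 h1 h2 h3 h4 y4 cp hp_108 hx.a01 hx.a12 hx.a23 hx.a34 hy4 hcp hv (fun hq => (fun hs => ncp1 hs.symm) (hq ▸ hv.symm)) (fun hq => (fun hs => hx.n02 hs.symm) (hq ▸ hp_108)) (fun hq => (fun hs => hx.n03 hs.symm) (hq ▸ hp_108)) (fun hq => (fun hs => hx.n04 hs.symm) (hq ▸ hp_108)) hvne hx.d02 hx.d03 hx.d04 (fun hq => ny4x1 (hq ▸ hx.a01)) (fun hq => ncp1 (hq ▸ hx.a01)) hx.d13 hx.d14 (fun hq => ny4x0 (hq ▸ hx.a01.symm)) (fun hq => ex_79 (hq ▸ hx.a01.symm)) hx.d24 (fun hq => ny4x1 (hq ▸ hx.a12.symm)) (fun hq => ncp1 (hq ▸ hx.a12.symm)) (Ne.symm hy4a) (fun hq => ex_78 (hq ▸ hx.a23.symm)) (Ne.symm hcpne)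
      have nn_109 : ¬ G.Adj v h2 := fun hp_110 => K.c8 v h2 h1 h0 h5 h4 y4 cp hp_110 hx.a12.symm hx.a01.symm hx.a50.symm hx.a45.symm hy4 hcp hv (Ne.symm (fun hq => nn_107 (hq ▸ hx.a01.symm))) (fun hq => hx.n02 (hq ▸ hp_110)) (Ne.symm (fun hq => nn_107 (hq ▸ hx.a50))) (fun hq => (fun hs => hx.n24 hs.symm) (hq ▸ hp_110)) hvne (Ne.symm hx.d02) hx.d25 hx.d24 (fun hq => ny4x1 (hq ▸ hx.a12.symm)) (fun hq => ncp1 (hq ▸ hx.a12.symm)) hx.d15 hx.d14 (fun hq => ny4x0 (hq ▸ hx.a01.symm)) (fun hq => ex_79 (hq ▸ hx.a01.symm)) hx.d04 (fun hq => ny4x1 (hq ▸ hx.a01)) (fun hq => ncp1 (hq ▸ hx.a01)) (Ne.symm hy4b) (fun hq => ex_79 (hq ▸ hx.a50)) (Ne.symm hcpne)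
      have nn_111 : ¬ G.Adj v bp := fun hp_112 => K.c8 v bp y2 h2 h3 h4 y4 cp hp_112 hbp.symm hy2.symm hx.a23 hx.a34 hy4 hcp hv (Ne.symm (fun hq => nn_109 (hq ▸ hy2.symm))) (Ne.symm (fun hq => nn_104 (hq ▸ hx.a23))) (Ne.symm (fun hq => nn_109 (hq ▸ hx.a23.symm))) (Ne.symm (fun hq => nn_104 (hq ▸ hx.a34.symm))) hvne hbpne (Ne.symm (fun hq => nbp2 (hq ▸ hx.a23.symm))) (Ne.symm (fun hq => ex_73 (hq ▸ hx.a34.symm))) (Ne.symm (fun hq => ex_75 (hq ▸ hy4.symm))) (fun hq => nCPY2 (hq ▸ hbp.symm)) hy2b (fun hq => (fun hs => hx.n24 hs.symm) (hq ▸ hy2.symm)) (fun hq => ny4x2 (hq ▸ hy2.symm)) (fun hq => ex_78 (hq ▸ hy2.symm)) hx.d24 (fun hq => ny4x1 (hq ▸ hx.a12.symm)) (fun hq => ncp1 (hq ▸ hx.a12.symm)) (Ne.symm hy4a) (fun hq => ex_78 (hq ▸ hx.a23.symm)) (Ne.symm hcpne)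
      have k_113 : G.Adj v y4 → G.Adj v h1 → False := by
        intro p1 p2
        exact mp v y4 h4 h5 h0 h1 cp ⟨p1, hy4.symm, hx.a45, hx.a50, hx.a01, p2.symm, nn_99, nn_101, nn_107, ny4x5, ny4x0, ny4x1, (fun hs => hx.n04 hs.symm), (fun hs => hx.n14 hs.symm), (fun hs => hx.n15 hs.symm), (fun hq => (fun hs => hx.n14 hs.symm) (hq ▸ p2)), (Ne.symm (fun hq => nn_107 (hq ▸ hx.a50))), (Ne.symm (fun hq => nn_101 (hq ▸ hx.a50.symm))), hy4b, (Ne.symm (fun hq => ny4x1 (hq ▸ hx.a01))), (Ne.symm (fun hq => ny4x0 (hq ▸ hx.a01.symm))), (Ne.symm hx.d04), (Ne.symm hx.d14), (Ne.symm hx.d15)⟩ hv hcp.symm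
      have k_114 : G.Adj v y4 → G.Adj v y2 → False := by
        intro p1 p2
        exact mp v y4 h4 h3 h2 y2 cp ⟨p1, hy4.symm, hx.a34.symm, hx.a23.symm, hy2, p2.symm, nn_99, nn_104, nn_109, ny4x3, ny4x2, (fun hs => nY24 hs.symm), (fun hs => hx.n24 hs.symm), (fun hs => ny2x4 hs.symm), (fun hs => ny2x3 hs.symm), (Ne.symm (fun hq => nn_104 (hq ▸ hx.a34.symm))), (Ne.symm (fun hq => nn_109 (hq ▸ hx.a23.symm))), (Ne.symm (fun hq => nn_104 (hq ▸ hx.a23))), hy4a, (Ne.symm (fun hq => ny4x1 (hq ▸ hx.a12.symm))), (Ne.symm (fun hq => ny4x2 (hq ▸ hy2.symm))), (Ne.symm hx.d24), (Ne.symm (fun hq => (fun hs => hx.n24 hs.symm) (hq ▸ hy2.symm))), (Ne.symm hy2b)⟩ hv hcp.symm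
      have k_115 : G.Adj v h1 → G.Adj v y2 → False := by
        intro p1 p2
        exact K.c4 v h1 h2 y2 p1 hx.a12 hy2 p2.symm (Ne.symm (fun hq => nn_104 (hq ▸ hx.a23))) (Ne.symm hy2a)
      exact ⟨nn_99, nn_101, nn_104, nn_107, nn_109, nn_111, k_113, k_114, k_115⟩
    have survive : ∀ a, G.Adj bp a → a ≠ y2 → G.Adj a y4 → False := by
      intro a ha hane hay4
      obtain ⟨ca_116, ca_117, ca_118, ca_119, ca_120, ca_121, ca_122, ca_123, ca_124⟩ := ca a ha hane
      have na_125 : ¬ G.Adj a y2 := fun pq => ca_123 pq hay4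
      have na_126 : ¬ G.Adj a h5 := fun pq => ca_124 pq hay4
      have hvh1 : ∀ v, G.Adj cp v → ¬ G.Adj v h1 := by
        intro v hv pq
        exact K.c8 h1 h2 y2 bp a y4 cp v hx.a12 hy2 hbp ha hay4 hcp hv pq (Ne.symm hy2a) (fun hq => ex_74 (hq ▸ hx.a01.symm)) (fun hq => ca_119 (hq ▸ hx.a01.symm)) (fun hq => ny4x0 (hq ▸ hx.a01.symm)) (fun hq => ex_79 (hq ▸ hx.a01.symm)) (Ne.symm hbpne) (fun hq => ca_117 (hq ▸ hx.a12.symm)) (fun hq => ny4x1 (hq ▸ hx.a12.symm)) (fun hq => ncp1 (hq ▸ hx.a12.symm)) (Ne.symm (fun hq => (fun hs => ex_78 hs.symm) (hq ▸ hv.symm))) (Ne.symm hane) (fun hq => ny4x2 (hq ▸ hy2.symm)) (fun hq => ex_78 (hq ▸ hy2.symm)) (Ne.symm (fun hq => ny2x1 (hq ▸ pq))) (Ne.symm (fun hq => ex_75 (hq ▸ hy4.symm))) (fun hq => nCPY2 (hq ▸ hbp.symm)) (Ne.symm (fun hq => ex_72 (hq ▸ pq))) (fun hq => (fun hs => hnbc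 hs.symm) (hq ▸ ha.symm)) (Ne.symm (fun hq => ca_117 (hq ▸ pq))) (Ne.symm (fun hq => ny4x1 (hq ▸ pq)))
      obtain ⟨v1, v2, tw_127ww, tw_1271n, tw_1272n, tw_1271, tw_1272⟩ := K.two cp y4 hcp.symm
      obtain ⟨cb_128, cb_129, cb_130, cb_131, cb_132, cb_133, cb_134, cb_135, cb_136⟩ := cb v1 tw_1271 tw_1271n
      obtain ⟨cb_137, cb_138, cb_139, cb_140, cb_141, cb_142, cb_143, cb_144, cb_145⟩ := cb v2 tw_1272 tw_1272n
      have nv1h1 := hvh1 v1 tw_1271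
      have nv2h1 := hvh1 v2 tw_1272
      by_cases hcB14 : G.Adj v1 y4
      case pos =>
        have na_146 : ¬ G.Adj v1 y2 := fun pq => cb_135 hcB14 pq
        by_cases hcB22 : G.Adj v2 y2
        case pos =>
          have na_147 : ¬ G.Adj v2 y4 := fun pq => cb_144 pq hcB22
          have na_148 : ¬ G.Adj v2 a := fun PQX => K.c4 a v2 y2 bp PQX.symm hcB22 hbp ha hane (fun hq => hnbc (hq ▸ tw_1272.symm))
          exact mp y4 cp v2 y2 bp a v1 ⟨hcp, tw_1272, hcB22, hbp, ha, hay4, (fun hs => na_147 hs.symm), (fun hs => nY24 hs.symm), (fun hs => nBPY4 hs.symm), nCPY2, (fun hs => hnbc hs.symm), (fun hs => ca_121 hs.symm), cb_142, na_148, (fun hs => na_125 hs.symm), (Ne.symm tw_1272n), (Ne.symm (fun hq => ny4x2 (hq ▸ hy2.symm))), (fun hq => ex_75 (hq ▸ hy4.symm)), (Ne.symm (fun hq => ex_78 (hq ▸ hy2.symm))), (Ne.symm (fun hq => nCPY2 (hq ▸ hbp.symm))), (Ne.symm (fun hq => (fun hs => hnbc hs.symm) (hq ▸ ha.symm))), (fun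 hq => hnbc (hq ▸ tw_1272.symm)), (fun hq => na_125 (hq ▸ hcB22)), (Ne.symm hane)⟩ hcB14 tw_1271.symm
        case neg =>
          by_cases hcB24 : G.Adj v2 y4
          case pos =>
            exact K.c4 v1 y4 v2 cp hcB14 hcB24.symm tw_1272.symm tw_1271 tw_127ww hcp.ne
          case neg =>
            exact K.p10 v2 cp y4 h4 h5 h0 h1 h2 y2 bp tw_1272.symm hcp.symm hy4.symm hx.a45 hx.a50 hx.a01 hx.a12 hy2 hbp hcB24 cb_137 cb_138 cb_140 nv2h1 cb_141 hcB22 cb_142 ncp4 ex_77 ex_79 ncp1 ex_78 nCPY2 (fun hs => hnbc hs.symm) ny4x5 ny4x0 ny4x1 ny4x2 (fun hs => nY24 hs.symm) (fun hs => nBPY4 hs.symm) (fun hs => hx.n04 hs.symm) (fun hs => hx.n14 hs.symm) (fun hs => hx.n24 hs.symm) (fun hs => ny2x4 hs.symm) (fun hs => ex_75 hs.symm) (fun hs => hx.n15 hs.symm) (fun hs => hx.n25 hs.symm) (fun hs => ny2x5 hs.symm) (fun hs => nbp5 hs.symm) hx.n02 (fun hs => ny2x0 hs.symm) (fun hs =>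 ex_74 hs.symm) (fun hs => ny2x1 hs.symm) (fun hs => ex_72 hs.symm) (fun hs => nbp2 hs.symm) tw_1272n (Ne.symm (fun hq => cb_139 (hq ▸ hx.a34.symm))) (Ne.symm (fun hq => cb_140 (hq ▸ hx.a50))) (Ne.symm (fun hq => nv2h1 (hq ▸ hx.a01))) (Ne.symm (fun hq => cb_140 (hq ▸ hx.a01.symm))) (Ne.symm (fun hq => nv2h1 (hq ▸ hx.a12.symm))) (Ne.symm (fun hq => cb_141 (hq ▸ hy2.symm))) (Ne.symm (fun hq => hcB22 (hq ▸ hbp.symm))) hcpne (Ne.symm (fun hq => ex_79 (hq ▸ hx.a50))) (Ne.symm (fun hq => ncp1 (hq ▸ hx.a01))) (Ne.symm (fun hq => ex_79 (hq ▸ hx.a01.symm))) (Ne.symm (fun hq => ncp1 (hq ▸ hx.a12.symm))) (Ne.symm (fun hq => ex_78 (hq ▸ hy2.symm))) (Ne.symm (fun hq => nCPY2 (hq ▸ hbp.symm))) hy4b (Ne.symm (fun hq => ny4x1 (hq ▸ hx.a01))) (Ne.symm (fun hq => ny4x0 (hq ▸ hx.a01.symm))) (Ne.symm (fun hq => ny4x1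 (hq ▸ hx.a12.symm))) (Ne.symm (fun hq => ny4x2 (hq ▸ hy2.symm))) (fun hq => ex_75 (hq ▸ hy4.symm)) (Ne.symm hx.d04) (Ne.symm hx.d14) (Ne.symm hx.d24) (Ne.symm (fun hq => (fun hs => hx.n24 hs.symm) (hq ▸ hy2.symm))) (fun hq => ex_73 (hq ▸ hx.a34.symm)) (Ne.symm hx.d15) (Ne.symm hx.d25) (fun hq => ny2x0 (hq ▸ hx.a50)) (fun hq => ex_74 (hq ▸ hx.a50)) hx.d02 (fun hq => ny2x1 (hq ▸ hx.a01)) (fun hq => ex_72 (hq ▸ hx.a01)) (Ne.symm hy2a) (fun hq => ex_74 (hq ▸ hx.a01.symm)) (Ne.symm hbpne)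
      case neg =>
        by_cases hcB12 : G.Adj v1 y2
        case pos =>
          by_cases hcB24 : G.Adj v2 y4
          case pos =>
            have na_149 : ¬ G.Adj v1 y4 := fun pq => cb_135 pq hcB12
            have na_150 : ¬ G.Adj v1 a := fun PQX => K.c4 a v1 y2 bp PQX.symm hcB12 hbp ha hane (fun hq => hnbc (hq ▸ tw_1271.symm))
            exact mp y4 cp v1 y2 bp a v2 ⟨hcp, tw_1271, hcB12, hbp, ha, hay4, (fun hs => na_149 hs.symm), (fun hs => nY24 hs.symm), (fun hs => nBPY4 hs.symm), nCPY2, (fun hs => hnbc hs.symm), (fun hs => ca_121 hs.symm), cb_133, na_150, (fun hs => na_125 hs.symm), (Ne.symm tw_1271n), (Ne.symm (fun hq => ny4x2 (hq ▸ hy2.symm))), (fun hq => ex_75 (hq ▸ hy4.symm)), (Ne.symm (fun hq => ex_78 (hq ▸ hy2.symm))), (Ne.symm (fun hq => nCPY2 (hq ▸ hbp.symm))), (Ne.symm (fun hq => (fun hs => hnbc hs.symm) (hq ▸ ha.symm))), (fun hq => hnbc (hq ▸ tw_1271.symm)), (fun hq => na_125 (hq ▸ hcB12)), (Ne.symm hane)⟩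 hcB24 tw_1272.symm
          case neg =>
            by_cases hcB22 : G.Adj v2 y2
            case pos =>
              exact K.c4 v1 y2 v2 cp hcB12 hcB22.symm tw_1272.symm tw_1271 tw_127ww (fun hq => ex_78 (hq ▸ hy2.symm))
            case neg =>
              exact K.p10 v2 cp y4 h4 h5 h0 h1 h2 y2 bp tw_1272.symm hcp.symm hy4.symm hx.a45 hx.a50 hx.a01 hx.a12 hy2 hbp hcB24 cb_137 cb_138 cb_140 nv2h1 cb_141 hcB22 cb_142 ncp4 ex_77 ex_79 ncp1 ex_78 nCPY2 (fun hs => hnbc hs.symm) ny4x5 ny4x0 ny4x1 ny4x2 (fun hs => nY24 hs.symm) (fun hs => nBPY4 hs.symm) (fun hs => hx.n04 hs.symm) (fun hs => hx.n14 hs.symm) (fun hs => hx.n24 hs.symm) (fun hs => ny2x4 hs.symm) (fun hs => ex_75 hs.symm) (fun hs => hx.n15 hs.symm) (fun hs => hx.n25 hs.symm) (fun hs => ny2x5 hs.symm) (fun hs => nbp5 hs.symm) hx.n02 (fun hs => ny2x0 hs.symm) (fun hs => ex_74 hs.symm) (fun hs => ny2x1 hs.symm) (fun hs => ex_72 hs.symm)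 (fun hs => nbp2 hs.symm) tw_1272n (Ne.symm (fun hq => cb_139 (hq ▸ hx.a34.symm))) (Ne.symm (fun hq => cb_140 (hq ▸ hx.a50))) (Ne.symm (fun hq => nv2h1 (hq ▸ hx.a01))) (Ne.symm (fun hq => cb_140 (hq ▸ hx.a01.symm))) (Ne.symm (fun hq => nv2h1 (hq ▸ hx.a12.symm))) (Ne.symm (fun hq => cb_141 (hq ▸ hy2.symm))) (Ne.symm (fun hq => hcB22 (hq ▸ hbp.symm))) hcpne (Ne.symm (fun hq => ex_79 (hq ▸ hx.a50))) (Ne.symm (fun hq => ncp1 (hq ▸ hx.a01))) (Ne.symm (fun hq => ex_79 (hq ▸ hx.a01.symm))) (Ne.symm (fun hq => ncp1 (hq ▸ hx.a12.symm))) (Ne.symm (fun hq => ex_78 (hq ▸ hy2.symm))) (Ne.symm (fun hq => nCPY2 (hq ▸ hbp.symm))) hy4b (Ne.symm (fun hq => ny4x1 (hq ▸ hx.a01))) (Ne.symm (fun hq => ny4x0 (hq ▸ hx.a01.symm))) (Ne.symm (fun hq => ny4x1 (hq ▸ hx.a12.symm))) (Ne.symm (fun hq => ny4x2 (hq ▸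 hy2.symm))) (fun hq => ex_75 (hq ▸ hy4.symm)) (Ne.symm hx.d04) (Ne.symm hx.d14) (Ne.symm hx.d24) (Ne.symm (fun hq => (fun hs => hx.n24 hs.symm) (hq ▸ hy2.symm))) (fun hq => ex_73 (hq ▸ hx.a34.symm)) (Ne.symm hx.d15) (Ne.symm hx.d25) (fun hq => ny2x0 (hq ▸ hx.a50)) (fun hq => ex_74 (hq ▸ hx.a50)) hx.d02 (fun hq => ny2x1 (hq ▸ hx.a01)) (fun hq => ex_72 (hq ▸ hx.a01)) (Ne.symm hy2a) (fun hq => ex_74 (hq ▸ hx.a01.symm)) (Ne.symm hbpne)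
        case neg =>
          exact K.p10 v1 cp y4 h4 h5 h0 h1 h2 y2 bp tw_1271.symm hcp.symm hy4.symm hx.a45 hx.a50 hx.a01 hx.a12 hy2 hbp hcB14 cb_128 cb_129 cb_131 nv1h1 cb_132 hcB12 cb_133 ncp4 ex_77 ex_79 ncp1 ex_78 nCPY2 (fun hs => hnbc hs.symm) ny4x5 ny4x0 ny4x1 ny4x2 (fun hs => nY24 hs.symm) (fun hs => nBPY4 hs.symm) (fun hs => hx.n04 hs.symm) (fun hs => hx.n14 hs.symm) (fun hs => hx.n24 hs.symm) (fun hs => ny2x4 hs.symm) (fun hs => ex_75 hs.symm) (fun hs => hx.n15 hs.symm) (fun hs => hx.n25 hs.symm) (fun hs => ny2x5 hs.symm) (fun hs => nbp5 hs.symm) hx.n02 (fun hs => ny2x0 hs.symm) (fun hs => ex_74 hs.symm) (fun hs => ny2x1 hs.symm) (fun hs => ex_72 hs.symm) (fun hs => nbp2 hs.symm) tw_1271n (Ne.symm (fun hq => cb_130 (hq ▸ hx.a34.symm))) (Ne.symm (fun hq => cb_131 (hq ▸ hx.a50))) (Ne.symm (fun hq => nv1h1 (hq ▸ hx.a01)))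 (Ne.symm (fun hq => cb_131 (hq ▸ hx.a01.symm))) (Ne.symm (fun hq => nv1h1 (hq ▸ hx.a12.symm))) (Ne.symm (fun hq => cb_132 (hq ▸ hy2.symm))) (Ne.symm (fun hq => hcB12 (hq ▸ hbp.symm))) hcpne (Ne.symm (fun hq => ex_79 (hq ▸ hx.a50))) (Ne.symm (fun hq => ncp1 (hq ▸ hx.a01))) (Ne.symm (fun hq => ex_79 (hq ▸ hx.a01.symm))) (Ne.symm (fun hq => ncp1 (hq ▸ hx.a12.symm))) (Ne.symm (fun hq => ex_78 (hq ▸ hy2.symm))) (Ne.symm (fun hq => nCPY2 (hq ▸ hbp.symm))) hy4b (Ne.symm (fun hq => ny4x1 (hq ▸ hx.a01))) (Ne.symm (fun hq => ny4x0 (hq ▸ hx.a01.symm))) (Ne.symm (fun hq => ny4x1 (hq ▸ hx.a12.symm))) (Ne.symm (fun hq => ny4x2 (hq ▸ hy2.symm))) (fun hq => ex_75 (hq ▸ hy4.symm)) (Ne.symm hx.d04) (Ne.symm hx.d14) (Ne.symm hx.d24) (Ne.symm (fun hq => (fun hs => hx.n24 hs.symm) (hq ▸ hy2.symm))) (fun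 hq => ex_73 (hq ▸ hx.a34.symm)) (Ne.symm hx.d15) (Ne.symm hx.d25) (fun hq => ny2x0 (hq ▸ hx.a50)) (fun hq => ex_74 (hq ▸ hx.a50)) hx.d02 (fun hq => ny2x1 (hq ▸ hx.a01)) (fun hq => ex_72 (hq ▸ hx.a01)) (Ne.symm hy2a) (fun hq => ex_74 (hq ▸ hx.a01.symm)) (Ne.symm hbpne)
    obtain ⟨u1, u2, tw_151ww, tw_1511n, tw_1512n, tw_1511, tw_1512⟩ := K.two bp y2 hbp.symm
    obtain ⟨ca_152, ca_153, ca_154, ca_155, ca_156, ca_157, ca_158, ca_159, ca_160⟩ := ca u1 tw_1511 tw_1511n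
    obtain ⟨ca_161, ca_162, ca_163, ca_164, ca_165, ca_166, ca_167, ca_168, ca_169⟩ := ca u2 tw_1512 tw_1512n
    have nu_170 : ¬ G.Adj u1 y4 := fun pq => survive u1 tw_1511 tw_1511n pq
    have nu_171 : ¬ G.Adj u2 y4 := fun pq => survive u2 tw_1512 tw_1512n pq
    by_cases hcD15 : G.Adj u1 h5
    case pos =>
      have nu_172 : ¬ G.Adj u1 y2 := fun pq => ca_158 pq hcD15
      by_cases hcD25 : G.Adj u2 h5
      case pos =>
        exact K.c4 u1 h5 u2 bp hcD15 hcD25.symm tw_1512.symm tw_1511 tw_151ww (fun hq => ex_74 (hq ▸ hx.a50))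
      case neg =>
        by_cases hcD22 : G.Adj u2 y2
        case pos =>
          exact K.c8 bp u2 y2 h2 h1 h0 h5 u1 tw_1512 hcD22 hy2.symm hx.a12.symm hx.a01.symm hx.a50.symm hcD15.symm tw_1511.symm hbp.ne' hbpne (Ne.symm (fun hq => ex_74 (hq ▸ hx.a01.symm))) (Ne.symm (fun hq => ex_72 (hq ▸ hx.a01))) (Ne.symm (fun hq => ex_74 (hq ▸ hx.a50))) (Ne.symm (fun hq => ca_162 (hq ▸ hx.a12.symm))) (Ne.symm (fun hq => ca_164 (hq ▸ hx.a01.symm))) (Ne.symm (fun hq => ca_162 (hq ▸ hx.a01))) (Ne.symm (fun hq => ca_164 (hq ▸ hx.a50))) (Ne.symm tw_151ww) hy2a (Ne.symm (fun hq => ny2x1 (hq ▸ hx.a01))) (Ne.symm (fun hq => ny2x0 (hq ▸ hx.a50))) (Ne.symm tw_1511n) (Ne.symm hx.d02) hx.d25 (fun hq => ca_153 (hq ▸ hx.a12.symm)) hx.d15 (fun hq => ca_155 (hq ▸ hx.a01.symm)) (fun hq => ca_153 (hq ▸ hx.a01))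
        case neg =>
          exact K.p10 u2 bp y2 h2 h1 h0 h5 h4 y4 cp tw_1512.symm hbp.symm hy2.symm hx.a12.symm hx.a01.symm hx.a50.symm hx.a45.symm hy4 hcp hcD22 ca_161 ca_162 ca_164 hcD25 ca_165 nu_171 ca_166 nbp2 ex_72 ex_74 nbp5 ex_75 nBPY4 hnbc ny2x1 ny2x0 ny2x5 ny2x4 nY24 (fun hs => nCPY2 hs.symm) (fun hs => hx.n02 hs.symm) hx.n25 hx.n24 (fun hs => ny4x2 hs.symm) (fun hs => ex_78 hs.symm) hx.n15 hx.n14 (fun hs => ny4x1 hs.symm) (fun hs => ncp1 hs.symm) hx.n04 (fun hs => ny4x0 hs.symm) (fun hs => ex_79 hs.symm) (fun hs => ny4x5 hs.symm) (fun hs => ex_77 hs.symm) (fun hs => ncp4 hs.symm) tw_1512n (Ne.symm (fun hq => ca_162 (hq ▸ hx.a12.symm))) (Ne.symm (fun hq => ca_164 (hq ▸ hx.a01.symm))) (Ne.symm (fun hq => ca_162 (hq ▸ hx.a01))) (Ne.symm (fun hq => ca_164 (hq ▸ hx.a50))) (Ne.symm (fun hq => ca_163 (hq ▸ hx.a34.symm)))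 (Ne.symm (fun hq => ca_165 (hq ▸ hy4.symm))) (Ne.symm (fun hq => nu_171 (hq ▸ hcp.symm))) hbpne (Ne.symm (fun hq => ex_74 (hq ▸ hx.a01.symm))) (Ne.symm (fun hq => ex_72 (hq ▸ hx.a01))) (Ne.symm (fun hq => ex_74 (hq ▸ hx.a50))) (Ne.symm (fun hq => ex_73 (hq ▸ hx.a34.symm))) (Ne.symm (fun hq => ex_75 (hq ▸ hy4.symm))) (fun hq => nCPY2 (hq ▸ hbp.symm)) hy2a (Ne.symm (fun hq => ny2x1 (hq ▸ hx.a01))) (Ne.symm (fun hq => ny2x0 (hq ▸ hx.a50))) (fun hq => (fun hs => hx.n24 hs.symm) (hq ▸ hy2.symm)) (fun hq => ny4x2 (hq ▸ hy2.symm)) (fun hq => ex_78 (hq ▸ hy2.symm)) (Ne.symm hx.d02) hx.d25 hx.d24 (fun hq => ny4x1 (hq ▸ hx.a12.symm)) (fun hq => ncp1 (hq ▸ hx.a12.symm)) hx.d15 hx.d14 (fun hq => ny4x0 (hq ▸ hx.a01.symm)) (fun hq => ex_79 (hq ▸ hx.a01.symm)) hx.d04 (fun hq => ny4x1 (hq ▸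 hx.a01)) (fun hq => ncp1 (hq ▸ hx.a01)) (Ne.symm hy4b) (fun hq => ex_79 (hq ▸ hx.a50)) (Ne.symm hcpne)
    case neg =>
      by_cases hcD12 : G.Adj u1 y2
      case pos =>
        by_cases hcD25 : G.Adj u2 h5
        case pos =>
          exact K.c8 bp u1 y2 h2 h1 h0 h5 u2 tw_1511 hcD12 hy2.symm hx.a12.symm hx.a01.symm hx.a50.symm hcD25.symm tw_1512.symm hbp.ne' hbpne (Ne.symm (fun hq => ex_74 (hq ▸ hx.a01.symm))) (Ne.symm (fun hq => ex_72 (hq ▸ hx.a01))) (Ne.symm (fun hq => ex_74 (hq ▸ hx.a50))) (Ne.symm (fun hq => ca_153 (hq ▸ hx.a12.symm))) (Ne.symm (fun hq => ca_155 (hq ▸ hx.a01.symm))) (Ne.symm (fun hq => ca_153 (hq ▸ hx.a01))) (Ne.symm (fun hq => ca_155 (hq ▸ hx.a50))) tw_151ww hy2a (Ne.symm (fun hq => ny2x1 (hq ▸ hx.a01))) (Ne.symm (fun hq => ny2x0 (hq ▸ hx.a50))) (Ne.symm tw_1512n) (Ne.symm hx.d02) hx.d25 (fun hq => ca_162 (hq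 ▸ hx.a12.symm)) hx.d15 (fun hq => ca_164 (hq ▸ hx.a01.symm)) (fun hq => ca_162 (hq ▸ hx.a01))
        case neg =>
          by_cases hcD22 : G.Adj u2 y2
          case pos =>
            exact K.c4 u1 y2 u2 bp hcD12 hcD22.symm tw_1512.symm tw_1511 tw_151ww hbp.ne
          case neg =>
            exact K.p10 u2 bp y2 h2 h1 h0 h5 h4 y4 cp tw_1512.symm hbp.symm hy2.symm hx.a12.symm hx.a01.symm hx.a50.symm hx.a45.symm hy4 hcp hcD22 ca_161 ca_162 ca_164 hcD25 ca_165 nu_171 ca_166 nbp2 ex_72 ex_74 nbp5 ex_75 nBPY4 hnbc ny2x1 ny2x0 ny2x5 ny2x4 nY24 (fun hs => nCPY2 hs.symm) (fun hs => hx.n02 hs.symm) hx.n25 hx.n24 (fun hs => ny4x2 hs.symm) (fun hs => ex_78 hs.symm) hx.n15 hx.n14 (fun hs => ny4x1 hs.symm) (fun hs => ncp1 hs.symm) hx.n04 (fun hs => ny4x0 hs.symm) (fun hs => ex_79 hs.symm) (fun hs => ny4x5 hs.symm) (fun hs => ex_77 hs.symm) (fun hs => ncp4 hs.symm) tw_1512n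 (Ne.symm (fun hq => ca_162 (hq ▸ hx.a12.symm))) (Ne.symm (fun hq => ca_164 (hq ▸ hx.a01.symm))) (Ne.symm (fun hq => ca_162 (hq ▸ hx.a01))) (Ne.symm (fun hq => ca_164 (hq ▸ hx.a50))) (Ne.symm (fun hq => ca_163 (hq ▸ hx.a34.symm))) (Ne.symm (fun hq => ca_165 (hq ▸ hy4.symm))) (Ne.symm (fun hq => nu_171 (hq ▸ hcp.symm))) hbpne (Ne.symm (fun hq => ex_74 (hq ▸ hx.a01.symm))) (Ne.symm (fun hq => ex_72 (hq ▸ hx.a01))) (Ne.symm (fun hq => ex_74 (hq ▸ hx.a50))) (Ne.symm (fun hq => ex_73 (hq ▸ hx.a34.symm))) (Ne.symm (fun hq => ex_75 (hq ▸ hy4.symm))) (fun hq => nCPY2 (hq ▸ hbp.symm)) hy2a (Ne.symm (fun hq => ny2x1 (hq ▸ hx.a01))) (Ne.symm (fun hq => ny2x0 (hq ▸ hx.a50))) (fun hq => (fun hs => hx.n24 hs.symm) (hq ▸ hy2.symm)) (fun hq => ny4x2 (hq ▸ hy2.symm)) (fun hq => ex_78 (hq ▸ hy2.symm)) (Ne.symm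 hx.d02) hx.d25 hx.d24 (fun hq => ny4x1 (hq ▸ hx.a12.symm)) (fun hq => ncp1 (hq ▸ hx.a12.symm)) hx.d15 hx.d14 (fun hq => ny4x0 (hq ▸ hx.a01.symm)) (fun hq => ex_79 (hq ▸ hx.a01.symm)) hx.d04 (fun hq => ny4x1 (hq ▸ hx.a01)) (fun hq => ncp1 (hq ▸ hx.a01)) (Ne.symm hy4b) (fun hq => ex_79 (hq ▸ hx.a50)) (Ne.symm hcpne)
      case neg =>
        exact K.p10 u1 bp y2 h2 h1 h0 h5 h4 y4 cp tw_1511.symm hbp.symm hy2.symm hx.a12.symm hx.a01.symm hx.a50.symm hx.a45.symm hy4 hcp hcD12 ca_152 ca_153 ca_155 hcD15 ca_156 nu_170 ca_157 nbp2 ex_72 ex_74 nbp5 ex_75 nBPY4 hnbc ny2x1 ny2x0 ny2x5 ny2x4 nY24 (fun hs => nCPY2 hs.symm) (fun hs => hx.n02 hs.symm) hx.n25 hx.n24 (fun hs => ny4x2 hs.symm) (fun hs => ex_78 hs.symm) hx.n15 hx.n14 (fun hs => ny4x1 hs.symm) (fun hs => ncp1 hs.symm) hx.n04 (fun hs =>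 ny4x0 hs.symm) (fun hs => ex_79 hs.symm) (fun hs => ny4x5 hs.symm) (fun hs => ex_77 hs.symm) (fun hs => ncp4 hs.symm) tw_1511n (Ne.symm (fun hq => ca_153 (hq ▸ hx.a12.symm))) (Ne.symm (fun hq => ca_155 (hq ▸ hx.a01.symm))) (Ne.symm (fun hq => ca_153 (hq ▸ hx.a01))) (Ne.symm (fun hq => ca_155 (hq ▸ hx.a50))) (Ne.symm (fun hq => ca_154 (hq ▸ hx.a34.symm))) (Ne.symm (fun hq => ca_156 (hq ▸ hy4.symm))) (Ne.symm (fun hq => nu_170 (hq ▸ hcp.symm))) hbpne (Ne.symm (fun hq => ex_74 (hq ▸ hx.a01.symm))) (Ne.symm (fun hq => ex_72 (hq ▸ hx.a01))) (Ne.symm (fun hq => ex_74 (hq ▸ hx.a50))) (Ne.symm (fun hq => ex_73 (hq ▸ hx.a34.symm))) (Ne.symm (fun hq => ex_75 (hq ▸ hy4.symm))) (fun hq => nCPY2 (hq ▸ hbp.symm)) hy2a (Ne.symm (fun hq => ny2x1 (hq ▸ hx.a01))) (Ne.symm (fun hq => ny2x0 (hq ▸ hx.a50))) (fun hq => (fun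 hs => hx.n24 hs.symm) (hq ▸ hy2.symm)) (fun hq => ny4x2 (hq ▸ hy2.symm)) (fun hq => ex_78 (hq ▸ hy2.symm)) (Ne.symm hx.d02) hx.d25 hx.d24 (fun hq => ny4x1 (hq ▸ hx.a12.symm)) (fun hq => ncp1 (hq ▸ hx.a12.symm)) hx.d15 hx.d14 (fun hq => ny4x0 (hq ▸ hx.a01.symm)) (fun hq => ex_79 (hq ▸ hx.a01.symm)) hx.d04 (fun hq => ny4x1 (hq ▸ hx.a01)) (fun hq => ncp1 (hq ▸ hx.a01)) (Ne.symm hy4b) (fun hq => ex_79 (hq ▸ hx.a50)) (Ne.symm hcpne)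
  by_cases hbc : G.Adj b c
  case pos =>
    have allPairs : ∀ bp cp, G.Adj y2 bp → bp ≠ h2 → ¬G.Adj bp h2 → ¬G.Adj bp h5 → G.Adj y4 cp → cp ≠ h4 → ¬G.Adj cp h4 → ¬G.Adj cp h1 → G.Adj bp cp := by
      intro bp cp hbp hbpne nbp2 nbp5 hcp hcpne ncp4 ncp1
      by_contra hn
      exact caseI bp cp hbp hbpne nbp2 nbp5 hcp hcpne ncp4 ncp1 hn
    have seld2 : ∃ d, G.Adj y2 d ∧ d ≠ h2 ∧ ((G.Adj d h2 ∧ ¬G.Adj d h5) ∨ (G.Adj d h5 ∧ ¬G.Adj d h2)) := by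
      obtain ⟨w1, w2, tw_173ww, tw_1731n, tw_1732n, tw_1731, tw_1732⟩ := K.two y2 h2 hy2.symm
      obtain ⟨ex_174, ex_175, ex_176, ex_177⟩ := ey2 w1 tw_1731 tw_1731n
      obtain ⟨ex_178, ex_179, ex_180, ex_181⟩ := ey2 w2 tw_1732 tw_1732n
      by_cases hcA2 : G.Adj w1 h2
      case pos =>
        have pk_182 : G.Adj w1 h2 → G.Adj w1 h5 → False := by
          intro p1 p2
          exact K.h5 w1 h2 h1 h0 h5 p1 hx.a12.symm hx.a01.symm hx.a50.symm p2.symm ex_174 ex_176 (fun hs => hx.n02 hs.symm) hx.n25 hx.n15 (Ne.symm (fun hq => ex_176 (hq ▸ hx.a01.symm))) (Ne.symm (fun hq => ex_174 (hq ▸ hx.a01))) (Ne.symm hx.d02) hx.d25 hx.d15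
        exact ⟨w1, tw_1731, tw_1731n, Or.inl ⟨hcA2, fun pq => pk_182 hcA2 pq⟩⟩
      case neg =>
        by_cases hcA5 : G.Adj w1 h5
        case pos =>
          exact ⟨w1, tw_1731, tw_1731n, Or.inr ⟨hcA5, hcA2⟩⟩
        case neg =>
          by_cases hcB2 : G.Adj w2 h2
          case pos =>
            have pk_183 : G.Adj w2 h2 → G.Adj w2 h5 → False := by
              intro p1 p2
              exact K.h5 w2 h2 h1 h0 h5 p1 hx.a12.symm hx.a01.symm hx.a50.symm p2.symm ex_178 ex_180 (fun hs => hx.n02 hs.symm) hx.n25 hx.n15 (Ne.symm (fun hq => ex_180 (hq ▸ hx.a01.symm))) (Ne.symm (fun hq => ex_178 (hq ▸ hx.a01))) (Ne.symm hx.d02) hx.d25 hx.d15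
            exact ⟨w2, tw_1732, tw_1732n, Or.inl ⟨hcB2, fun pq => pk_183 hcB2 pq⟩⟩
          case neg =>
            by_cases hcB5 : G.Adj w2 h5
            case pos =>
              exact ⟨w2, tw_1732, tw_1732n, Or.inr ⟨hcB5, hcB2⟩⟩
            case neg =>
              have ap1 : G.Adj w1 c := allPairs w1 c tw_1731 tw_1731n hcA2 hcA5 hc hcne nc4 nc1
              have ap2 : G.Adj w2 c := allPairs w2 c tw_1732 tw_1732n hcB2 hcB5 hc hcne nc4 nc1
              exact (K.c4 w1 c w2 y2 ap1 ap2.symm tw_1732.symm tw_1731 tw_173ww (Ne.symm (fun hq => ex_68 (hq ▸ hy2.symm)))).elim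
    have seld4 : ∃ d, G.Adj y4 d ∧ d ≠ h4 ∧ ((G.Adj d h4 ∧ ¬G.Adj d h1) ∨ (G.Adj d h1 ∧ ¬G.Adj d h4)) := by
      obtain ⟨w1, w2, tw_184ww, tw_1841n, tw_1842n, tw_1841, tw_1842⟩ := K.two y4 h4 hy4.symm
      obtain ⟨ex_185, ex_186, ex_187, ex_188⟩ := ey4 w1 tw_1841 tw_1841n
      obtain ⟨ex_189, ex_190, ex_191, ex_192⟩ := ey4 w2 tw_1842 tw_1842n
      by_cases hcA4 : G.Adj w1 h4
      case pos =>
        have pk_193 : G.Adj w1 h4 → G.Adj w1 h1 → False := by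
          intro p1 p2
          exact K.h5 w1 h4 h5 h0 h1 p1 hx.a45 hx.a50 hx.a01 p2.symm ex_186 ex_188 (fun hs => hx.n04 hs.symm) (fun hs => hx.n14 hs.symm) (fun hs => hx.n15 hs.symm) (Ne.symm (fun hq => ex_188 (hq ▸ hx.a50))) (fun hq => hx.n04 (hq ▸ p1)) (Ne.symm hx.d04) (Ne.symm hx.d14) (Ne.symm hx.d15)
        exact ⟨w1, tw_1841, tw_1841n, Or.inl ⟨hcA4, fun pq => pk_193 hcA4 pq⟩⟩
      case neg =>
        by_cases hcA1 : G.Adj w1 h1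
        case pos =>
          exact ⟨w1, tw_1841, tw_1841n, Or.inr ⟨hcA1, hcA4⟩⟩
        case neg =>
          by_cases hcB4 : G.Adj w2 h4
          case pos =>
            have pk_194 : G.Adj w2 h4 → G.Adj w2 h1 → False := by
              intro p1 p2
              exact K.h5 w2 h4 h5 h0 h1 p1 hx.a45 hx.a50 hx.a01 p2.symm ex_190 ex_192 (fun hs => hx.n04 hs.symm) (fun hs => hx.n14 hs.symm) (fun hs => hx.n15 hs.symm) (Ne.symm (fun hq => ex_192 (hq ▸ hx.a50))) (fun hq => hx.n04 (hq ▸ p1)) (Ne.symm hx.d04) (Ne.symm hx.d14) (Ne.symm hx.d15)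
            exact ⟨w2, tw_1842, tw_1842n, Or.inl ⟨hcB4, fun pq => pk_194 hcB4 pq⟩⟩
          case neg =>
            by_cases hcB1 : G.Adj w2 h1
            case pos =>
              exact ⟨w2, tw_1842, tw_1842n, Or.inr ⟨hcB1, hcB4⟩⟩
            case neg =>
              have ap1 : G.Adj b w1 := allPairs b w1 hb hbne nb2 nb5 tw_1841 tw_1841n hcA4 hcA1
              have ap2 : G.Adj b w2 := allPairs b w2 hb hbne nb2 nb5 tw_1842 tw_1842n hcB4 hcB1
              exact (K.c4 w1 b w2 y4 ap1.symm ap2 tw_1842.symm tw_1841 tw_184ww (Ne.symm (fun hq => ex_65 (hq ▸ hy4.symm)))).elim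
    obtain ⟨d2, hd2, hd2ne, hth2⟩ := seld2
    obtain ⟨d4, hd4, hd4ne, hth4⟩ := seld4
    obtain ⟨ex_195, ex_196, ex_197, ex_198⟩ := ey2 d2 hd2 hd2ne
    obtain ⟨ex_199, ex_200, ex_201, ex_202⟩ := ey4 d4 hd4 hd4ne
    rcases hth2 with ⟨d2a, d2n⟩ | ⟨d2a, d2n⟩ <;> rcases hth4 with ⟨d4a, d4n⟩ | ⟨d4a, d4n⟩
    · show False
      obtain ⟨y1, hy1, hy1a, hy1b⟩ := K.third h1 h0 h2 hx.d02 hx.a01.symm hx.a12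
      have ny1x0 : ¬ G.Adj y1 h0 := fun hp_203 => mp h0 h1 h2 h3 h4 h5 y1 ⟨hx.a01, hx.a12, hx.a23, hx.a34, hx.a45, hx.a50, hx.n02, hx.n03, hx.n04, hx.n13, hx.n14, hx.n15, hx.n24, hx.n25, hx.n35, hx.d02, hx.d03, hx.d04, hx.d13, hx.d14, hx.d15, hx.d24, hx.d25, hx.d35⟩ hp_203 hy1.symm
      have ny1x2 : ¬ G.Adj y1 h2 := fun hp_204 => mp h1 h2 h3 h4 h5 h0 y1 ⟨hx.a12, hx.a23, hx.a34, hx.a45, hx.a50, hx.a01, hx.n13, hx.n14, hx.n15, hx.n24, hx.n25, (fun hs => hx.n02 hs.symm), hx.n35, (fun hs => hx.n03 hs.symm), (fun hs => hx.n04 hs.symm), hx.d13, hx.d14, hx.d15, hx.d24, hx.d25, (Ne.symm hx.d02), hx.d35, (Ne.symm hx.d03), (Ne.symm hx.d04)⟩ hy1.symm hp_204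
      have ny1x5 : ¬ G.Adj y1 h5 := fun hp_205 => K.c4 y1 h5 h0 h1 hp_205 hx.a50 hx.a01 hy1 hy1a (Ne.symm hx.d15)
      have ny1x3 : ¬ G.Adj y1 h3 := fun hp_206 => K.c4 y1 h3 h2 h1 hp_206 hx.a23.symm hx.a12.symm hy1 hy1b (Ne.symm hx.d13)
      have ny1x4 : ¬ G.Adj y1 h4 := fun hp_207 => K.h5 y1 h4 h3 h2 h1 hp_207 hx.a34.symm hx.a23.symm hx.a12.symm hy1 ny1x3 ny1x2 (fun hs => hx.n24 hs.symm) (fun hs => hx.n14 hs.symm) (fun hs => hx.n13 hs.symm) (fun hq => (fun hs => hx.n13 hs.symm) (hq ▸ hy1.symm)) hy1b (Ne.symm hx.d24) (Ne.symm hx.d14) (Ne.symm hx.d13)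
      obtain ⟨y5, hy5, hy5a, hy5b⟩ := K.third h5 h4 h0 (Ne.symm hx.d04) hx.a45.symm hx.a50
      have ny5x4 : ¬ G.Adj y5 h4 := fun hp_208 => mp h4 h5 h0 h1 h2 h3 y5 ⟨hx.a45, hx.a50, hx.a01, hx.a12, hx.a23, hx.a34, (fun hs => hx.n04 hs.symm), (fun hs => hx.n14 hs.symm), (fun hs => hx.n24 hs.symm), (fun hs => hx.n15 hs.symm), (fun hs => hx.n25 hs.symm), (fun hs => hx.n35 hs.symm), hx.n02, hx.n03, hx.n13, (Ne.symm hx.d04), (Ne.symm hx.d14), (Ne.symm hx.d24), (Ne.symm hx.d15), (Ne.symm hx.d25), (Ne.symm hx.d35), hx.d02, hx.d03, hx.d13⟩ hp_208 hy5.symm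
      have ny5x0 : ¬ G.Adj y5 h0 := fun hp_209 => mp h5 h0 h1 h2 h3 h4 y5 ⟨hx.a50, hx.a01, hx.a12, hx.a23, hx.a34, hx.a45, (fun hs => hx.n15 hs.symm), (fun hs => hx.n25 hs.symm), (fun hs => hx.n35 hs.symm), hx.n02, hx.n03, hx.n04, hx.n13, hx.n14, hx.n24, (Ne.symm hx.d15), (Ne.symm hx.d25), (Ne.symm hx.d35), hx.d02, hx.d03, hx.d04, hx.d13, hx.d14, hx.d24⟩ hy5.symm hp_209
      have ny5x3 : ¬ G.Adj y5 h3 := fun hp_210 => K.c4 y5 h3 h4 h5 hp_210 hx.a34 hx.a45 hy5 hy5a hx.d35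
      have ny5x1 : ¬ G.Adj y5 h1 := fun hp_211 => K.c4 y5 h1 h0 h5 hp_211 hx.a01.symm hx.a50.symm hy5 hy5b hx.d15
      have ny5x2 : ¬ G.Adj y5 h2 := fun hp_212 => K.h5 y5 h2 h1 h0 h5 hp_212 hx.a12.symm hx.a01.symm hx.a50.symm hy5 ny5x1 ny5x0 (fun hs => hx.n02 hs.symm) hx.n25 hx.n15 (Ne.symm (fun hq => ny5x0 (hq ▸ hx.a01.symm))) hy5b (Ne.symm hx.d02) hx.d25 hx.d15
      have sY12 : ¬ G.Adj y1 y2 := fun hp_213 => K.c4 y1 y2 h2 h1 hp_213 hy2.symm hx.a12.symm hy1 hy1b hy2a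
      have sBY1 : ¬ G.Adj b y1 := fun hp_214 => K.h5 b y1 h1 h2 y2 hp_214 hy1.symm hx.a12 hy2 hb ex_62 nb2 ny1x2 sY12 (fun hs => ny2x1 hs.symm) (Ne.symm (fun hq => ex_64 (hq ▸ hx.a01.symm))) hbne hy1b (fun hq => ny2x1 (hq ▸ hy1.symm)) (Ne.symm hy2a)
      have sY54 : ¬ G.Adj y5 y4 := fun hp_215 => K.c4 y5 y4 h4 h5 hp_215 hy4.symm hx.a45 hy5 hy5a hy4b
      have sCY5 : ¬ G.Adj c y5 := fun hp_216 => K.h5 c y5 h5 h4 y4 hp_216 hy5.symm hx.a45.symm hy4 hc ex_67 nc4 ny5x4 sY54 (fun hs => ny4x5 hs.symm) (Ne.symm (fun hq => ex_69 (hq ▸ hx.a50))) hcne hy5a (Ne.symm (fun hq => ny5x4 (hq ▸ hy4.symm))) (Ne.symm hy4b)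
      have sY15 : ¬ G.Adj y1 y5 := fun hp_217 => K.h5 y1 y5 h5 h0 h1 hp_217 hy5.symm hx.a50 hx.a01 hy1 ny1x5 ny1x0 ny5x0 ny5x1 (fun hs => hx.n15 hs.symm) (Ne.symm (fun hq => ny1x0 (hq ▸ hx.a50))) hy1a hy5b (Ne.symm (fun hq => ny5x0 (hq ▸ hx.a01.symm))) (Ne.symm hx.d15)
      have sY14 : ¬ G.Adj y1 y4 := fun hp_218 => mp y4 h4 h5 h0 h1 y1 d4 ⟨hy4.symm, hx.a45, hx.a50, hx.a01, hy1, hp_218, ny4x5, ny4x0, ny4x1, (fun hs => hx.n04 hs.symm), (fun hs => hx.n14 hs.symm), (fun hs => ny1x4 hs.symm), (fun hs => hx.n15 hs.symm), (fun hs => ny1x5 hs.symm), (fun hs => ny1x0 hs.symm), hy4b, (Ne.symm (fun hq => ny4x1 (hq ▸ hx.a01))), (Ne.symm (fun hq => ny4x0 (hq ▸ hx.a01.symm))), (Ne.symm hx.d04), (Ne.symm hx.d14), (Ne.symm (fun hq => (fun hs => hx.n14 hs.symm) (hq ▸ hy1.symm))), (Ne.symm hx.d15), (fun hq => ny1x0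 (hq ▸ hx.a50)), (Ne.symm hy1a)⟩ hd4.symm d4a
      have sY1C : ¬ G.Adj y1 c := fun hp_219 => mp y2 h2 h1 y1 c b d2 ⟨hy2.symm, hx.a12.symm, hy1, hp_219, hbc.symm, hb.symm, ny2x1, (fun hs => sY12 hs.symm), (fun hs => nCY2 hs.symm), (fun hs => ny1x2 hs.symm), (fun hs => ex_68 hs.symm), (fun hs => nb2 hs.symm), (fun hs => nc1 hs.symm), (fun hs => ex_62 hs.symm), (fun hs => sBY1 hs.symm), hy2a, (Ne.symm (fun hq => ny2x1 (hq ▸ hy1.symm))), (fun hq => ex_68 (hq ▸ hy2.symm)), (Ne.symm hy1b), (fun hq => nc1 (hq ▸ hx.a12.symm)), (Ne.symm hbne), (fun hq => ex_69 (hq ▸ hx.a01.symm)), (fun hq => ex_64 (hq ▸ hx.a01.symm)), (fun hq => ex_62 (hq ▸ hy1.symm))⟩ hd2.symm d2a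
      have sY52 : ¬ G.Adj y5 y2 := fun hp_220 => mp y2 h2 h1 h0 h5 y5 d2 ⟨hy2.symm, hx.a12.symm, hx.a01.symm, hx.a50.symm, hy5, hp_220, ny2x1, ny2x0, ny2x5, (fun hs => hx.n02 hs.symm), hx.n25, (fun hs => ny5x2 hs.symm), hx.n15, (fun hs => ny5x1 hs.symm), (fun hs => ny5x0 hs.symm), hy2a, (Ne.symm (fun hq => ny2x1 (hq ▸ hx.a01))), (Ne.symm (fun hq => ny2x0 (hq ▸ hx.a50))), (Ne.symm hx.d02), hx.d25, (fun hq => ny5x1 (hq ▸ hx.a12.symm)), hx.d15, (fun hq => ny5x0 (hq ▸ hx.a01.symm)), (Ne.symm hy5b)⟩ hd2.symm d2a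
      have sY5B : ¬ G.Adj y5 b := fun hp_221 => mp y4 h4 h5 y5 b c d4 ⟨hy4.symm, hx.a45, hy5, hp_221, hbc, hc.symm, ny4x5, (fun hs => sY54 hs.symm), (fun hs => nBY4 hs.symm), (fun hs => ny5x4 hs.symm), (fun hs => ex_65 hs.symm), (fun hs => nc4 hs.symm), (fun hs => nb5 hs.symm), (fun hs => ex_67 hs.symm), (fun hs => sCY5 hs.symm), hy4b, (fun hq => ny5x4 (hq ▸ hy4.symm)), (fun hq => ex_65 (hq ▸ hy4.symm)), (Ne.symm hy5a), (fun hq => ex_63 (hq ▸ hx.a34.symm)), (Ne.symm hcne), (fun hq => ex_64 (hq ▸ hx.a50)), (fun hq => ex_69 (hq ▸ hx.a50)), (fun hq => ex_67 (hq ▸ hy5.symm))⟩ hd4.symm d4a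
      exact K.p10 y1 h1 h2 y2 b c y4 h4 h5 y5 hy1.symm hx.a12 hy2 hb hbc hc.symm hy4.symm hx.a45 hy5 ny1x2 sY12 (fun hs => sBY1 hs.symm) sY1C sY14 ny1x4 ny1x5 sY15 (fun hs => ny2x1 hs.symm) (fun hs => ex_62 hs.symm) (fun hs => nc1 hs.symm) (fun hs => ny4x1 hs.symm) hx.n14 hx.n15 (fun hs => ny5x1 hs.symm) (fun hs => nb2 hs.symm) (fun hs => ex_68 hs.symm) (fun hs => ny4x2 hs.symm) hx.n24 hx.n25 (fun hs => ny5x2 hs.symm) (fun hs => nCY2 hs.symm) nY24 ny2x4 ny2x5 (fun hs => sY52 hs.symm) nBY4 ex_65 nb5 (fun hs => sY5B hs.symm) nc4 ex_67 sCY5 ny4x5 (fun hs => sY54 hs.symm) (fun hs => ny5x4 hs.symm) hy1b (fun hq => ny2x1 (hq ▸ hy1.symm)) (fun hq => ex_62 (hq ▸ hy1.symm)) (fun hq => nc1 (hq ▸ hy1.symm)) (fun hq => ny4x1 (hq ▸ hy1.symm)) (fun hq => (fun hs => hx.n14 hs.symm) (hq ▸ hy1.symm)) (Ne.symm (fun hq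 => ny1x0 (hq ▸ hx.a50))) (fun hq => ny5x1 (hq ▸ hy1.symm)) (Ne.symm hy2a) (fun hq => ex_64 (hq ▸ hx.a01.symm)) (fun hq => ex_69 (hq ▸ hx.a01.symm)) (fun hq => ny4x0 (hq ▸ hx.a01.symm)) hx.d14 hx.d15 (fun hq => ny5x0 (hq ▸ hx.a01.symm)) (Ne.symm hbne) (fun hq => nc1 (hq ▸ hx.a12.symm)) (fun hq => ny4x1 (hq ▸ hx.a12.symm)) hx.d24 hx.d25 (fun hq => ny5x1 (hq ▸ hx.a12.symm)) (fun hq => ex_68 (hq ▸ hy2.symm)) (fun hq => ny4x2 (hq ▸ hy2.symm)) (fun hq => (fun hs => hx.n24 hs.symm) (hq ▸ hy2.symm)) (Ne.symm (fun hq => ny2x0 (hq ▸ hx.a50))) (fun hq => ny5x2 (hq ▸ hy2.symm)) (Ne.symm (fun hq => ex_65 (hq ▸ hy4.symm))) (Ne.symm (fun hq => ex_63 (hq ▸ hx.a34.symm))) (Ne.symm (fun hq => ex_64 (hq ▸ hx.a50))) (Ne.symm (fun hq => nb5 (hq ▸ hy5.symm))) hcne (Ne.symm (fun hq => ex_69 (hq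 ▸ hx.a50))) (Ne.symm (fun hq => ex_67 (hq ▸ hy5.symm))) hy4b (fun hq => ny5x4 (hq ▸ hy4.symm)) (Ne.symm hy5a)
    · show False
      exact K.c8 d4 y4 c b y2 d2 h2 h1 hd4.symm hc hbc.symm hb.symm hd2 d2a hx.a12.symm d4a.symm (fun hq => nc1 (hq ▸ d4a)) (fun hq => ex_62 (hq ▸ d4a)) (fun hq => ny2x1 (hq ▸ d4a)) (fun hq => ex_195 (hq ▸ d4a)) (Ne.symm (fun hq => ex_199 (hq ▸ hx.a23))) (fun hq => ex_65 (hq ▸ hy4.symm)) (Ne.symm (fun hq => ny4x2 (hq ▸ hy2.symm))) (Ne.symm (fun hq => ny4x2 (hq ▸ d2a))) (Ne.symm (fun hq => ny4x1 (hq ▸ hx.a12.symm))) (Ne.symm (fun hq => ny4x0 (hq ▸ hx.a01.symm))) (Ne.symm (fun hq => ex_68 (hq ▸ hy2.symm))) (Ne.symm (fun hq => ex_68 (hq ▸ d2a))) (Ne.symm (fun hq => nc1 (hq ▸ hx.a12.symm))) (Ne.symm (fun hq => ex_69 (hq ▸ hx.a01.symm))) (Ne.symm (fun hq => nb2 (hq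 ▸ d2a))) hbne (Ne.symm (fun hq => ex_64 (hq ▸ hx.a01.symm))) hy2.ne' hy2a (Ne.symm (fun hq => ex_197 (hq ▸ hx.a01.symm)))
    · show False
      exact K.c8 d2 y2 b c y4 d4 h4 h5 hd2.symm hb hbc hc.symm hd4 d4a hx.a45 d2a.symm (fun hq => nb5 (hq ▸ d2a)) (fun hq => ex_67 (hq ▸ d2a)) (Ne.symm (fun hq => ex_198 (hq ▸ hy4.symm))) (Ne.symm (fun hq => ex_198 (hq ▸ d4a))) (Ne.symm (fun hq => ex_196 (hq ▸ hx.a34.symm))) (fun hq => ex_68 (hq ▸ hy2.symm)) (fun hq => ny4x2 (hq ▸ hy2.symm)) (fun hq => ex_201 (hq ▸ hy2.symm)) (fun hq => (fun hs => hx.n24 hs.symm) (hq ▸ hy2.symm)) (Ne.symm (fun hq => ny2x0 (hq ▸ hx.a50))) (Ne.symm (fun hq => ex_65 (hq ▸ hy4.symm))) (Ne.symm (fun hq => ex_65 (hq ▸ d4a))) (Ne.symm (fun hq => ex_63 (hq ▸ hx.a34.symm))) (Ne.symm (fun hq => ex_64 (hq ▸ hx.a50))) (Ne.symm (fun hq =>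 nc4 (hq ▸ d4a))) hcne (Ne.symm (fun hq => ex_69 (hq ▸ hx.a50))) hy4.ne' hy4b (Ne.symm (fun hq => ex_202 (hq ▸ hx.a50)))
    · show False
      exact K.c8 y2 d2 h5 h4 y4 d4 h1 h2 hd2 d2a hx.a45.symm hy4 hd4 d4a hx.a12 hy2 (Ne.symm (fun hq => ny2x0 (hq ▸ hx.a50))) (fun hq => (fun hs => hx.n24 hs.symm) (hq ▸ hy2.symm)) (fun hq => ny4x2 (hq ▸ hy2.symm)) (Ne.symm (fun hq => ny2x1 (hq ▸ d4a))) hy2a (Ne.symm (fun hq => ex_196 (hq ▸ hx.a34.symm))) (Ne.symm (fun hq => ex_198 (hq ▸ hy4.symm))) (Ne.symm (fun hq => ex_195 (hq ▸ d4a))) (Ne.symm (fun hq => ex_197 (hq ▸ hx.a01.symm))) hd2ne (Ne.symm hy4b) (fun hq => ex_202 (hq ▸ hx.a50)) (Ne.symm hx.d15) (Ne.symm hx.d25) (Ne.symm hd4ne) (Ne.symm hx.d14) (Ne.symm hx.d24) (Ne.symm (fun hq => ny4x0 (hq ▸ hx.a01.symm))) (Ne.symm (fun hq => ny4x1 (hq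 ▸ hx.a12.symm))) (Ne.symm (fun hq => ex_199 (hq ▸ hx.a23)))
  case neg =>
    exact caseI b c hb hbne nb2 nb5 hc hcne nc4 nc1 hbc


end EG

open EG in
set_option maxHeartbeats 1000000 in
theorem stmt_16 {V : Type*} [Fintype V] (G : SimpleGraph V) [DecidableRel G.Adj]
    (hdeg : ∀ v : V, 3 ≤ G.degree v) (hP10 : P10Free G)
    (hC4 : ¬ HasCycleLength G 4) (hC8 : ¬ HasCycleLength G 8)
    (m : ℕ) (x : ZMod m → V) (hgood : IsGoodHole G m x) :
    m ≠ 6 := by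
  intro hm
  subst hm
  obtain ⟨-, ⟨hinj, hadj⟩, hno5, -⟩ := hgood
  have K : EG.Ctx G := {
    c4 := fun a b c d e1 e2 e3 e4 n1 n2 => hC4 (c4E a b c d e1 e2 e3 e4 n1 n2)
    c8 := fun v0 v1 v2 v3 v4 v5 v6 v7 e0 e1 e2 e3 e4 e5 e6 e7 n02 n03 n04 n05 n06 n13 n14 n15 n16 n17 n24 n25 n26 n27 n35 n36 n37 n46 n47 n57 => hC8 (c8E v0 v1 v2 v3 v4 v5 v6 v7 e0 e1 e2 e3 e4 e5 e6 e7 n02 n03 n04 n05 n06 n13 n14 n15 n16 n17 n24 n25 n26 n27 n35 n36 n37 n46 n47 n57)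
    h5 := fun a b c d e e1 e2 e3 e4 e5 a1 a2 a3 a4 a5 n1 n2 n3 n4 n5 => by
      obtain ⟨w, p, hih, hlen⟩ := hole5E a b c d e e1 e2 e3 e4 e5 a1 a2 a3 a4 a5 n1 n2 n3 n4 n5
      exact hno5 ⟨w, p, hih, by omega⟩
    p10 := fun v0 v1 v2 v3 v4 v5 v6 v7 v8 v9 e0 e1 e2 e3 e4 e5 e6 e7 e8 a02 a03 a04 a05 a06 a07 a08 a09 a13 a14 a15 a16 a17 a18 a19 a24 a25 a26 a27 a28 a29 a35 a36 a37 a38 a39 a46 a47 a48 a49 a57 a58 a59 a68 a69 a79 n02 n03 n04 n05 n06 n07 n08 n09 n13 n14 n15 n16 n17 n18 n19 n24 n25 n26 n27 n28 n29 n35 n36 n37 n38 n39 n46 n47 n48 n49 n57 n58 n59 n68 n69 n79 => p10E hP10 v0 v1 v2 v3 v4 v5 v6 v7 v8 v9 e0 e1 e2 e3 e4 e5 e6 e7 e8 a02 a03 a04 a05 a06 a07 a08 a09 a13 a14 a15 a16 a17 a18 a19 a24 a25 a26 a27 a28 a29 a35 a36 a37 a38 a39 a46 a47 a48 a49 a57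 a58 a59 a68 a69 a79 n02 n03 n04 n05 n06 n07 n08 n09 n13 n14 n15 n16 n17 n18 n19 n24 n25 n26 n27 n28 n29 n35 n36 n37 n38 n39 n46 n47 n48 n49 n57 n58 n59 n68 n69 n79
    third := exThird hdeg
    two := exTwo hdeg }
  have hx : EG.Hex G (x 0) (x 1) (x 2) (x 3) (x 4) (x 5) := by
    refine ⟨?_, ?_, ?_, ?_, ?_, ?_, ?_, ?_, ?_, ?_, ?_, ?_, ?_, ?_, ?_, ?_, ?_, ?_, ?_, ?_, ?_, ?_, ?_, ?_⟩
    · exact (hadj 0 1).mpr (Or.inl (by decide))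
    · exact (hadj 1 2).mpr (Or.inl (by decide))
    · exact (hadj 2 3).mpr (Or.inl (by decide))
    · exact (hadj 3 4).mpr (Or.inl (by decide))
    · exact (hadj 4 5).mpr (Or.inl (by decide))
    · exact (hadj 5 0).mpr (Or.inl (by decide))
    · exact fun h => by rcases (hadj 0 2).mp h with h' | h' <;> exact absurd h' (by decide)
    · exact fun h => by rcases (hadj 0 3).mp h with h' | h' <;> exact absurd h' (by decide)
    · exact fun h => by rcases (hadj 0 4).mp h with h' | h' <;> exact absurd h' (by decide)
    · exact fun h => by rcases (hadj 1 3).mp h with h' | h' <;> exact absurd h' (by decide)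
    · exact fun h => by rcases (hadj 1 4).mp h with h' | h' <;> exact absurd h' (by decide)
    · exact fun h => by rcases (hadj 1 5).mp h with h' | h' <;> exact absurd h' (by decide)
    · exact fun h => by rcases (hadj 2 4).mp h with h' | h' <;> exact absurd h' (by decide)
    · exact fun h => by rcases (hadj 2 5).mp h with h' | h' <;> exact absurd h' (by decide)
    · exact fun h => by rcases (hadj 3 5).mp h with h' | h' <;> exact absurd h' (by decide)
    · exact fun h => absurd (hinj h) (by decide)
    · exact fun h => absurd (hinj h) (by decide)
    · exact fun h => absurd (hinj h) (by decide)
    · exact fun h => absurd (hinj h) (by decide)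
    · exact fun h => absurd (hinj h) (by decide)
    · exact fun h => absurd (hinj h) (by decide)
    · exact fun h => absurd (hinj h) (by decide)
    · exact fun h => absurd (hinj h) (by decide)
    · exact fun h => absurd (hinj h) (by decide)
  exact EG.W0 K hx (fun a0 a1 a2 a3 a4 a5 w hh hw0 hw1 => EG.Mp K hh w hw0 hw1)
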